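/- arXiv:math/0508178 — 3 statements merged into one kernel-verified Lean document; each statement's English description precedes it below -/
import Mathlib

section
/- The matrix of all in-forests satisfies Q = Σ_{k=0}^{n−d} s_{n−d−k}(−L)^k = adj(I + L), where s_i = Σ_{j=0}^i σ_j. -/
open Matrix Finset Polynomial

/-- `A` is (the arc set of) an in-forest of the weighted digraph with arc-weight
matrix `W`: all arcs are loopless arcs of positive weight, every vertex has
outdegree at most one, and there are no directed cycles. -/
def IsInForest {n : ℕ} (W : Matrix (Fin n) (Fin n) ℝ)
    (A : Finset (Fin n × Fin n)) : Prop :=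
  (∀ e ∈ A, e.1 ≠ e.2 ∧ 0 < W e.1 e.2) ∧
  (∀ i : Fin n, (A.filter (fun e => e.1 = i)).card ≤ 1) ∧
  (∀ i : Fin n, ¬ Relation.TransGen (fun a b => (a, b) ∈ A) i i)

/-- The weight of a forest: the product of its arc weights. -/
def forestWeight {n : ℕ} (W : Matrix (Fin n) (Fin n) ℝ)
    (A : Finset (Fin n × Fin n)) : ℝ :=
  ∏ e ∈ A, W e.1 e.2

/-- `i` belongs to the tree of the forest `A` converging to (rooted at) `j`. -/
def InTreeRootedAt {n : ℕ} (A : Finset (Fin n × Fin n)) (i j : Fin n) : Prop :=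
  Relation.ReflTransGen (fun a b => (a, b) ∈ A) i j ∧ ∀ e ∈ A, e.1 ≠ j

open scoped Classical in
/-- `σ_k`: the total weight of in-forests with `k` arcs. -/
noncomputable def sigmaW {n : ℕ} (W : Matrix (Fin n) (Fin n) ℝ) (k : ℕ) : ℝ :=
  ∑ A ∈ Finset.univ.powerset.filter
      (fun A => IsInForest W A ∧ A.card = k), forestWeight W A

open scoped Classical in
/-- `Q_k`: the matrix of in-forests with `k` arcs; its `(i,j)` entry is the total
weight of in-forests with `k` arcs in which `i` belongs to a tree rooted at `j`. -/
noncomputable def forestMatrix {n : ℕ} (W : Matrix (Fin n) (Fin n) ℝ) (k : ℕ) :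
    Matrix (Fin n) (Fin n) ℝ :=
  Matrix.of fun i j =>
    ∑ A ∈ Finset.univ.powerset.filter
        (fun A => IsInForest W A ∧ A.card = k ∧ InTreeRootedAt A i j),
      forestWeight W A

open scoped Classical in
/-- `σ`: the total weight of all in-forests. -/
noncomputable def sigmaTot {n : ℕ} (W : Matrix (Fin n) (Fin n) ℝ) : ℝ :=
  ∑ A ∈ Finset.univ.powerset.filter (fun A => IsInForest W A), forestWeight W A

open scoped Classical in
/-- `Q`: the matrix of all in-forests. -/
noncomputable def forestMatrixTot {n : ℕ} (W : Matrix (Fin n) (Fin n) ℝ) :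
    Matrix (Fin n) (Fin n) ℝ :=
  Matrix.of fun i j =>
    ∑ A ∈ Finset.univ.powerset.filter
        (fun A => IsInForest W A ∧ InTreeRootedAt A i j), forestWeight W A

open scoped Classical in
/-- The number of arcs in a maximum in-forest (equal to `n - d` where `d` is the
in-forest dimension). -/
noncomputable def maxForestCard {n : ℕ} (W : Matrix (Fin n) (Fin n) ℝ) : ℕ :=
  (Finset.univ.powerset.filter (fun A => IsInForest W A)).sup Finset.card

/-- The in-forest dimension `d` of the digraph. -/
noncomputable def forestDim {n : ℕ} (W : Matrix (Fin n) (Fin n) ℝ) : ℕ :=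
  n - maxForestCard W

/-- The (row) Laplacian matrix of the weighted digraph with arc-weight matrix `W`. -/
def lap {n : ℕ} (W : Matrix (Fin n) (Fin n) ℝ) : Matrix (Fin n) (Fin n) ℝ :=
  Matrix.diagonal (fun i => ∑ j, W i j) - W

/-- `J̃`: the normalized matrix of maximum in-forests. -/
noncomputable def Jtilde {n : ℕ} (W : Matrix (Fin n) (Fin n) ℝ) :
    Matrix (Fin n) (Fin n) ℝ :=
  (sigmaW W (maxForestCard W))⁻¹ • forestMatrix W (maxForestCard W)

section Reach
variable {n : ℕ}

lemma rtg_filter_src (F : Finset (Fin n × Fin n)) (i x y : Fin n)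
    (h : Relation.ReflTransGen (fun a b => (a, b) ∈ F) x y) :
    Relation.ReflTransGen (fun a b => (a, b) ∈ F.filter (fun e => e.1 ≠ i)) x y ∨
    Relation.ReflTransGen (fun a b => (a, b) ∈ F.filter (fun e => e.1 ≠ i)) x i := by
  classical
  induction h using Relation.ReflTransGen.head_induction_on with
  | refl => exact Or.inl .refl
  | head hab htail ih =>
    rename_i a c
    by_cases ha : a = i
    · subst ha; exact Or.inr .refl
    · have hab' : (a, c) ∈ F.filter (fun e => e.1 ≠ i) := by
        simp only [Finset.mem_filter]; exact ⟨hab, ha⟩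
      rcases ih with h' | h'
      · exact Or.inl (Relation.ReflTransGen.head hab' h')
      · exact Or.inr (Relation.ReflTransGen.head hab' h')

lemma rtg_insert (e : Fin n × Fin n) (F : Finset (Fin n × Fin n)) (x y : Fin n)
    (h : Relation.ReflTransGen (fun a b => (a, b) ∈ insert e F) x y) :
    Relation.ReflTransGen (fun a b => (a, b) ∈ F) x y ∨
      (Relation.ReflTransGen (fun a b => (a, b) ∈ F) x e.1 ∧
        Relation.ReflTransGen (fun a b => (a, b) ∈ insert e F) e.2 y) := by
  classical
  induction h using Relation.ReflTransGen.head_induction_on with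
  | refl => exact Or.inl .refl
  | head hab htail ih =>
    rename_i a c
    rcases Finset.mem_insert.mp hab with hac | hac
    · have h1 : a = e.1 := by rw [← hac]
      have h2 : c = e.2 := by rw [← hac]
      subst h1; subst h2
      exact Or.inr ⟨.refl, htail⟩
    · rcases ih with h' | ⟨h1, h2⟩
      · exact Or.inl (Relation.ReflTransGen.head hac h')
      · exact Or.inr ⟨Relation.ReflTransGen.head hac h1, h2⟩

lemma rtg_insert' (i t : Fin n) (F : Finset (Fin n × Fin n)) (x y : Fin n)
    (hti : ¬ Relation.ReflTransGen (fun a b => (a, b) ∈ F) t i)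
    (h : Relation.ReflTransGen (fun a b => (a, b) ∈ insert (i, t) F) x y) :
    Relation.ReflTransGen (fun a b => (a, b) ∈ F) x y ∨
      (Relation.ReflTransGen (fun a b => (a, b) ∈ F) x i ∧
        Relation.ReflTransGen (fun a b => (a, b) ∈ F) t y) := by
  rcases rtg_insert (i, t) F x y h with h' | ⟨h1, h2⟩
  · exact Or.inl h'
  · rcases rtg_insert (i, t) F t y h2 with h2' | ⟨h2a, _⟩
    · exact Or.inr ⟨h1, h2'⟩
    · exact absurd h2a hti

lemma acyclic_insert (i t : Fin n) (F : Finset (Fin n × Fin n))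
    (hF : ∀ v, ¬ Relation.TransGen (fun a b => (a, b) ∈ F) v v)
    (hsrc : ∀ e ∈ F, e.1 ≠ i)
    (hti : ¬ Relation.ReflTransGen (fun a b => (a, b) ∈ F) t i) :
    ∀ v, ¬ Relation.TransGen (fun a b => (a, b) ∈ insert (i, t) F) v v := by
  intro v hv
  obtain ⟨c, hvc, hcv⟩ := (Relation.TransGen.head'_iff).mp hv
  rcases Finset.mem_insert.mp hvc with hac | hac
  · obtain ⟨rfl, rfl⟩ : v = i ∧ c = t := ⟨congrArg Prod.fst hac, congrArg Prod.snd hac⟩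
    rcases rtg_insert' _ _ F _ _ hti hcv with h' | ⟨h1, _⟩
    · exact hti h'
    · exact hti h1
  · have hvne : v ≠ i := hsrc (v, c) hac
    rcases rtg_insert' i t F c v hti hcv with h' | ⟨h1, h2⟩
    · exact hF v (Relation.TransGen.head' hac h')
    · exact hti (Relation.ReflTransGen.trans h2 (Relation.ReflTransGen.tail (Relation.ReflTransGen.refl) hac |>.trans h1))

end Reach

section ForestAux
open scoped Classical
variable {n : ℕ}

lemma mem_ppf {P : Finset (Fin n × Fin n) → Prop} {A : Finset (Fin n × Fin n)} :
    A ∈ Finset.univ.powerset.filter P ↔ P A := by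
  simp

lemma out_unique {F : Finset (Fin n × Fin n)}
    (h : ∀ v : Fin n, (F.filter (fun e => e.1 = v)).card ≤ 1)
    {a b c : Fin n} (hb : (a, b) ∈ F) (hc : (a, c) ∈ F) : b = c := by
  have := Finset.card_le_one.mp (h a) (a, b) (by simp [hb]) (a, c) (by simp [hc])
  exact congrArg Prod.snd this

noncomputable def outTgt (F : Finset (Fin n × Fin n)) (i : Fin n) : Fin n :=
  if h : (F.filter (fun e => e.1 = i)).Nonempty then h.choose.2 else i

lemma outTgt_eq {F : Finset (Fin n × Fin n)}
    (h : ∀ v : Fin n, (F.filter (fun e => e.1 = v)).card ≤ 1)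
    {i t : Fin n} (ht : (i, t) ∈ F) : outTgt F i = t := by
  have hne : (F.filter (fun e => e.1 = i)).Nonempty := ⟨(i, t), by simp [ht]⟩
  rw [outTgt, dif_pos hne]
  have hc := hne.choose_spec
  rw [Finset.mem_filter] at hc
  have : hne.choose = (i, hne.choose.2) := by
    ext <;> simp [hc.2]
  exact out_unique h (this ▸ hc.1) ht

lemma isInForest_empty (W : Matrix (Fin n) (Fin n) ℝ) : IsInForest W ∅ := by
  refine ⟨by simp, by simp, fun i h => ?_⟩
  obtain ⟨c, hc, -⟩ := (Relation.TransGen.head'_iff).mp h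
  simp at hc

lemma isInForest_mono {W : Matrix (Fin n) (Fin n) ℝ} {F G : Finset (Fin n × Fin n)}
    (hF : IsInForest W F) (hsub : G ⊆ F) : IsInForest W G := by
  refine ⟨fun e he => hF.1 e (hsub he), fun i => ?_, fun i h => ?_⟩
  · exact le_trans (Finset.card_le_card (Finset.filter_subset_filter _ hsub)) (hF.2.1 i)
  · exact hF.2.2 i (Relation.TransGen.mono (fun a b hab => hsub hab) _ _ h)

lemma isInForest_insert {W : Matrix (Fin n) (Fin n) ℝ} {F : Finset (Fin n × Fin n)}
    {i t : Fin n} (hF : IsInForest W F) (hsrc : ∀ e ∈ F, e.1 ≠ i)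
    (hti : ¬ Relation.ReflTransGen (fun a b => (a, b) ∈ F) t i)
    (hit : i ≠ t) (hw : 0 < W i t) : IsInForest W (insert (i, t) F) := by
  refine ⟨fun e he => ?_, fun v => ?_, acyclic_insert i t F hF.2.2 hsrc hti⟩
  · rcases Finset.mem_insert.mp he with rfl | he
    · exact ⟨hit, hw⟩
    · exact hF.1 e he
  · by_cases hvi : v = i
    · have : (insert (i, t) F).filter (fun e => e.1 = v) = {(i, t)} := by
        ext e
        simp only [Finset.mem_filter, Finset.mem_insert, Finset.mem_singleton]
        constructor
        · rintro ⟨rfl | he, h1⟩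
          · rfl
          · exact absurd (h1.trans hvi) (hsrc e he)
        · rintro rfl; exact ⟨Or.inl rfl, hvi.symm⟩
      rw [this]; simp
    · have : (insert (i, t) F).filter (fun e => e.1 = v) = F.filter (fun e => e.1 = v) := by
        ext e
        simp only [Finset.mem_filter, Finset.mem_insert]
        constructor
        · rintro ⟨rfl | he, h1⟩
          · exact absurd h1.symm hvi
          · exact ⟨he, h1⟩
        · rintro ⟨he, h1⟩; exact ⟨Or.inr he, h1⟩
      rw [this]; exact hF.2.1 v

lemma reach_root {F : Finset (Fin n × Fin n)}
    (hout : ∀ v : Fin n, (F.filter (fun e => e.1 = v)).card ≤ 1)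
    {j : Fin n} (hroot : ∀ e ∈ F, e.1 ≠ j) {t i : Fin n}
    (h1 : Relation.ReflTransGen (fun a b => (a, b) ∈ F) t i)
    (h2 : Relation.ReflTransGen (fun a b => (a, b) ∈ F) t j) :
    Relation.ReflTransGen (fun a b => (a, b) ∈ F) i j := by
  revert h2
  induction h1 using Relation.ReflTransGen.head_induction_on with
  | refl => exact id
  | head hab htail ih =>
    rename_i a c
    intro haj
    rcases haj.cases_head with rfl | ⟨c', harc', hc'j⟩
    · exact absurd rfl (hroot _ hab)
    · have : c' = c := out_unique hout harc' hab
      subst this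
      exact ih hc'j

lemma forestWeight_nonneg {W : Matrix (Fin n) (Fin n) ℝ} (hW : ∀ i j, 0 ≤ W i j)
    (F : Finset (Fin n × Fin n)) : 0 ≤ forestWeight W F :=
  Finset.prod_nonneg fun e _ => hW e.1 e.2

lemma forestWeight_insert {W : Matrix (Fin n) (Fin n) ℝ} {F : Finset (Fin n × Fin n)}
    {i t : Fin n} (h : (i, t) ∉ F) :
    forestWeight W (insert (i, t) F) = W i t * forestWeight W F := by
  rw [forestWeight, Finset.prod_insert h]; rfl

lemma inTree_self_iff {F : Finset (Fin n × Fin n)} {i : Fin n} :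
    InTreeRootedAt F i i ↔ ∀ e ∈ F, e.1 ≠ i := by
  constructor
  · exact fun h => h.2
  · exact fun h => ⟨.refl, h⟩

lemma no_reach_of_nosrc {F : Finset (Fin n × Fin n)} {i j : Fin n}
    (hsrc : ∀ e ∈ F, e.1 ≠ i) (hij : i ≠ j) :
    ¬ Relation.ReflTransGen (fun a b => (a, b) ∈ F) i j := by
  intro h
  rcases h.cases_head with rfl | ⟨c, harc, -⟩
  · exact hij rfl
  · exact hsrc _ harc rfl

end ForestAux


section Master
open scoped Classical
variable {n : ℕ}

lemma sum_product_filter {γ : Type*} [AddCommMonoid γ]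
    (cond : Fin n → Finset (Fin n × Fin n) → Prop)
    (f : Fin n → Finset (Fin n × Fin n) → γ) :
    ∑ p ∈ ((Finset.univ : Finset (Fin n)) ×ˢ
        (Finset.univ.powerset : Finset (Finset (Fin n × Fin n)))).filter
        (fun p => cond p.1 p.2), f p.1 p.2
      = ∑ t, ∑ A ∈ Finset.univ.powerset.filter (cond t), f t A := by
  rw [Finset.sum_filter, Finset.sum_product]
  simp [Finset.sum_filter]

lemma sum_congr_inst {α M : Type*} [AddCommMonoid M] {p q : α → Prop}
    {h1 : DecidablePred p} {h2 : DecidablePred q} {s : Finset α} {f : α → M}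
    (hpq : ∀ x, p x ↔ q x) :
    ∑ x ∈ @Finset.filter _ p h1 s, f x = ∑ x ∈ @Finset.filter _ q h2 s, f x :=
  Finset.sum_congr (Finset.filter_congr fun x _ => hpq x) fun _ _ => rfl

lemma forest_decomp {W : Matrix (Fin n) (Fin n) ℝ} {G : Finset (Fin n × Fin n)}
    (hG : IsInForest W G) {i u : Fin n} (hu : (i, u) ∈ G) :
    insert (i, u) (G.filter (fun e => e.1 ≠ i)) = G := by
  ext e
  simp only [Finset.mem_insert, Finset.mem_filter]
  constructor
  · rintro (rfl | ⟨he, -⟩)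
    · exact hu
    · exact he
  · intro he
    by_cases h1 : e.1 = i
    · left
      have he2 : e = (i, e.2) := by rw [← h1]
      have h2u := out_unique hG.2.1 (he2 ▸ he) hu
      rw [he2, h2u]
    · right; exact ⟨he, h1⟩

lemma nreach_of_out {W : Matrix (Fin n) (Fin n) ℝ} {G : Finset (Fin n × Fin n)}
    (hG : IsInForest W G) {i u : Fin n} (hu : (i, u) ∈ G) :
    ¬ Relation.ReflTransGen (fun a b => (a, b) ∈ G.filter (fun e => e.1 ≠ i)) u i := by
  intro hr
  exact hG.2.2 i (Relation.TransGen.head' hu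
    (Relation.ReflTransGen.mono (fun a b hab => (Finset.mem_filter.mp hab).1) _ _ hr))

lemma filter_insert_src {F : Finset (Fin n × Fin n)} {i t : Fin n}
    (hsrc : ∀ e ∈ F, e.1 ≠ i) :
    (insert (i, t) F).filter (fun e => e.1 ≠ i) = F := by
  ext e
  simp only [Finset.mem_filter, Finset.mem_insert]
  constructor
  · rintro ⟨rfl | he, h1⟩
    · exact absurd rfl h1
    · exact he
  · intro he; exact ⟨Or.inr he, hsrc e he⟩

lemma ne_of_pos_weight {W : Matrix (Fin n) (Fin n) ℝ} (hdiag : ∀ a, W a a = 0)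
    {i t : Fin n} (hw : 0 < W i t) : i ≠ t := by
  rintro rfl; rw [hdiag i] at hw; exact lt_irrefl 0 hw

lemma sum_forests_with_arc (W : Matrix (Fin n) (Fin n) ℝ)
    (hdiag : ∀ a, W a a = 0)
    (i : Fin n) (k : ℕ) (P : Finset (Fin n × Fin n) → Prop) :
    ∑ G ∈ Finset.univ.powerset.filter
        (fun G => IsInForest W G ∧ G.card = k + 1 ∧ (∃ u, (i, u) ∈ G) ∧ P G),
      forestWeight W G
    = ∑ p ∈ ((Finset.univ : Finset (Fin n)) ×ˢ
          (Finset.univ.powerset : Finset (Finset (Fin n × Fin n)))).filter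
        (fun p => 0 < W i p.1 ∧ IsInForest W p.2 ∧ p.2.card = k ∧ (∀ e ∈ p.2, e.1 ≠ i) ∧
          ¬ Relation.ReflTransGen (fun a b => (a, b) ∈ p.2) p.1 i ∧ P (insert (i, p.1) p.2)),
      W i p.1 * forestWeight W p.2 := by
  refine Finset.sum_nbij' (fun G => (outTgt G i, G.filter (fun e => e.1 ≠ i)))
    (fun p => insert (i, p.1) p.2) ?_ ?_ ?_ ?_ ?_
  · rintro G hG
    rw [Finset.mem_filter] at hG
    obtain ⟨-, hF, hcard, ⟨u, hu⟩, hP⟩ := hG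
    have htgt : outTgt G i = u := outTgt_eq hF.2.1 hu
    have hdec := forest_decomp hF hu
    have hnm : (i, u) ∉ G.filter (fun e => e.1 ≠ i) := by simp
    rw [Finset.mem_filter]
    refine ⟨by simp, ?_, isInForest_mono hF (Finset.filter_subset _ _), ?_, ?_, ?_, ?_⟩
    · rw [htgt]; exact (hF.1 _ hu).2
    · show (G.filter (fun e => e.1 ≠ i)).card = k
      have := hcard
      rw [← hdec, Finset.card_insert_of_notMem hnm] at this
      omega
    · intro e he; exact (Finset.mem_filter.mp he).2
    · rw [htgt]; exact nreach_of_out hF hu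
    · rw [htgt, hdec]; exact hP
  · rintro ⟨t, F⟩ hp
    dsimp only
    rw [Finset.mem_filter] at hp
    obtain ⟨-, hw, hF, hcard, hsrc, hti, hP⟩ := hp
    dsimp only at hw hF hcard hsrc hti hP
    have hnm : (i, t) ∉ F := fun h => hsrc _ h rfl
    rw [Finset.mem_filter]
    refine ⟨by simp, isInForest_insert hF hsrc hti (ne_of_pos_weight hdiag hw) hw, ?_,
      ⟨t, Finset.mem_insert_self _ _⟩, hP⟩
    rw [Finset.card_insert_of_notMem hnm, hcard]
  · rintro G hG
    dsimp only
    rw [Finset.mem_filter] at hG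
    obtain ⟨-, hF, hcard, ⟨u, hu⟩, hP⟩ := hG
    simp only [outTgt_eq hF.2.1 hu]
    exact forest_decomp hF hu
  · rintro ⟨t, F⟩ hp
    dsimp only
    rw [Finset.mem_filter] at hp
    obtain ⟨-, hw, hF, hcard, hsrc, hti, hP⟩ := hp
    dsimp only at hw hF hcard hsrc hti hP
    have hins := isInForest_insert hF hsrc hti (ne_of_pos_weight hdiag hw) hw
    have : outTgt (insert (i, t) F) i = t :=
      outTgt_eq hins.2.1 (Finset.mem_insert_self _ _)
    simp only [this, filter_insert_src hsrc]
  · rintro G hG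
    rw [Finset.mem_filter] at hG
    obtain ⟨-, hF, hcard, ⟨u, hu⟩, hP⟩ := hG
    have htgt : outTgt G i = u := outTgt_eq hF.2.1 hu
    have hdec := forest_decomp hF hu
    have hnm : (i, u) ∉ G.filter (fun e => e.1 ≠ i) := by simp
    dsimp only
    simp only [htgt]
    conv_lhs => rw [← hdec]
    exact forestWeight_insert hnm

end Master


section Swap
open scoped Classical
variable {n : ℕ}

lemma arc_of_reach {A : Finset (Fin n × Fin n)} {i j : Fin n}
    (h : Relation.ReflTransGen (fun a b => (a, b) ∈ A) i j) (hij : i ≠ j) :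
    ∃ u, (i, u) ∈ A ∧ Relation.ReflTransGen (fun a b => (a, b) ∈ A) u j := by
  rcases h.cases_head with rfl | ⟨c, harc, hcj⟩
  · exact absurd rfl hij
  · exact ⟨c, harc, hcj⟩

lemma acyclic_out {W : Matrix (Fin n) (Fin n) ℝ} {A : Finset (Fin n × Fin n)}
    (hA : IsInForest W A) {i u : Fin n} (hu : (i, u) ∈ A) :
    ¬ Relation.ReflTransGen (fun a b => (a, b) ∈ A) u i :=
  fun h => hA.2.2 i (Relation.TransGen.head' hu h)

/-- The swap construction: replace the out-arc `(i,u)` of `i` by `(i,t)`. -/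
lemma swap_spec {W : Matrix (Fin n) (Fin n) ℝ} (hdiag : ∀ a, W a a = 0)
    {A : Finset (Fin n × Fin n)} {i u t j : Fin n}
    (hA : IsInForest W A) (hu : (i, u) ∈ A) (ht : 0 < W i t)
    (hti : ¬ Relation.ReflTransGen (fun a b => (a, b) ∈ A) t i)
    (hij : i ≠ j) (hroot : ∀ e ∈ A, e.1 ≠ j) :
    IsInForest W (insert (i, t) (A.filter (fun e => e.1 ≠ i))) ∧
    (insert (i, t) (A.filter (fun e => e.1 ≠ i))).card = A.card ∧
    (∀ e ∈ insert (i, t) (A.filter (fun e => e.1 ≠ i)), e.1 ≠ j) ∧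
    outTgt A i = u ∧
    outTgt (insert (i, t) (A.filter (fun e => e.1 ≠ i))) i = t ∧
    insert (i, u) ((insert (i, t) (A.filter (fun e => e.1 ≠ i))).filter
      (fun e => e.1 ≠ i)) = A ∧
    W i u * forestWeight W (insert (i, t) (A.filter (fun e => e.1 ≠ i)))
      = W i t * forestWeight W A := by
  have hAf : IsInForest W (A.filter (fun e => e.1 ≠ i)) :=
    isInForest_mono hA (Finset.filter_subset _ _)
  have hsrcf : ∀ e ∈ A.filter (fun e => e.1 ≠ i), e.1 ≠ i :=
    fun e he => (Finset.mem_filter.mp he).2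
  have htif : ¬ Relation.ReflTransGen
      (fun a b => (a, b) ∈ A.filter (fun e => e.1 ≠ i)) t i :=
    fun h => hti (Relation.ReflTransGen.mono (fun a b hab => (Finset.mem_filter.mp hab).1) _ _ h)
  have hit : i ≠ t := ne_of_pos_weight hdiag ht
  have hins : IsInForest W (insert (i, t) (A.filter (fun e => e.1 ≠ i))) :=
    isInForest_insert hAf hsrcf htif hit ht
  have hdec := forest_decomp hA hu
  have hnmu : (i, u) ∉ A.filter (fun e => e.1 ≠ i) := by simp
  have hnmt : (i, t) ∉ A.filter (fun e => e.1 ≠ i) := by simp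
  have hfs : (insert (i, t) (A.filter (fun e => e.1 ≠ i))).filter (fun e => e.1 ≠ i)
      = A.filter (fun e => e.1 ≠ i) := filter_insert_src hsrcf
  refine ⟨hins, ?_, ?_, outTgt_eq hA.2.1 hu, outTgt_eq hins.2.1 (Finset.mem_insert_self _ _),
    ?_, ?_⟩
  · rw [Finset.card_insert_of_notMem hnmt]
    conv_rhs => rw [← hdec]
    rw [Finset.card_insert_of_notMem hnmu]
  · rintro e he
    rcases Finset.mem_insert.mp he with rfl | he
    · exact hij
    · exact hroot e (Finset.mem_filter.mp he).1
  · rw [hfs]; exact hdec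
  · rw [forestWeight_insert hnmt]
    conv_rhs => rw [← hdec, forestWeight_insert hnmu]
    ring

end Swap


section Recursion
open scoped Classical
variable {n : ℕ}

lemma pair_sum_eq (W : Matrix (Fin n) (Fin n) ℝ) (hW : ∀ a b, 0 ≤ W a b) (i : Fin n)
    (g : Fin n → Finset (Fin n × Fin n) → Prop) :
    ∑ p ∈ ((Finset.univ : Finset (Fin n)) ×ˢ
        (Finset.univ.powerset : Finset (Finset (Fin n × Fin n)))).filter
        (fun p => 0 < W i p.1 ∧ g p.1 p.2), W i p.1 * forestWeight W p.2
      = ∑ t, W i t * ∑ A ∈ Finset.univ.powerset.filter (g t), forestWeight W A := by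
  rw [Finset.sum_filter, Finset.sum_product]
  refine Finset.sum_congr rfl fun t _ => ?_
  by_cases hw : 0 < W i t
  · rw [Finset.mul_sum, Finset.sum_filter]
    refine Finset.sum_congr rfl fun A _ => ?_
    simp [hw]
  · have hw0 : W i t = 0 := le_antisymm (not_lt.mp hw) (hW i t)
    simp [hw0]

lemma rtg_to_insert {A : Finset (Fin n × Fin n)} {i t x y : Fin n}
    (h : Relation.ReflTransGen (fun a b => (a, b) ∈ A.filter (fun e => e.1 ≠ i)) x y) :
    Relation.ReflTransGen
      (fun a b => (a, b) ∈ insert (i, t) (A.filter (fun e => e.1 ≠ i))) x y :=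
  Relation.ReflTransGen.mono (fun a b hab => Finset.mem_insert_of_mem hab) _ _ h

lemma rtg_of_filter {A : Finset (Fin n × Fin n)} {i x y : Fin n}
    (h : Relation.ReflTransGen (fun a b => (a, b) ∈ A.filter (fun e => e.1 ≠ i)) x y) :
    Relation.ReflTransGen (fun a b => (a, b) ∈ A) x y :=
  Relation.ReflTransGen.mono (fun a b hab => (Finset.mem_filter.mp hab).1) _ _ h

lemma bij_B (W : Matrix (Fin n) (Fin n) ℝ) (hdiag : ∀ a, W a a = 0)
    (i j : Fin n) (hij : i ≠ j) (k : ℕ) :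
    ∑ p ∈ ((Finset.univ : Finset (Fin n)) ×ˢ
        (Finset.univ.powerset : Finset (Finset (Fin n × Fin n)))).filter
        (fun p => 0 < W i p.1 ∧ (IsInForest W p.2 ∧ p.2.card = k ∧ InTreeRootedAt p.2 i j)),
      W i p.1 * forestWeight W p.2
    = ∑ p ∈ (((Finset.univ : Finset (Fin n)) ×ˢ
        (Finset.univ.powerset : Finset (Finset (Fin n × Fin n)))).filter
        (fun p => 0 < W i p.1 ∧ (IsInForest W p.2 ∧ p.2.card = k ∧
          InTreeRootedAt p.2 p.1 j))).filter
        (fun p => ¬((∀ e ∈ p.2, e.1 ≠ i) ∧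
          ¬ Relation.ReflTransGen (fun a b => (a, b) ∈ p.2) i j)),
      W i p.1 * forestWeight W p.2 := by
  refine Finset.sum_nbij'
    (fun p => if Relation.ReflTransGen (fun a b => (a, b) ∈ p.2) p.1 j then p
      else (outTgt p.2 i, insert (i, p.1) (p.2.filter (fun e => e.1 ≠ i))))
    (fun p => if Relation.ReflTransGen (fun a b => (a, b) ∈ p.2) i j then p
      else (outTgt p.2 i, insert (i, p.1) (p.2.filter (fun e => e.1 ≠ i))))
    ?_ ?_ ?_ ?_ ?_
  · rintro ⟨t, A⟩ hp
    rw [Finset.mem_filter] at hp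
    obtain ⟨hmem, hw, hA, hcard, hT⟩ := hp
    dsimp only at hw hA hcard hT ⊢
    obtain ⟨u, hu, huj⟩ := arc_of_reach hT.1 hij
    by_cases hb : Relation.ReflTransGen (fun a b => (a, b) ∈ A) t j
    · rw [if_pos hb, Finset.mem_filter, Finset.mem_filter]
      exact ⟨⟨hmem, hw, hA, hcard, hb, hT.2⟩, fun hn => hn.2 hT.1⟩
    · rw [if_neg hb]
      have hti : ¬ Relation.ReflTransGen (fun a b => (a, b) ∈ A) t i :=
        fun h => hb (h.trans hT.1)
      obtain ⟨hF', hcard', hroot', houtA, houtA', hback, hwt⟩ :=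
        swap_spec hdiag hA hu hw hti hij hT.2
      rw [houtA, Finset.mem_filter, Finset.mem_filter]
      refine ⟨⟨by simp, (hA.1 _ hu).2, hF', hcard'.trans hcard, ?_, hroot'⟩, ?_⟩
      · rcases rtg_filter_src A i u j huj with h' | h'
        · exact rtg_to_insert h'
        · exact absurd (rtg_of_filter h') (acyclic_out hA hu)
      · rintro ⟨hnosrc, -⟩
        exact hnosrc (i, t) (Finset.mem_insert_self _ _) rfl
  · rintro ⟨t, A⟩ hp
    rw [Finset.mem_filter, Finset.mem_filter] at hp
    obtain ⟨⟨hmem, hw, hA, hcard, hT⟩, hn⟩ := hp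
    dsimp only at hw hA hcard hT hn ⊢
    by_cases hb : Relation.ReflTransGen (fun a b => (a, b) ∈ A) i j
    · rw [if_pos hb, Finset.mem_filter]
      exact ⟨hmem, hw, hA, hcard, hb, hT.2⟩
    · rw [if_neg hb]
      have harc : ∃ u, (i, u) ∈ A := by
        by_contra hne
        push_neg at hne
        refine hn ⟨fun e he hei => ?_, hb⟩
        exact hne e.2 (by rw [← hei]; exact he)
      obtain ⟨u, hu⟩ := harc
      have hti : ¬ Relation.ReflTransGen (fun a b => (a, b) ∈ A) t i :=
        fun h => hb (reach_root hA.2.1 hT.2 h hT.1)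
      obtain ⟨hF', hcard', hroot', houtA, houtA', hback, hwt⟩ :=
        swap_spec hdiag hA hu hw hti hij hT.2
      rw [houtA, Finset.mem_filter]
      refine ⟨by simp, (hA.1 _ hu).2, hF', hcard'.trans hcard, ?_, hroot'⟩
      refine Relation.ReflTransGen.head (Finset.mem_insert_self _ _) ?_
      rcases rtg_filter_src A i t j hT.1 with h' | h'
      · exact rtg_to_insert h'
      · exact absurd (rtg_of_filter h') hti
  · rintro ⟨t, A⟩ hp
    rw [Finset.mem_filter] at hp
    obtain ⟨hmem, hw, hA, hcard, hT⟩ := hp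
    dsimp only at hw hA hcard hT ⊢
    obtain ⟨u, hu, huj⟩ := arc_of_reach hT.1 hij
    by_cases hb : Relation.ReflTransGen (fun a b => (a, b) ∈ A) t j
    · rw [if_pos hb, if_pos hT.1]
    · rw [if_neg hb]
      have hti : ¬ Relation.ReflTransGen (fun a b => (a, b) ∈ A) t i :=
        fun h => hb (h.trans hT.1)
      obtain ⟨hF', hcard', hroot', houtA, houtA', hback, hwt⟩ :=
        swap_spec hdiag hA hu hw hti hij hT.2
      have htif : ¬ Relation.ReflTransGen
          (fun a b => (a, b) ∈ A.filter (fun e => e.1 ≠ i)) t i :=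
        fun h => hti (rtg_of_filter h)
      have hnij' : ¬ Relation.ReflTransGen
          (fun a b => (a, b) ∈ insert (i, t) (A.filter (fun e => e.1 ≠ i))) i j := by
        intro h
        obtain ⟨c, hc, hcj⟩ := arc_of_reach h hij
        rcases Finset.mem_insert.mp hc with hct | hcf
        · have : c = t := congrArg Prod.snd hct
          subst this
          rcases rtg_insert' i c _ c j htif hcj with h' | ⟨-, h'⟩ <;>
            exact hb (rtg_of_filter h')
        · exact (Finset.mem_filter.mp hcf).2 rfl
      dsimp only
      rw [if_neg hnij', houtA, houtA', hback]
  · rintro ⟨t, A⟩ hp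
    rw [Finset.mem_filter, Finset.mem_filter] at hp
    obtain ⟨⟨hmem, hw, hA, hcard, hT⟩, hn⟩ := hp
    dsimp only at hw hA hcard hT hn ⊢
    by_cases hb : Relation.ReflTransGen (fun a b => (a, b) ∈ A) i j
    · rw [if_pos hb, if_pos hT.1]
    · rw [if_neg hb]
      have harc : ∃ u, (i, u) ∈ A := by
        by_contra hne
        push_neg at hne
        refine hn ⟨fun e he hei => ?_, hb⟩
        exact hne e.2 (by rw [← hei]; exact he)
      obtain ⟨u, hu⟩ := harc
      have hti : ¬ Relation.ReflTransGen (fun a b => (a, b) ∈ A) t i :=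
        fun h => hb (reach_root hA.2.1 hT.2 h hT.1)
      obtain ⟨hF', hcard', hroot', houtA, houtA', hback, hwt⟩ :=
        swap_spec hdiag hA hu hw hti hij hT.2
      have htif : ¬ Relation.ReflTransGen
          (fun a b => (a, b) ∈ A.filter (fun e => e.1 ≠ i)) t i :=
        fun h => hti (rtg_of_filter h)
      have hnuj : ¬ Relation.ReflTransGen
          (fun a b => (a, b) ∈ insert (i, t) (A.filter (fun e => e.1 ≠ i))) u j := by
        intro h
        rcases rtg_insert' i t _ u j htif h with h' | ⟨h', -⟩
        · exact hb (Relation.ReflTransGen.head hu (rtg_of_filter h'))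
        · exact acyclic_out hA hu (rtg_of_filter h')
      dsimp only
      rw [houtA]
      rw [if_neg hnuj, houtA', hback]
  · rintro ⟨t, A⟩ hp
    rw [Finset.mem_filter] at hp
    obtain ⟨hmem, hw, hA, hcard, hT⟩ := hp
    dsimp only at hw hA hcard hT ⊢
    obtain ⟨u, hu, huj⟩ := arc_of_reach hT.1 hij
    by_cases hb : Relation.ReflTransGen (fun a b => (a, b) ∈ A) t j
    · rw [if_pos hb]
    · rw [if_neg hb]
      have hti : ¬ Relation.ReflTransGen (fun a b => (a, b) ∈ A) t i :=
        fun h => hb (h.trans hT.1)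
      obtain ⟨hF', hcard', hroot', houtA, houtA', hback, hwt⟩ :=
        swap_spec hdiag hA hu hw hti hij hT.2
      dsimp only
      rw [houtA, hwt]

end Recursion


section RecursionMain
open scoped Classical
variable {n : ℕ}

set_option maxHeartbeats 2000000 in
theorem forest_recursion (W : Matrix (Fin n) (Fin n) ℝ) (hW : ∀ a b, 0 ≤ W a b)
    (hdiag : ∀ a, W a a = 0) (k : ℕ) :
    forestMatrix W (k + 1) + lap W * forestMatrix W k
      = sigmaW W (k + 1) • (1 : Matrix (Fin n) (Fin n) ℝ) := by
  ext i j
  have hmul : (lap W * forestMatrix W k) i j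
      = (∑ u, W i u) * forestMatrix W k i j - ∑ t, W i t * forestMatrix W k t j := by
    rw [lap, Matrix.sub_mul, Matrix.sub_apply, Matrix.diagonal_mul, Matrix.mul_apply]
  rw [Matrix.add_apply, hmul, Matrix.smul_apply, Matrix.one_apply, smul_eq_mul]
  by_cases hij : i = j
  · subst hij
    rw [if_pos rfl, mul_one]
    -- diagonal case
    have e1 : (∑ u, W i u) * forestMatrix W k i i
        = ∑ p ∈ ((Finset.univ : Finset (Fin n)) ×ˢ
            (Finset.univ.powerset : Finset (Finset (Fin n × Fin n)))).filter
            (fun p => 0 < W i p.1 ∧ (IsInForest W p.2 ∧ p.2.card = k ∧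
              InTreeRootedAt p.2 i i)),
          W i p.1 * forestWeight W p.2 := by
      rw [Finset.sum_mul]
      refine Eq.symm (((sum_congr_inst fun p => Iff.rfl).trans (pair_sum_eq W hW i
        (fun t A => IsInForest W A ∧ A.card = k ∧ InTreeRootedAt A i i))).trans ?_)
      refine Finset.sum_congr rfl fun t _ => ?_
      congr 1
      exact sum_congr_inst fun A => Iff.rfl
    have e2 : ∑ t, W i t * forestMatrix W k t i
        = ∑ p ∈ ((Finset.univ : Finset (Fin n)) ×ˢ
            (Finset.univ.powerset : Finset (Finset (Fin n × Fin n)))).filter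
            (fun p => 0 < W i p.1 ∧ (IsInForest W p.2 ∧ p.2.card = k ∧
              InTreeRootedAt p.2 p.1 i)),
          W i p.1 * forestWeight W p.2 :=
      by
      refine Eq.symm (((sum_congr_inst fun p => Iff.rfl).trans (pair_sum_eq W hW i
        (fun t A => IsInForest W A ∧ A.card = k ∧ InTreeRootedAt A t i))).trans ?_)
      refine Finset.sum_congr rfl fun t _ => ?_
      congr 1
      exact sum_congr_inst fun A => Iff.rfl
    have e3 := Finset.sum_filter_add_sum_filter_not
      (((Finset.univ : Finset (Fin n)) ×ˢ
        (Finset.univ.powerset : Finset (Finset (Fin n × Fin n)))).filter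
        (fun p => 0 < W i p.1 ∧ (IsInForest W p.2 ∧ p.2.card = k ∧ InTreeRootedAt p.2 i i)))
      (fun p => Relation.ReflTransGen (fun a b => (a, b) ∈ p.2) p.1 i)
      (fun p => W i p.1 * forestWeight W p.2)
    have e3a : ∑ p ∈ (((Finset.univ : Finset (Fin n)) ×ˢ
          (Finset.univ.powerset : Finset (Finset (Fin n × Fin n)))).filter
          (fun p => 0 < W i p.1 ∧ (IsInForest W p.2 ∧ p.2.card = k ∧
            InTreeRootedAt p.2 i i))).filter
          (fun p => Relation.ReflTransGen (fun a b => (a, b) ∈ p.2) p.1 i),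
          W i p.1 * forestWeight W p.2
        = ∑ p ∈ ((Finset.univ : Finset (Fin n)) ×ˢ
            (Finset.univ.powerset : Finset (Finset (Fin n × Fin n)))).filter
            (fun p => 0 < W i p.1 ∧ (IsInForest W p.2 ∧ p.2.card = k ∧
              InTreeRootedAt p.2 p.1 i)),
          W i p.1 * forestWeight W p.2 := by
      rw [Finset.filter_filter]
      refine Finset.sum_congr (Finset.filter_congr fun p _ => ?_) fun _ _ => rfl
      constructor
      · rintro ⟨⟨hw, hA, hc, hT⟩, hr⟩
        exact ⟨hw, hA, hc, hr, hT.2⟩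
      · rintro ⟨hw, hA, hc, hr, hroot⟩
        exact ⟨⟨hw, hA, hc, Relation.ReflTransGen.refl, hroot⟩, hr⟩
    have e4 := Finset.sum_filter_add_sum_filter_not
      (Finset.univ.powerset.filter
        (fun A : Finset (Fin n × Fin n) => IsInForest W A ∧ A.card = k + 1))
      (fun A => ∀ e ∈ A, e.1 ≠ i) (forestWeight W)
    have e4a : ∑ A ∈ (Finset.univ.powerset.filter
          (fun A : Finset (Fin n × Fin n) => IsInForest W A ∧ A.card = k + 1)).filter
          (fun A => ∀ e ∈ A, e.1 ≠ i), forestWeight W A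
        = forestMatrix W (k + 1) i i := by
      rw [Finset.filter_filter]
      refine Finset.sum_congr (Finset.filter_congr fun A _ => ?_) fun _ _ => rfl
      constructor
      · rintro ⟨⟨hA, hc⟩, hs⟩
        exact ⟨hA, hc, Relation.ReflTransGen.refl, hs⟩
      · rintro ⟨hA, hc, hT⟩
        exact ⟨⟨hA, hc⟩, hT.2⟩
    have e5 : ∑ G ∈ Finset.univ.powerset.filter
          (fun G => IsInForest W G ∧ G.card = k + 1 ∧ (∃ u, (i, u) ∈ G) ∧ True),
          forestWeight W G
        = ∑ p ∈ ((Finset.univ : Finset (Fin n)) ×ˢ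
            (Finset.univ.powerset : Finset (Finset (Fin n × Fin n)))).filter
            (fun p => 0 < W i p.1 ∧ IsInForest W p.2 ∧ p.2.card = k ∧
              (∀ e ∈ p.2, e.1 ≠ i) ∧
              ¬ Relation.ReflTransGen (fun a b => (a, b) ∈ p.2) p.1 i ∧ True),
          W i p.1 * forestWeight W p.2 :=
      (sum_congr_inst fun G => Iff.rfl).trans
        ((sum_forests_with_arc W hdiag i k (fun _ => True)).trans
          (sum_congr_inst fun p => Iff.rfl))
    have e4b : ∑ A ∈ (Finset.univ.powerset.filter
          (fun A : Finset (Fin n × Fin n) => IsInForest W A ∧ A.card = k + 1)).filter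
          (fun A => ¬ ∀ e ∈ A, e.1 ≠ i), forestWeight W A
        = ∑ G ∈ Finset.univ.powerset.filter
            (fun G => IsInForest W G ∧ G.card = k + 1 ∧ (∃ u, (i, u) ∈ G) ∧ True),
          forestWeight W G := by
      rw [Finset.filter_filter]
      refine Finset.sum_congr (Finset.filter_congr fun A _ => ?_) fun _ _ => rfl
      constructor
      · rintro ⟨⟨hA, hc⟩, hs⟩
        push_neg at hs
        obtain ⟨e, he, hei⟩ := hs
        exact ⟨hA, hc, ⟨e.2, by rw [← hei]; exact he⟩, trivial⟩
      · rintro ⟨hA, hc, ⟨u, hu⟩, -⟩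
        exact ⟨⟨hA, hc⟩, fun hall => hall (i, u) hu rfl⟩
    have e6 : ∑ p ∈ ((Finset.univ : Finset (Fin n)) ×ˢ
          (Finset.univ.powerset : Finset (Finset (Fin n × Fin n)))).filter
          (fun p => 0 < W i p.1 ∧ IsInForest W p.2 ∧ p.2.card = k ∧
            (∀ e ∈ p.2, e.1 ≠ i) ∧
            ¬ Relation.ReflTransGen (fun a b => (a, b) ∈ p.2) p.1 i ∧ True),
          W i p.1 * forestWeight W p.2
        = ∑ p ∈ (((Finset.univ : Finset (Fin n)) ×ˢ
            (Finset.univ.powerset : Finset (Finset (Fin n × Fin n)))).filter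
            (fun p => 0 < W i p.1 ∧ (IsInForest W p.2 ∧ p.2.card = k ∧
              InTreeRootedAt p.2 i i))).filter
            (fun p => ¬ Relation.ReflTransGen (fun a b => (a, b) ∈ p.2) p.1 i),
          W i p.1 * forestWeight W p.2 := by
      rw [Finset.filter_filter]
      refine Finset.sum_congr (Finset.filter_congr fun p _ => ?_) fun _ _ => rfl
      constructor
      · rintro ⟨hw, hA, hc, hs, hr, -⟩
        exact ⟨⟨hw, hA, hc, Relation.ReflTransGen.refl, hs⟩, hr⟩
      · rintro ⟨⟨hw, hA, hc, hT⟩, hr⟩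
        exact ⟨hw, hA, hc, hT.2, hr, trivial⟩
    have hsig : sigmaW W (k + 1) = ∑ A ∈ Finset.univ.powerset.filter
        (fun A : Finset (Fin n × Fin n) => IsInForest W A ∧ A.card = k + 1),
        forestWeight W A := rfl
    rw [hsig, e1, e2, ← e4, e4a, e4b, e5, e6, ← e3, e3a]
    ring
  · rw [if_neg hij, mul_zero]
    have f1 : (∑ u, W i u) * forestMatrix W k i j
        = ∑ p ∈ ((Finset.univ : Finset (Fin n)) ×ˢ
            (Finset.univ.powerset : Finset (Finset (Fin n × Fin n)))).filter
            (fun p => 0 < W i p.1 ∧ (IsInForest W p.2 ∧ p.2.card = k ∧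
              InTreeRootedAt p.2 i j)),
          W i p.1 * forestWeight W p.2 := by
      rw [Finset.sum_mul]
      refine Eq.symm (((sum_congr_inst fun p => Iff.rfl).trans (pair_sum_eq W hW i
        (fun t A => IsInForest W A ∧ A.card = k ∧ InTreeRootedAt A i j))).trans ?_)
      refine Finset.sum_congr rfl fun t _ => ?_
      congr 1
      exact sum_congr_inst fun A => Iff.rfl
    have f2 : ∑ t, W i t * forestMatrix W k t j
        = ∑ p ∈ ((Finset.univ : Finset (Fin n)) ×ˢ
            (Finset.univ.powerset : Finset (Finset (Fin n × Fin n)))).filter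
            (fun p => 0 < W i p.1 ∧ (IsInForest W p.2 ∧ p.2.card = k ∧
              InTreeRootedAt p.2 p.1 j)),
          W i p.1 * forestWeight W p.2 :=
      by
      refine Eq.symm (((sum_congr_inst fun p => Iff.rfl).trans (pair_sum_eq W hW i
        (fun t A => IsInForest W A ∧ A.card = k ∧ InTreeRootedAt A t j))).trans ?_)
      refine Finset.sum_congr rfl fun t _ => ?_
      congr 1
      exact sum_congr_inst fun A => Iff.rfl
    have f3 := Finset.sum_filter_add_sum_filter_not
      (((Finset.univ : Finset (Fin n)) ×ˢ
        (Finset.univ.powerset : Finset (Finset (Fin n × Fin n)))).filter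
        (fun p => 0 < W i p.1 ∧ (IsInForest W p.2 ∧ p.2.card = k ∧ InTreeRootedAt p.2 p.1 j)))
      (fun p => (∀ e ∈ p.2, e.1 ≠ i) ∧
        ¬ Relation.ReflTransGen (fun a b => (a, b) ∈ p.2) i j)
      (fun p => W i p.1 * forestWeight W p.2)
    have f5 : ∑ G ∈ Finset.univ.powerset.filter
          (fun G => IsInForest W G ∧ G.card = k + 1 ∧ (∃ u, (i, u) ∈ G) ∧
            InTreeRootedAt G i j),
          forestWeight W G
        = ∑ p ∈ ((Finset.univ : Finset (Fin n)) ×ˢ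
            (Finset.univ.powerset : Finset (Finset (Fin n × Fin n)))).filter
            (fun p => 0 < W i p.1 ∧ IsInForest W p.2 ∧ p.2.card = k ∧
              (∀ e ∈ p.2, e.1 ≠ i) ∧
              ¬ Relation.ReflTransGen (fun a b => (a, b) ∈ p.2) p.1 i ∧
              InTreeRootedAt (insert (i, p.1) p.2) i j),
          W i p.1 * forestWeight W p.2 :=
      (sum_congr_inst fun G => Iff.rfl).trans
        ((sum_forests_with_arc W hdiag i k (fun G => InTreeRootedAt G i j)).trans
          (sum_congr_inst fun p => Iff.rfl))
    have f5a : forestMatrix W (k + 1) i j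
        = ∑ G ∈ Finset.univ.powerset.filter
            (fun G => IsInForest W G ∧ G.card = k + 1 ∧ (∃ u, (i, u) ∈ G) ∧
              InTreeRootedAt G i j),
          forestWeight W G := by
      refine Finset.sum_congr (Finset.filter_congr fun A _ => ?_) fun _ _ => rfl
      constructor
      · rintro ⟨hA, hc, hT⟩
        obtain ⟨u, hu, -⟩ := arc_of_reach hT.1 hij
        exact ⟨hA, hc, ⟨u, hu⟩, hT⟩
      · rintro ⟨hA, hc, -, hT⟩
        exact ⟨hA, hc, hT⟩
    have f4 : ∑ p ∈ (((Finset.univ : Finset (Fin n)) ×ˢ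
          (Finset.univ.powerset : Finset (Finset (Fin n × Fin n)))).filter
          (fun p => 0 < W i p.1 ∧ (IsInForest W p.2 ∧ p.2.card = k ∧
            InTreeRootedAt p.2 p.1 j))).filter
          (fun p => (∀ e ∈ p.2, e.1 ≠ i) ∧
            ¬ Relation.ReflTransGen (fun a b => (a, b) ∈ p.2) i j),
          W i p.1 * forestWeight W p.2
        = ∑ p ∈ ((Finset.univ : Finset (Fin n)) ×ˢ
            (Finset.univ.powerset : Finset (Finset (Fin n × Fin n)))).filter
            (fun p => 0 < W i p.1 ∧ IsInForest W p.2 ∧ p.2.card = k ∧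
              (∀ e ∈ p.2, e.1 ≠ i) ∧
              ¬ Relation.ReflTransGen (fun a b => (a, b) ∈ p.2) p.1 i ∧
              InTreeRootedAt (insert (i, p.1) p.2) i j),
          W i p.1 * forestWeight W p.2 := by
      rw [Finset.filter_filter]
      refine Finset.sum_congr (Finset.filter_congr fun p _ => ?_) fun _ _ => rfl
      obtain ⟨t, A⟩ := p
      dsimp only
      constructor
      · rintro ⟨⟨hw, hA, hc, hT⟩, hnos, hnij⟩
        have hti : ¬ Relation.ReflTransGen (fun a b => (a, b) ∈ A) t i :=
          fun h => hnij (reach_root hA.2.1 hT.2 h hT.1)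
        refine ⟨hw, hA, hc, hnos, hti, ?_, ?_⟩
        · exact Relation.ReflTransGen.head (Finset.mem_insert_self _ _)
            (Relation.ReflTransGen.mono (fun a b hab => Finset.mem_insert_of_mem hab) _ _ hT.1)
        · rintro e he
          rcases Finset.mem_insert.mp he with rfl | he
          · exact hij
          · exact hT.2 e he
      · rintro ⟨hw, hA, hc, hnos, hti, hTins⟩
        have hroot : ∀ e ∈ A, e.1 ≠ j :=
          fun e he => hTins.2 e (Finset.mem_insert_of_mem he)
        have htj : Relation.ReflTransGen (fun a b => (a, b) ∈ A) t j := by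
          obtain ⟨c, hc, hcj⟩ := arc_of_reach hTins.1 hij
          rcases Finset.mem_insert.mp hc with hct | hcf
          · have : c = t := congrArg Prod.snd hct
            subst this
            rcases rtg_insert' i c A c j hti hcj with h' | ⟨h', -⟩
            · exact h'
            · exact absurd h' hti
          · exact absurd rfl (hnos _ hcf)
        exact ⟨⟨hw, hA, hc, htj, hroot⟩, hnos, no_reach_of_nosrc hnos hij⟩
    have f6 := bij_B W hdiag i j hij k
    rw [f1, f2, f5a, f5, ← f3, f4, f6]
    ring

end RecursionMain


section Algebra
open scoped Classical
variable {n : ℕ}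

lemma rtg_empty {i j : Fin n}
    (h : Relation.ReflTransGen (fun a b => (a, b) ∈ (∅ : Finset (Fin n × Fin n))) i j) :
    i = j := by
  rcases h.cases_head with rfl | ⟨c, hc, -⟩
  · rfl
  · simp at hc

lemma forestWeight_empty (W : Matrix (Fin n) (Fin n) ℝ) :
    forestWeight W (∅ : Finset (Fin n × Fin n)) = 1 := by
  simp [forestWeight]

lemma forestMatrix_zero (W : Matrix (Fin n) (Fin n) ℝ) : forestMatrix W 0 = 1 := by
  ext i j
  show ∑ A ∈ Finset.univ.powerset.filter
      (fun A => IsInForest W A ∧ A.card = 0 ∧ InTreeRootedAt A i j), forestWeight W A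
    = (1 : Matrix (Fin n) (Fin n) ℝ) i j
  rw [Matrix.one_apply]
  by_cases hij : i = j
  · subst hij
    rw [if_pos rfl]
    have hset : Finset.univ.powerset.filter
        (fun A => IsInForest W A ∧ A.card = 0 ∧ InTreeRootedAt A i i)
        = {(∅ : Finset (Fin n × Fin n))} := by
      ext A
      simp only [Finset.mem_filter, Finset.mem_powerset, Finset.mem_singleton]
      constructor
      · rintro ⟨-, -, hc, -⟩
        exact Finset.card_eq_zero.mp hc
      · rintro rfl
        exact ⟨Finset.empty_subset _, isInForest_empty W, Finset.card_empty,
          Relation.ReflTransGen.refl, by simp⟩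
    rw [hset, Finset.sum_singleton, forestWeight_empty]
  · rw [if_neg hij]
    apply Finset.sum_eq_zero
    rintro A hA
    rw [Finset.mem_filter] at hA
    obtain ⟨-, -, hc, hT⟩ := hA
    have : A = ∅ := Finset.card_eq_zero.mp hc
    subst this
    exact absurd (rtg_empty hT.1) hij

lemma sigmaW_zero (W : Matrix (Fin n) (Fin n) ℝ) : sigmaW W 0 = 1 := by
  rw [sigmaW]
  have hset : Finset.univ.powerset.filter
      (fun A : Finset (Fin n × Fin n) => IsInForest W A ∧ A.card = 0)
      = {(∅ : Finset (Fin n × Fin n))} := by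
    ext A
    simp only [Finset.mem_filter, Finset.mem_powerset, Finset.mem_singleton]
    constructor
    · rintro ⟨-, -, hc⟩
      exact Finset.card_eq_zero.mp hc
    · rintro rfl
      exact ⟨Finset.empty_subset _, isInForest_empty W, Finset.card_empty⟩
  rw [hset, Finset.sum_singleton, forestWeight_empty]

lemma forest_card_le (W : Matrix (Fin n) (Fin n) ℝ) {A : Finset (Fin n × Fin n)}
    (hA : IsInForest W A) : A.card ≤ maxForestCard W :=
  Finset.le_sup (Finset.mem_filter.mpr ⟨Finset.mem_powerset.mpr (Finset.subset_univ A), hA⟩)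

lemma sigmaW_eq_zero (W : Matrix (Fin n) (Fin n) ℝ) {k : ℕ}
    (hk : maxForestCard W < k) : sigmaW W k = 0 := by
  rw [sigmaW]
  apply Finset.sum_eq_zero
  rintro A hA
  rw [Finset.mem_filter] at hA
  obtain ⟨-, hF, hc⟩ := hA
  exact absurd (hc ▸ forest_card_le W hF) (not_le.mpr hk)

lemma forestMatrix_eq_zero (W : Matrix (Fin n) (Fin n) ℝ) {k : ℕ}
    (hk : maxForestCard W < k) : forestMatrix W k = 0 := by
  ext i j
  show ∑ A ∈ Finset.univ.powerset.filter
      (fun A => IsInForest W A ∧ A.card = k ∧ InTreeRootedAt A i j), forestWeight W A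
    = (0 : Matrix (Fin n) (Fin n) ℝ) i j
  rw [Matrix.zero_apply]
  apply Finset.sum_eq_zero
  rintro A hA
  rw [Finset.mem_filter] at hA
  obtain ⟨-, hF, hc, -⟩ := hA
  exact absurd (hc ▸ forest_card_le W hF) (not_le.mpr hk)

lemma forestMatrixTot_eq_sum (W : Matrix (Fin n) (Fin n) ℝ) :
    forestMatrixTot W = ∑ k ∈ Finset.range (maxForestCard W + 1), forestMatrix W k := by
  ext i j
  rw [Matrix.sum_apply]
  show ∑ A ∈ Finset.univ.powerset.filter
      (fun A => IsInForest W A ∧ InTreeRootedAt A i j), forestWeight W A = _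
  rw [← Finset.sum_fiberwise_of_maps_to (g := Finset.card)
    (fun A hA => Finset.mem_range.mpr (Nat.lt_succ_of_le
      (forest_card_le W (Finset.mem_filter.mp hA).2.1)))]
  refine Finset.sum_congr rfl fun k _ => ?_
  rw [Finset.filter_filter]
  refine Finset.sum_congr (Finset.filter_congr fun A _ => ?_) fun _ _ => rfl
  constructor
  · rintro ⟨⟨hF, hT⟩, hc⟩
    exact ⟨hF, hc, hT⟩
  · rintro ⟨hF, hc, hT⟩
    exact ⟨⟨hF, hT⟩, hc⟩

lemma sigmaTot_eq_sum (W : Matrix (Fin n) (Fin n) ℝ) :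
    sigmaTot W = ∑ k ∈ Finset.range (maxForestCard W + 1), sigmaW W k := by
  rw [sigmaTot]
  rw [← Finset.sum_fiberwise_of_maps_to (g := Finset.card)
    (fun A hA => Finset.mem_range.mpr (Nat.lt_succ_of_le
      (forest_card_le W (Finset.mem_filter.mp hA).2)))]
  refine Finset.sum_congr rfl fun k _ => ?_
  rw [Finset.filter_filter]
  rfl

lemma forestMatrix_poly (W : Matrix (Fin n) (Fin n) ℝ) (hW : ∀ a b, 0 ≤ W a b)
    (hdiag : ∀ a, W a a = 0) (k : ℕ) :
    forestMatrix W k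
      = ∑ l ∈ Finset.range (k + 1), sigmaW W (k - l) • (-(lap W)) ^ l := by
  induction k with
  | zero => simp [forestMatrix_zero, sigmaW_zero]
  | succ k ih =>
    have hrec : forestMatrix W (k + 1)
        = sigmaW W (k + 1) • (1 : Matrix (Fin n) (Fin n) ℝ) - lap W * forestMatrix W k :=
      eq_sub_of_add_eq (forest_recursion W hW hdiag k)
    rw [hrec, ih, Finset.mul_sum]
    rw [Finset.sum_range_succ' (fun l => sigmaW W (k + 1 - l) • (-(lap W)) ^ l)]
    have hterm : ∀ l, lap W * (sigmaW W (k - l) • (-(lap W)) ^ l)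
        = -(sigmaW W (k - l) • (-(lap W)) ^ (l + 1)) := by
      intro l
      rw [pow_succ' (-(lap W)) l, neg_mul, smul_neg, neg_neg, mul_smul_comm]
    rw [Finset.sum_congr rfl fun l _ => hterm l, Finset.sum_neg_distrib, sub_neg_eq_add]
    have : ∀ l ∈ Finset.range (k + 1), sigmaW W (k + 1 - (l + 1)) • (-(lap W)) ^ (l + 1)
        = sigmaW W (k - l) • (-(lap W)) ^ (l + 1) := by
      intro l _
      congr 2
      omega
    rw [Finset.sum_congr rfl this]
    simp [add_comm]

lemma lap_mul_forestMatrix_max (W : Matrix (Fin n) (Fin n) ℝ) (hW : ∀ a b, 0 ≤ W a b)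
    (hdiag : ∀ a, W a a = 0) :
    lap W * forestMatrix W (maxForestCard W) = 0 := by
  have h := forest_recursion W hW hdiag (maxForestCard W)
  rw [forestMatrix_eq_zero W (Nat.lt_succ_self _), sigmaW_eq_zero W (Nat.lt_succ_self _),
    zero_add, zero_smul] at h
  exact h

lemma one_add_lap_mul_Q (W : Matrix (Fin n) (Fin n) ℝ) (hW : ∀ a b, 0 ≤ W a b)
    (hdiag : ∀ a, W a a = 0) :
    (1 + lap W) * forestMatrixTot W
      = sigmaTot W • (1 : Matrix (Fin n) (Fin n) ℝ) := by
  rw [forestMatrixTot_eq_sum, sigmaTot_eq_sum, add_mul, one_mul, Finset.mul_sum]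
  rw [Finset.sum_range_succ' (fun k => forestMatrix W k),
    Finset.sum_range_succ (fun k => lap W * forestMatrix W k)]
  rw [lap_mul_forestMatrix_max W hW hdiag, add_zero, forestMatrix_zero]
  have hcomb : (∑ k ∈ Finset.range (maxForestCard W), forestMatrix W (k + 1))
      + ∑ k ∈ Finset.range (maxForestCard W), lap W * forestMatrix W k
      = ∑ k ∈ Finset.range (maxForestCard W),
          sigmaW W (k + 1) • (1 : Matrix (Fin n) (Fin n) ℝ) := by
    rw [← Finset.sum_add_distrib]
    exact Finset.sum_congr rfl fun k _ => forest_recursion W hW hdiag k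
  have hsig : (∑ k ∈ Finset.range (maxForestCard W + 1), sigmaW W k)
        • (1 : Matrix (Fin n) (Fin n) ℝ)
      = (∑ k ∈ Finset.range (maxForestCard W),
          sigmaW W (k + 1) • (1 : Matrix (Fin n) (Fin n) ℝ)) + 1 := by
    rw [Finset.sum_range_succ' (fun k => sigmaW W k), add_smul, sigmaW_zero, one_smul,
      Finset.sum_smul]
  rw [hsig, ← hcomb]
  abel

lemma sigmaTot_ge_one (W : Matrix (Fin n) (Fin n) ℝ) (hW : ∀ a b, 0 ≤ W a b) :
    (1 : ℝ) ≤ sigmaTot W := by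
  have hmem : (∅ : Finset (Fin n × Fin n)) ∈ Finset.univ.powerset.filter
      (fun A => IsInForest W A) :=
    Finset.mem_filter.mpr ⟨Finset.mem_powerset.mpr (Finset.empty_subset _),
      isInForest_empty W⟩
  have := Finset.single_le_sum (f := forestWeight W)
    (fun A _ => forestWeight_nonneg hW A) hmem
  rw [forestWeight_empty] at this
  exact this

lemma Q_eq_poly (W : Matrix (Fin n) (Fin n) ℝ) (hW : ∀ a b, 0 ≤ W a b)
    (hdiag : ∀ a, W a a = 0) :
    forestMatrixTot W = ∑ k ∈ Finset.range (maxForestCard W + 1),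
      (∑ j ∈ Finset.range (maxForestCard W - k + 1), sigmaW W j) • (-(lap W)) ^ k := by
  set m := maxForestCard W with hm
  rw [forestMatrixTot_eq_sum]
  rw [Finset.sum_congr rfl fun k _ => forestMatrix_poly W hW hdiag k]
  have step1 : ∀ k ∈ Finset.range (m + 1),
      ∑ l ∈ Finset.range (k + 1), sigmaW W (k - l) • (-(lap W)) ^ l
      = ∑ l ∈ Finset.range (m + 1),
          if l ≤ k then sigmaW W (k - l) • (-(lap W)) ^ l else 0 := by
    intro k hk
    rw [Finset.mem_range] at hk
    rw [Finset.sum_ite, Finset.sum_const_zero, add_zero]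
    refine (Finset.sum_congr ?_ fun _ _ => rfl).symm
    ext l
    simp only [Finset.mem_filter, Finset.mem_range]
    omega
  rw [Finset.sum_congr rfl step1, Finset.sum_comm]
  refine Finset.sum_congr rfl fun l hl => ?_
  rw [Finset.mem_range] at hl
  rw [Finset.sum_ite, Finset.sum_const_zero, add_zero]
  have hset : (Finset.range (m + 1)).filter (fun k => l ≤ k) = Finset.Ico l (m + 1) := by
    ext k
    simp only [Finset.mem_filter, Finset.mem_range, Finset.mem_Ico]
    omega
  rw [hset, Finset.sum_Ico_eq_sum_range]
  have hn1 : m + 1 - l = m - l + 1 := by omega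
  rw [hn1, Finset.sum_smul]
  refine Finset.sum_congr rfl fun j _ => ?_
  rw [show l + j - l = j from by omega]

end Algebra


section Determinant
open scoped Classical
variable {n : ℕ}

lemma prod_eq_of {p : Fin n × Fin n} {c d : Fin n} (h1 : p.1 = c) (h2 : p.2 = d) :
    p = (c, d) := by
  rw [← h1, ← h2]

lemma isInForest_of_entries {W W' : Matrix (Fin n) (Fin n) ℝ}
    {F : Finset (Fin n × Fin n)} (hF : IsInForest W' F)
    (h : ∀ e ∈ F, 0 < W e.1 e.2) : IsInForest W F :=
  ⟨fun e he => ⟨(hF.1 e he).1, h e he⟩, hF.2.1, hF.2.2⟩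

lemma forestWeight_congr {W W' : Matrix (Fin n) (Fin n) ℝ}
    {F : Finset (Fin n × Fin n)} (h : ∀ e ∈ F, W e.1 e.2 = W' e.1 e.2) :
    forestWeight W F = forestWeight W' F :=
  Finset.prod_congr rfl h

lemma adj_eq_Q (W : Matrix (Fin n) (Fin n) ℝ) (hW : ∀ a b, 0 ≤ W a b)
    (hdiag : ∀ a, W a a = 0) (hdet : (1 + lap W).det = sigmaTot W) :
    (1 + lap W).adjugate = forestMatrixTot W := by
  have hσ : sigmaTot W ≠ 0 := by
    have := sigmaTot_ge_one W hW; linarith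
  have hinv : (1 + lap W) * ((sigmaTot W)⁻¹ • forestMatrixTot W) = 1 := by
    rw [Matrix.mul_smul, one_add_lap_mul_Q W hW hdiag, smul_smul,
      inv_mul_cancel₀ hσ, one_smul]
  have hIsUnit : IsUnit (1 + lap W).det := by
    rw [hdet]; exact isUnit_iff_ne_zero.mpr hσ
  have hinv' : (1 + lap W)⁻¹ = (sigmaTot W)⁻¹ • forestMatrixTot W :=
    Matrix.inv_eq_right_inv hinv
  calc (1 + lap W).adjugate
      = (1 + lap W).adjugate * ((1 + lap W) * (1 + lap W)⁻¹) := by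
        rw [Matrix.mul_nonsing_inv _ hIsUnit, mul_one]
    _ = ((1 + lap W).adjugate * (1 + lap W)) * (1 + lap W)⁻¹ := by
        rw [Matrix.mul_assoc]
    _ = (1 + lap W).det • (1 + lap W)⁻¹ := by
        rw [Matrix.adjugate_mul, Matrix.smul_mul, one_mul]
    _ = forestMatrixTot W := by
        rw [hdet, hinv', smul_smul, mul_inv_cancel₀ hσ, one_smul]

lemma sigmaTot_of_zero : sigmaTot (0 : Matrix (Fin n) (Fin n) ℝ) = 1 := by
  rw [sigmaTot]
  have hset : Finset.univ.powerset.filter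
      (fun A : Finset (Fin n × Fin n) => IsInForest (0 : Matrix (Fin n) (Fin n) ℝ) A)
      = {(∅ : Finset (Fin n × Fin n))} := by
    ext A
    simp only [Finset.mem_filter, Finset.mem_powerset, Finset.mem_singleton]
    constructor
    · rintro ⟨-, hF⟩
      rcases Finset.eq_empty_or_nonempty A with rfl | ⟨e, he⟩
      · rfl
      · exact absurd (hF.1 e he).2 (by simp)
    · rintro rfl
      exact ⟨Finset.empty_subset _, isInForest_empty _⟩
  rw [hset, Finset.sum_singleton, forestWeight_empty]

set_option maxHeartbeats 2000000 in
theorem det_one_add_lap (W : Matrix (Fin n) (Fin n) ℝ) (hW : ∀ a b, 0 ≤ W a b)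
    (hdiag : ∀ a, W a a = 0) : (1 + lap W).det = sigmaTot W := by
  suffices h : ∀ (N : ℕ) (W : Matrix (Fin n) (Fin n) ℝ), (∀ a b, 0 ≤ W a b) →
      (∀ a, W a a = 0) →
      (Finset.univ.filter (fun p : Fin n × Fin n => W p.1 p.2 ≠ 0)).card ≤ N →
      (1 + lap W).det = sigmaTot W by
    exact h _ W hW hdiag le_rfl
  intro N
  induction N with
  | zero =>
    intro W hW hdiag hcard
    have hW0 : W = 0 := by
      ext a b
      by_contra h
      have hmem : (a, b) ∈ Finset.univ.filter
          (fun p : Fin n × Fin n => W p.1 p.2 ≠ 0) := by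
        simp only [Finset.mem_filter, Finset.mem_univ, true_and]
        exact h
      have := Finset.card_pos.mpr ⟨(a, b), hmem⟩
      omega
    subst hW0
    have hlap : lap (0 : Matrix (Fin n) (Fin n) ℝ) = 0 := by
      ext x y
      simp [lap, Matrix.diagonal_apply]
    rw [hlap, add_zero, Matrix.det_one, sigmaTot_of_zero]
  | succ N ihN =>
    intro W hW hdiag hcard
    rcases Finset.eq_empty_or_nonempty
      (Finset.univ.filter (fun p : Fin n × Fin n => W p.1 p.2 ≠ 0)) with h0 | h0
    · have hW0 : W = 0 := by
        ext a b
        by_contra h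
        have hmem : (a, b) ∈ Finset.univ.filter
            (fun p : Fin n × Fin n => W p.1 p.2 ≠ 0) := by
          simp only [Finset.mem_filter, Finset.mem_univ, true_and]
          exact h
        rw [h0] at hmem
        exact absurd hmem (Finset.notMem_empty _)
      subst hW0
      have hlap : lap (0 : Matrix (Fin n) (Fin n) ℝ) = 0 := by
        ext x y
        simp [lap, Matrix.diagonal_apply]
      rw [hlap, add_zero, Matrix.det_one, sigmaTot_of_zero]
    · obtain ⟨⟨a, b⟩, hab⟩ := h0
      rw [Finset.mem_filter] at hab
      have habne : W a b ≠ 0 := hab.2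
      have hWab : 0 < W a b := lt_of_le_of_ne (hW a b) (Ne.symm habne)
      have hne : a ≠ b := by
        rintro rfl
        exact habne (hdiag a)
      set W₀ : Matrix (Fin n) (Fin n) ℝ :=
        W.updateRow a (Function.update (W a) b 0) with hW₀def
      have hW₀rowa : W₀ a = Function.update (W a) b 0 := Matrix.updateRow_self
      have hW₀rowne : ∀ x, x ≠ a → W₀ x = W x := fun x hx => Matrix.updateRow_ne hx
      have hW₀ab : W₀ a b = 0 := by
        rw [hW₀rowa, Function.update_self]
      have hW₀ay : ∀ y, y ≠ b → W₀ a y = W a y := by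
        intro y hy
        rw [hW₀rowa, Function.update_of_ne hy]
      have hW₀entry : ∀ x y, ¬(x = a ∧ y = b) → W₀ x y = W x y := by
        intro x y h
        by_cases hx : x = a
        · subst hx
          exact hW₀ay y (fun hy => h ⟨rfl, hy⟩)
        · rw [hW₀rowne x hx]
      have hW₀nonneg : ∀ x y, 0 ≤ W₀ x y := by
        intro x y
        by_cases h : x = a ∧ y = b
        · obtain ⟨rfl, rfl⟩ := h
          rw [hW₀ab]
        · rw [hW₀entry x y h]; exact hW x y
      have hW₀diag : ∀ x, W₀ x x = 0 := by
        intro x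
        by_cases h : x = a ∧ x = b
        · obtain ⟨rfl, h2⟩ := h
          exact absurd h2 hne
        · rw [hW₀entry x x h]; exact hdiag x
      have hsupp : (Finset.univ.filter
          (fun p : Fin n × Fin n => W₀ p.1 p.2 ≠ 0)).card ≤ N := by
        have hsub : Finset.univ.filter (fun p : Fin n × Fin n => W₀ p.1 p.2 ≠ 0)
            ⊆ (Finset.univ.filter (fun p : Fin n × Fin n => W p.1 p.2 ≠ 0)).erase (a, b) := by
          intro p hp
          rw [Finset.mem_filter] at hp
          have hpne : p ≠ (a, b) := by
            rintro rfl
            exact hp.2 hW₀ab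
          rw [Finset.mem_erase, Finset.mem_filter]
          refine ⟨hpne, Finset.mem_univ _, ?_⟩
          rw [← hW₀entry p.1 p.2 (fun h => hpne (prod_eq_of h.1 h.2))]
          exact hp.2
        have habmem : ((a, b) : Fin n × Fin n) ∈ Finset.univ.filter
            (fun p : Fin n × Fin n => W p.1 p.2 ≠ 0) := by
          simp only [Finset.mem_filter, Finset.mem_univ, true_and]
          exact habne
        have h1 := Finset.card_le_card hsub
        have h2 := Finset.card_erase_of_mem habmem
        have h3 := Finset.card_pos.mpr ⟨((a, b) : Fin n × Fin n), habmem⟩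
        omega
      have IH : (1 + lap W₀).det = sigmaTot W₀ := ihN W₀ hW₀nonneg hW₀diag hsupp
      have hadj : (1 + lap W₀).adjugate = forestMatrixTot W₀ :=
        adj_eq_Q W₀ hW₀nonneg hW₀diag IH
      have hSum : (∑ j, W₀ a j) + W a b = ∑ j, W a j := by
        rw [hW₀rowa, Finset.sum_update_of_mem (Finset.mem_univ b), zero_add]
        rw [← Finset.add_sum_erase _ _ (Finset.mem_univ b), Finset.sdiff_singleton_eq_erase]
        ring
      -- determinant expansion
      have hrow : (1 : Matrix (Fin n) (Fin n) ℝ) + lap W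
          = (1 + lap W₀).updateRow a
            ((1 + lap W₀) a + W a b • (Pi.single a 1 - Pi.single b 1)) := by
        ext x y
        rw [Matrix.updateRow_apply]
        by_cases hx : x = a
        · rw [hx, if_pos rfl]
          simp only [Matrix.add_apply, Matrix.one_apply, lap, Matrix.sub_apply,
            Matrix.diagonal_apply, Pi.add_apply, Pi.smul_apply, Pi.sub_apply,
            Pi.single_apply, smul_eq_mul]
          by_cases hy : y = a
          · rw [hy]
            simp [hne, hdiag, hW₀diag]
            linarith [hSum]
          · by_cases hyb : y = b
            · rw [hyb]
              simp [hne, Ne.symm hne, hW₀ab]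
            · simp [Ne.symm hy, hy, hyb, hW₀ay y hyb]
        · rw [if_neg hx]
          simp only [Matrix.add_apply, lap, Matrix.sub_apply, Matrix.diagonal_apply]
          rw [hW₀rowne x hx]
      have e1 : ((1 + lap W₀).updateRow a (Pi.single a 1)).det
          = (1 + lap W₀).adjugate a a := (Matrix.adjugate_apply _ a a).symm
      have e2 : ((1 + lap W₀).updateRow a (Pi.single b 1)).det
          = (1 + lap W₀).adjugate b a := (Matrix.adjugate_apply _ b a).symm
      have hdet1 : (1 + lap W).det
          = (1 + lap W₀).det + W a b *
            ((1 + lap W₀).adjugate a a - (1 + lap W₀).adjugate b a) := by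
        rw [hrow, Matrix.det_updateRow_add, Matrix.updateRow_eq_self,
          Matrix.det_updateRow_smul]
        have hsub : (Pi.single a 1 - Pi.single b 1 : Fin n → ℝ)
            = (Pi.single a 1 : Fin n → ℝ) + (-1 : ℝ) • (Pi.single b 1 : Fin n → ℝ) := by
          funext z
          simp [sub_eq_add_neg]
        rw [hsub, Matrix.det_updateRow_add, Matrix.det_updateRow_smul, e1, e2]
        ring
      -- sigma decomposition
      have hnab_of : ∀ {A : Finset (Fin n × Fin n)}, IsInForest W₀ A → (a, b) ∉ A := by
        intro A hF h
        have := (hF.1 _ h).2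
        rw [hW₀ab] at this
        exact lt_irrefl 0 this
      have hforest_eq : (Finset.univ.powerset.filter
          (fun A : Finset (Fin n × Fin n) => IsInForest W A)).filter
            (fun A => ¬ (a, b) ∈ A)
          = Finset.univ.powerset.filter (fun A => IsInForest W₀ A) := by
        ext A
        simp only [Finset.mem_filter, Finset.mem_powerset]
        constructor
        · rintro ⟨⟨hsub, hF⟩, hnab⟩
          refine ⟨hsub, isInForest_of_entries hF fun e he => ?_⟩
          rw [hW₀entry e.1 e.2 (fun h => hnab (prod_eq_of h.1 h.2 ▸ he))]
          exact (hF.1 e he).2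
        · rintro ⟨hsub, hF⟩
          have hnab : (a, b) ∉ A := hnab_of hF
          refine ⟨⟨hsub, isInForest_of_entries hF fun e he => ?_⟩, hnab⟩
          rw [← hW₀entry e.1 e.2 (fun h => hnab (prod_eq_of h.1 h.2 ▸ he))]
          exact (hF.1 e he).2
      have hwt_eq : ∀ A ∈ Finset.univ.powerset.filter
          (fun A : Finset (Fin n × Fin n) => IsInForest W₀ A),
          forestWeight W A = forestWeight W₀ A := by
        intro A hA
        rw [Finset.mem_filter] at hA
        have hnab : (a, b) ∉ A := hnab_of hA.2
        exact forestWeight_congr fun e he =>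
          (hW₀entry e.1 e.2 (fun h => hnab (prod_eq_of h.1 h.2 ▸ he))).symm
      have hσW : sigmaTot W = ∑ A ∈ Finset.univ.powerset.filter
          (fun A : Finset (Fin n × Fin n) => IsInForest W A), forestWeight W A :=
        sum_congr_inst fun A => Iff.rfl
      have hσW₀ : sigmaTot W₀ = ∑ A ∈ Finset.univ.powerset.filter
          (fun A : Finset (Fin n × Fin n) => IsInForest W₀ A), forestWeight W₀ A :=
        sum_congr_inst fun A => Iff.rfl
      have hsplitσ := Finset.sum_filter_add_sum_filter_not
        (Finset.univ.powerset.filter (fun A : Finset (Fin n × Fin n) => IsInForest W A))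
        (fun A => (a, b) ∈ A) (forestWeight W)
      have hnotpart : ∑ A ∈ (Finset.univ.powerset.filter
          (fun A : Finset (Fin n × Fin n) => IsInForest W A)).filter
            (fun A => ¬ (a, b) ∈ A), forestWeight W A = sigmaTot W₀ := by
        rw [hσW₀]
        exact Finset.sum_congr hforest_eq hwt_eq
      -- the part containing (a,b): bijection with marked forests of W₀
      have hinpart : ∑ A ∈ (Finset.univ.powerset.filter
          (fun A : Finset (Fin n × Fin n) => IsInForest W A)).filter
            (fun A => (a, b) ∈ A), forestWeight W A
          = ∑ F ∈ Finset.univ.powerset.filter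
              (fun F : Finset (Fin n × Fin n) => IsInForest W₀ F ∧ (∀ e ∈ F, e.1 ≠ a) ∧
                ¬ Relation.ReflTransGen (fun x y => (x, y) ∈ F) b a),
            W a b * forestWeight W₀ F := by
        refine Finset.sum_nbij' (fun A => A.erase (a, b)) (fun F => insert (a, b) F)
          ?_ ?_ ?_ ?_ ?_
        · rintro A hA
          rw [Finset.mem_filter, Finset.mem_filter] at hA
          obtain ⟨⟨-, hF⟩, hmem⟩ := hA
          have hFe : IsInForest W (A.erase (a, b)) :=
            isInForest_mono hF (Finset.erase_subset _ _)
          have hnosrc : ∀ e ∈ A.erase (a, b), e.1 ≠ a := by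
            intro e he hea
            obtain ⟨hne', heA⟩ := Finset.mem_erase.mp he
            have h1 : e = (a, e.2) := prod_eq_of hea rfl
            have h2 : e.2 = b := out_unique hF.2.1 (h1 ▸ heA) hmem
            exact hne' (prod_eq_of hea h2)
          rw [Finset.mem_filter]
          refine ⟨by simp, isInForest_of_entries hFe fun e he => ?_, hnosrc, ?_⟩
          · have hene : e ≠ (a, b) := (Finset.mem_erase.mp he).1
            rw [hW₀entry e.1 e.2 (fun h => hene (prod_eq_of h.1 h.2))]
            exact (hF.1 e (Finset.mem_of_mem_erase he)).2
          · intro h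
            exact acyclic_out hF hmem
              (Relation.ReflTransGen.mono (fun x y hxy => Finset.mem_of_mem_erase hxy) _ _ h)
        · rintro F hF
          rw [Finset.mem_filter] at hF
          obtain ⟨-, hF₀, hnosrc, hnreach⟩ := hF
          have hFW : IsInForest W F := isInForest_of_entries hF₀ fun e he => by
            rw [← hW₀entry e.1 e.2 (fun h =>
              (hnosrc e he) h.1)]
            exact (hF₀.1 e he).2
          rw [Finset.mem_filter, Finset.mem_filter]
          exact ⟨⟨by simp, isInForest_insert hFW hnosrc hnreach hne hWab⟩,
            Finset.mem_insert_self _ _⟩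
        · rintro A hA
          rw [Finset.mem_filter] at hA
          exact Finset.insert_erase hA.2
        · rintro F hF
          rw [Finset.mem_filter] at hF
          obtain ⟨-, -, hnosrc, -⟩ := hF
          exact Finset.erase_insert (fun h => hnosrc (a, b) h rfl)
        · rintro A hA
          rw [Finset.mem_filter, Finset.mem_filter] at hA
          obtain ⟨⟨-, hF⟩, hmem⟩ := hA
          have h1 : W a b * ∏ e ∈ A.erase (a, b), W e.1 e.2 = ∏ e ∈ A, W e.1 e.2 :=
            Finset.mul_prod_erase A (fun e => W e.1 e.2) hmem
          have h2 : forestWeight W (A.erase (a, b)) = forestWeight W₀ (A.erase (a, b)) :=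
            forestWeight_congr fun e he =>
              (hW₀entry e.1 e.2 (fun h => (Finset.mem_erase.mp he).1
                (prod_eq_of h.1 h.2))).symm
          rw [forestWeight, ← h1, ← h2]
          rfl
      -- relate the marked sum to entries of Q₀
      have hQaa : forestMatrixTot W₀ a a = ∑ F ∈ Finset.univ.powerset.filter
          (fun F : Finset (Fin n × Fin n) => IsInForest W₀ F ∧ InTreeRootedAt F a a),
          forestWeight W₀ F := sum_congr_inst fun F => Iff.rfl
      have hQba : forestMatrixTot W₀ b a = ∑ F ∈ Finset.univ.powerset.filter
          (fun F : Finset (Fin n × Fin n) => IsInForest W₀ F ∧ InTreeRootedAt F b a),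
          forestWeight W₀ F := sum_congr_inst fun F => Iff.rfl
      have hsplitQ := Finset.sum_filter_add_sum_filter_not
        (Finset.univ.powerset.filter
          (fun F : Finset (Fin n × Fin n) => IsInForest W₀ F ∧ InTreeRootedAt F a a))
        (fun F => Relation.ReflTransGen (fun x y => (x, y) ∈ F) b a) (forestWeight W₀)
      have hQb_eq : ∑ F ∈ (Finset.univ.powerset.filter
          (fun F : Finset (Fin n × Fin n) => IsInForest W₀ F ∧ InTreeRootedAt F a a)).filter
            (fun F => Relation.ReflTransGen (fun x y => (x, y) ∈ F) b a),
            forestWeight W₀ F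
          = ∑ F ∈ Finset.univ.powerset.filter
              (fun F : Finset (Fin n × Fin n) => IsInForest W₀ F ∧ InTreeRootedAt F b a),
            forestWeight W₀ F := by
        rw [Finset.filter_filter]
        refine Finset.sum_congr (Finset.filter_congr fun F _ => ?_) fun _ _ => rfl
        constructor
        · rintro ⟨⟨hF, hT⟩, hr⟩
          exact ⟨hF, hr, hT.2⟩
        · rintro ⟨hF, hT⟩
          exact ⟨⟨hF, Relation.ReflTransGen.refl, hT.2⟩, hT.1⟩
      have hD_eq : ∑ F ∈ (Finset.univ.powerset.filter
          (fun F : Finset (Fin n × Fin n) => IsInForest W₀ F ∧ InTreeRootedAt F a a)).filter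
            (fun F => ¬ Relation.ReflTransGen (fun x y => (x, y) ∈ F) b a),
            forestWeight W₀ F
          = ∑ F ∈ Finset.univ.powerset.filter
              (fun F : Finset (Fin n × Fin n) => IsInForest W₀ F ∧ (∀ e ∈ F, e.1 ≠ a) ∧
                ¬ Relation.ReflTransGen (fun x y => (x, y) ∈ F) b a),
            forestWeight W₀ F := by
        rw [Finset.filter_filter]
        refine Finset.sum_congr (Finset.filter_congr fun F _ => ?_) fun _ _ => rfl
        constructor
        · rintro ⟨⟨hF, hT⟩, hr⟩
          exact ⟨hF, hT.2, hr⟩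
        · rintro ⟨hF, hs, hr⟩
          exact ⟨⟨hF, Relation.ReflTransGen.refl, hs⟩, hr⟩
      -- put everything together
      rw [hdet1, IH, hadj]
      have hQdiff : forestMatrixTot W₀ a a - forestMatrixTot W₀ b a
          = ∑ F ∈ Finset.univ.powerset.filter
              (fun F : Finset (Fin n × Fin n) => IsInForest W₀ F ∧ (∀ e ∈ F, e.1 ≠ a) ∧
                ¬ Relation.ReflTransGen (fun x y => (x, y) ∈ F) b a),
            forestWeight W₀ F := by
        linarith [hsplitQ, hQb_eq, hD_eq, hQaa, hQba]
      have hin2 : ∑ A ∈ (Finset.univ.powerset.filter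
          (fun A : Finset (Fin n × Fin n) => IsInForest W A)).filter
            (fun A => (a, b) ∈ A), forestWeight W A
          = W a b * ∑ F ∈ Finset.univ.powerset.filter
              (fun F : Finset (Fin n × Fin n) => IsInForest W₀ F ∧ (∀ e ∈ F, e.1 ≠ a) ∧
                ¬ Relation.ReflTransGen (fun x y => (x, y) ∈ F) b a),
            forestWeight W₀ F :=
        hinpart.trans (Finset.mul_sum _ _ _).symm
      rw [hσW, hQdiff]
      linarith [hsplitσ, hnotpart, hin2]

end Determinant


/-- `Q = Σ_{k=0}^{n-d} s_{n-d-k} (−L)^k = adj(I + L)`, where `s_i = Σ_{j=0}^i σ_j`. -/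
theorem forestMatrixTot_eq_poly_lap {n : ℕ} (W : Matrix (Fin n) (Fin n) ℝ)
    (hn : 1 < n) (hW : ∀ i j, 0 ≤ W i j) (hdiag : ∀ i, W i i = 0) :
    forestMatrixTot W =
      ∑ k ∈ Finset.range (maxForestCard W + 1),
        (∑ j ∈ Finset.range (maxForestCard W - k + 1), sigmaW W j) •
          (-(lap W)) ^ k ∧
    forestMatrixTot W = (1 + lap W).adjugate := by
  exact ⟨Q_eq_poly W hW hdiag, (adj_eq_Q W hW hdiag (det_one_add_lap W hW hdiag)).symm⟩
end

section
/- The normalized matrix of maximum in-forests J̃ = σ_{n−d}^{-1} Q_{n−d} annihilates the Laplacian on both sides: L J̃ = J̃ L = 0. -/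
open Matrix Finset Polynomial

namespace ForestAux

open Relation

section RelLemmas

variable {α : Type*}

theorem rt_total {r : α → α → Prop} (hu : ∀ ⦃a b c⦄, r a b → r a c → b = c) :
    ∀ {a b c : α}, ReflTransGen r a b → ReflTransGen r a c →
      ReflTransGen r b c ∨ ReflTransGen r c b := by
  intro a b c hab
  induction hab using ReflTransGen.head_induction_on with
  | refl => exact fun h => .inl h
  | head hstep _ ih =>
    intro hac
    rcases hac.cases_head with rfl | ⟨d, hd, hdc⟩
    · exact .inr (ReflTransGen.head hstep (by assumption))
    · exact ih (hu hstep hd ▸ hdc)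

theorem rt_insert_cases {r : α → α → Prop} {i s : α} {a b : α}
    (h : ReflTransGen (fun x y => r x y ∨ (x = i ∧ y = s)) a b) :
    ReflTransGen r a b ∨ (ReflTransGen r a i ∧
      ReflTransGen (fun x y => r x y ∨ (x = i ∧ y = s)) s b) := by
  induction h using ReflTransGen.head_induction_on with
  | refl => exact .inl .refl
  | head hstep htail ih =>
    rcases hstep with hr | ⟨rfl, rfl⟩
    · rcases ih with h1 | ⟨h1, h2⟩
      · exact .inl (ReflTransGen.head hr h1)
      · exact .inr ⟨ReflTransGen.head hr h1, h2⟩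
    · exact .inr ⟨.refl, htail⟩

theorem acyclic_insert {r : α → α → Prop} (hacyc : ∀ v, ¬ TransGen r v v) {i s : α}
    (hns : ¬ ReflTransGen r s i) (v : α) :
    ¬ TransGen (fun x y => r x y ∨ (x = i ∧ y = s)) v v := by
  intro h
  have hsi : ¬ ReflTransGen (fun x y => r x y ∨ (x = i ∧ y = s)) s i := by
    intro h'
    rcases rt_insert_cases h' with h1 | ⟨h1, _⟩ <;> exact hns h1
  rcases TransGen.head'_iff.mp h with ⟨c, hvc, hcv⟩
  rcases hvc with hr | ⟨rfl, rfl⟩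
  · rcases rt_insert_cases hcv with h1 | ⟨h1, h2⟩
    · exact hacyc v (TransGen.head' hr h1)
    · exact hsi (h2.trans (ReflTransGen.head (Or.inl hr)
        (ReflTransGen.mono (fun x y h => Or.inl h) _ _ h1)))
  · exact hsi hcv

theorem rt_avoid {r r' : α → α → Prop} {u : α} (hr : ∀ x y, r x y → x ≠ u → r' x y)
    {a b : α} (h : ReflTransGen r a b) (ha : ¬ ReflTransGen r a u) : ReflTransGen r' a b := by
  induction h using ReflTransGen.head_induction_on with
  | refl => exact .refl
  | head hstep htail ih =>
    rename_i x c
    have hx : x ≠ u := fun h' => ha (h' ▸ ReflTransGen.refl)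
    have hc : ¬ ReflTransGen r c u := fun h' => ha (ReflTransGen.head hstep h')
    exact ReflTransGen.head (hr _ _ hstep hx) (ih hc)

theorem rt_to_target {r r' : α → α → Prop} {u : α} (hr : ∀ x y, r x y → x ≠ u → r' x y)
    {a : α} (h : ReflTransGen r a u) : ReflTransGen r' a u := by
  induction h using ReflTransGen.head_induction_on with
  | refl => exact .refl
  | head hstep htail ih =>
    rename_i x c
    by_cases hx : x = u
    · exact hx ▸ ReflTransGen.refl
    · exact ReflTransGen.head (hr _ _ hstep hx) ih

end RelLemmas

variable {n : ℕ} {W : Matrix (Fin n) (Fin n) ℝ} {A B : Finset (Fin n × Fin n)}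

def rel (A : Finset (Fin n × Fin n)) : Fin n → Fin n → Prop := fun a b => (a, b) ∈ A

theorem forest_subset (hA : IsInForest W A) (hB : B ⊆ A) : IsInForest W B := by
  obtain ⟨h1, h2, h3⟩ := hA
  refine ⟨fun e he => h1 e (hB he),
    fun i => le_trans (Finset.card_le_card (Finset.filter_subset_filter _ hB)) (h2 i),
    fun i hi => h3 i (TransGen.mono (fun x y h => hB h) _ _ hi)⟩

theorem right_unique (hA : IsInForest W A) {a b c : Fin n}
    (hab : (a, b) ∈ A) (hac : (a, c) ∈ A) : b = c := by
  classical
  have h := hA.2.1 a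
  have hb : (a, b) ∈ A.filter (fun e => e.1 = a) := Finset.mem_filter.mpr ⟨hab, rfl⟩
  have hc : (a, c) ∈ A.filter (fun e => e.1 = a) := Finset.mem_filter.mpr ⟨hac, rfl⟩
  have := Finset.card_le_one.mp h _ hb _ hc
  exact congrArg Prod.snd this

theorem no_rt_back (hA : IsInForest W A) {a b : Fin n} (hab : (a, b) ∈ A)
    (h : ReflTransGen (rel A) b a) : False :=
  hA.2.2 a (TransGen.head' hab h)

theorem root_absorb {A : Finset (Fin n × Fin n)} {r x : Fin n}
    (hroot : ∀ b, (r, b) ∉ A) (h : ReflTransGen (rel A) r x) : r = x := by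
  rcases h.cases_head with rfl | ⟨c, hc, _⟩
  · rfl
  · exact absurd hc (hroot c)

theorem root_iff {A : Finset (Fin n × Fin n)} {r : Fin n} :
    (∀ e ∈ A, e.1 ≠ r) ↔ ∀ b, (r, b) ∉ A := by
  constructor
  · exact fun h b hb => h _ hb rfl
  · intro h e he heq
    exact h e.2 (by rw [← heq]; exact he)

theorem rel_insert_iff {e : Fin n × Fin n} {x y : Fin n} :
    rel (insert e A) x y ↔ rel A x y ∨ (x = e.1 ∧ y = e.2) := by
  classical
  simp only [rel, Finset.mem_insert, Prod.ext_iff]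
  tauto

theorem forest_insert (hA : IsInForest W A) {a s : Fin n}
    (hroot : ∀ b, (a, b) ∉ A) (hs : a ≠ s) (hw : 0 < W a s)
    (hns : ¬ ReflTransGen (rel A) s a) : IsInForest W (insert (a, s) A) := by
  classical
  obtain ⟨h1, h2, h3⟩ := hA
  refine ⟨?_, ?_, ?_⟩
  · intro e he
    rcases Finset.mem_insert.mp he with rfl | he'
    · exact ⟨hs, hw⟩
    · exact h1 e he'
  · intro x
    rw [Finset.filter_insert]
    by_cases hx : x = a
    · subst hx
      simp only [if_pos rfl]
      have : A.filter (fun e => e.1 = x) = ∅ := by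
        rw [Finset.filter_eq_empty_iff]
        intro e he heq
        exact hroot e.2 (by rw [← heq]; exact he)
      rw [this]
      simp
    · rw [if_neg (fun h : (a, s).1 = x => hx h.symm)]
      exact h2 x
  · intro v hv
    refine acyclic_insert (r := rel A) h3 hns v (TransGen.mono (fun x y h => ?_) _ _ hv)
    exact rel_insert_iff.mp h

theorem card_le_max (hA : IsInForest W A) : A.card ≤ maxForestCard W := by
  classical
  exact Finset.le_sup (Finset.mem_filter.mpr ⟨Finset.mem_powerset.mpr (Finset.subset_univ A), hA⟩)

theorem reach_of_max (hA : IsInForest W A) (hm : A.card = maxForestCard W)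
    {a s : Fin n} (hroot : ∀ b, (a, b) ∉ A) (hw : 0 < W a s) (hs : a ≠ s) :
    ReflTransGen (rel A) s a := by
  classical
  by_contra hns
  have hF := forest_insert hA hroot hs hw hns
  have hc := card_le_max hF
  rw [Finset.card_insert_of_notMem (hroot s), hm] at hc
  omega

theorem rt_mono (h : A ⊆ B) {x y : Fin n} (hxy : ReflTransGen (rel A) x y) :
    ReflTransGen (rel B) x y :=
  ReflTransGen.mono (fun a b hab => h hab) _ _ hxy

theorem rt_erase_avoid [DecidableEq (Fin n × Fin n)] {u : Fin n} {e : Fin n × Fin n} {x y : Fin n}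
    (hu : e.1 = u) (h : ReflTransGen (rel A) x y) (hx : ¬ ReflTransGen (rel A) x u) :
    ReflTransGen (rel (A.erase e)) x y := by
  refine rt_avoid (fun a b hab ha => ?_) h hx
  exact Finset.mem_erase.mpr ⟨fun hh => ha ((congrArg Prod.fst hh).trans hu), hab⟩

theorem rt_erase_target [DecidableEq (Fin n × Fin n)] {u : Fin n} {e : Fin n × Fin n} {x : Fin n}
    (hu : e.1 = u) (h : ReflTransGen (rel A) x u) :
    ReflTransGen (rel (A.erase e)) x u := by
  refine rt_to_target (fun a b hab ha => ?_) h
  exact Finset.mem_erase.mpr ⟨fun hh => ha ((congrArg Prod.fst hh).trans hu), hab⟩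

theorem rt_insert_back {e : Fin n × Fin n} {x y : Fin n}
    (h : ReflTransGen (rel (insert e A)) x y) :
    ReflTransGen (rel A) x y ∨ ReflTransGen (rel A) x e.1 := by
  have h' : ReflTransGen (fun a b => rel A a b ∨ (a = e.1 ∧ b = e.2)) x y :=
    ReflTransGen.mono (fun a b hab => rel_insert_iff.mp hab) _ _ h
  rcases rt_insert_cases h' with h1 | ⟨h1, _⟩
  · exact .inl h1
  · exact .inr h1

theorem head_step (hA : IsInForest W A) {x y c : Fin n} (h : ReflTransGen (rel A) x y)
    (hxy : x ≠ y) (hc : (x, c) ∈ A) : ReflTransGen (rel A) c y := by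
  rcases h.cases_head with rfl | ⟨d, hd, hdy⟩
  · exact absurd rfl hxy
  · rwa [right_unique hA hc hd]

theorem prev_unique (hA : IsInForest W A) {j : Fin n} (hroot : ∀ b, (j, b) ∉ A)
    {t u u' : Fin n} (h1 : ReflTransGen (rel A) t u) (h2 : (u, j) ∈ A)
    (h1' : ReflTransGen (rel A) t u') (h2' : (u', j) ∈ A) : u = u' := by
  have hu : ∀ ⦃a b c : Fin n⦄, rel A a b → rel A a c → b = c := fun a b c => right_unique hA
  have key : ∀ {v w : Fin n}, (v, j) ∈ A → (w, j) ∈ A →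
      ReflTransGen (rel A) v w → v = w := by
    intro v w hv hw hvw
    rcases hvw.cases_head with rfl | ⟨c, hc, hcv⟩
    · rfl
    · have hcj : c = j := right_unique hA hc hv
      subst hcj
      obtain rfl := root_absorb hroot hcv
      exact absurd hw (hroot _)
  rcases rt_total hu h1 h1' with h | h
  · exact key h2 h2' h
  · exact (key h2' h2 h).symm

noncomputable def nxt (A : Finset (Fin n × Fin n)) (a : Fin n) : Fin n :=
  if h : ∃ t, (a, t) ∈ A then h.choose else a

theorem nxt_mem {a t : Fin n} (h : (a, t) ∈ A) : (a, nxt A a) ∈ A := by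
  rw [nxt, dif_pos ⟨t, h⟩]
  exact Exists.choose_spec (⟨t, h⟩ : ∃ x, (a, x) ∈ A)

theorem nxt_eq (hA : IsInForest W A) {a t : Fin n} (h : (a, t) ∈ A) : nxt A a = t :=
  right_unique hA (nxt_mem h) h

open scoped Classical in
noncomputable def prv (A : Finset (Fin n × Fin n)) (t j : Fin n) : Fin n :=
  if h : ∃ u, ReflTransGen (rel A) t u ∧ (u, j) ∈ A then h.choose else t

open scoped Classical in
theorem prv_spec {t j : Fin n} (h : ∃ u, ReflTransGen (rel A) t u ∧ (u, j) ∈ A) :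
    ReflTransGen (rel A) t (prv A t j) ∧ (prv A t j, j) ∈ A := by
  rw [prv, dif_pos h]
  exact h.choose_spec

theorem prv_eq (hA : IsInForest W A) {j : Fin n} (hroot : ∀ b, (j, b) ∉ A)
    {t u : Fin n} (h1 : ReflTransGen (rel A) t u) (h2 : (u, j) ∈ A) : prv A t j = u := by
  have hs := prv_spec ⟨u, h1, h2⟩
  exact prev_unique hA hroot hs.1 hs.2 h1 h2

theorem weight_swap [DecidableEq (Fin n × Fin n)] {a t b s : Fin n}
    (hmem : (a, t) ∈ A) (hnot : (b, s) ∉ A.erase (a, t)) :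
    W a t * forestWeight W (insert (b, s) (A.erase (a, t))) =
      W b s * forestWeight W A := by
  rw [forestWeight, forestWeight, Finset.prod_insert hnot]
  have := Finset.mul_prod_erase A (fun e => W e.1 e.2) hmem
  push_cast at this ⊢
  rw [← this]
  ring

end ForestAux

namespace ForestAux

open Relation

variable {n : ℕ} {W : Matrix (Fin n) (Fin n) ℝ}

open scoped Classical in
theorem key1_fwd (hdiag : ∀ a, W a a = 0)
    {i j s : Fin n} {A : Finset (Fin n × Fin n)}
    (hF : IsInForest W A) (hcard : A.card = maxForestCard W)
    (hsj : InTreeRootedAt A s j) (hpos : 0 < W i s)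
    (hni : ¬ InTreeRootedAt A i j) :
    (i, nxt A i) ∈ A ∧
    IsInForest W (insert (i, s) (A.erase (i, nxt A i))) ∧
    (insert (i, s) (A.erase (i, nxt A i))).card = maxForestCard W ∧
    InTreeRootedAt (insert (i, s) (A.erase (i, nxt A i))) i j ∧
    0 < W i (nxt A i) ∧
    ¬ InTreeRootedAt (insert (i, s) (A.erase (i, nxt A i))) (nxt A i) j ∧
    W i (nxt A i) * forestWeight W (insert (i, s) (A.erase (i, nxt A i))) =
      W i s * forestWeight W A := by
  obtain ⟨hsrt, hroot0⟩ := hsj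
  have hroot : ∀ b, (j, b) ∉ A := root_iff.mp hroot0
  have hsi_ne : s ≠ i := by
    rintro rfl
    rw [hdiag] at hpos
    exact lt_irrefl 0 hpos
  have hij : i ≠ j := by
    rintro rfl
    exact hni ⟨ReflTransGen.refl, hroot0⟩
  have hnij : ¬ ReflTransGen (rel A) i j := fun h => hni ⟨h, hroot0⟩
  have hns : ¬ ReflTransGen (rel A) s i := by
    intro h
    rcases rt_total (r := rel A) (fun a b c hab hac => right_unique hF hab hac) h hsrt with h1 | h1
    · exact hnij h1
    · exact hij (root_absorb hroot h1).symm
  have hex : ∃ t, (i, t) ∈ A := by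
    by_contra hno
    push_neg at hno
    exact hns (reach_of_max hF hcard hno hpos (Ne.symm hsi_ne))
  have hmem : (i, nxt A i) ∈ A := nxt_mem hex.choose_spec
  set t := nxt A i with ht
  have hti : i ≠ t := (hF.1 _ hmem).1
  have hBsub : A.erase (i, t) ⊆ A := Finset.erase_subset _ _
  have hBF : IsInForest W (A.erase (i, t)) := forest_subset hF hBsub
  have hiB : ∀ b, (i, b) ∉ A.erase (i, t) := by
    intro b hb
    have hbt : b = t := right_unique hF (hBsub hb) hmem
    subst hbt
    exact (Finset.notMem_erase _ _) hb
  have hnsB : ¬ ReflTransGen (rel (A.erase (i, t))) s i := fun h => hns (rt_mono hBsub h)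
  have hA'F : IsInForest W (insert (i, s) (A.erase (i, t))) :=
    forest_insert hBF hiB (Ne.symm hsi_ne) hpos hnsB
  have hcardB : (insert (i, s) (A.erase (i, t))).card = maxForestCard W := by
    rw [Finset.card_insert_of_notMem (hiB s), Finset.card_erase_of_mem hmem]
    have h1 : 1 ≤ A.card := Finset.card_pos.mpr ⟨_, hmem⟩
    omega
  have hjroot' : ∀ b, (j, b) ∉ insert (i, s) (A.erase (i, t)) := by
    intro b hb
    rcases Finset.mem_insert.mp hb with h | h
    · exact hij (congrArg Prod.fst h).symm
    · exact hroot b (hBsub h)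
  have hs_rt' : ReflTransGen (rel (insert (i, s) (A.erase (i, t)))) s j :=
    rt_mono (Finset.subset_insert _ _) (rt_erase_avoid rfl hsrt hns)
  have hitree' : InTreeRootedAt (insert (i, s) (A.erase (i, t))) i j :=
    ⟨ReflTransGen.head (Finset.mem_insert_self _ _) hs_rt', root_iff.mpr hjroot'⟩
  have hnt' : ¬ InTreeRootedAt (insert (i, s) (A.erase (i, t))) t j := by
    rintro ⟨hrt, -⟩
    rcases rt_insert_back (A := A.erase (i, t)) (e := (i, s)) hrt with h1 | h1
    · exact hnij (ReflTransGen.head hmem (rt_mono hBsub h1))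
    · exact no_rt_back hF hmem (rt_mono hBsub h1)
  exact ⟨hmem, hA'F, hcardB, hitree', (hF.1 _ hmem).2, hnt', weight_swap hmem (hiB s)⟩

open scoped Classical in
theorem key1_bwd (hdiag : ∀ a, W a a = 0)
    {i j t : Fin n} {A' : Finset (Fin n × Fin n)}
    (hF' : IsInForest W A') (hcard' : A'.card = maxForestCard W)
    (hit : InTreeRootedAt A' i j) (hpos : 0 < W i t)
    (hnt : ¬ InTreeRootedAt A' t j) :
    (i, nxt A' i) ∈ A' ∧ (i, t) ∉ A' ∧
    IsInForest W (insert (i, t) (A'.erase (i, nxt A' i))) ∧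
    (insert (i, t) (A'.erase (i, nxt A' i))).card = maxForestCard W ∧
    InTreeRootedAt (insert (i, t) (A'.erase (i, nxt A' i))) (nxt A' i) j ∧
    0 < W i (nxt A' i) ∧
    ¬ InTreeRootedAt (insert (i, t) (A'.erase (i, nxt A' i))) i j := by
  obtain ⟨hirt, hroot0'⟩ := hit
  have hroot' : ∀ b, (j, b) ∉ A' := root_iff.mp hroot0'
  have hti_ne : t ≠ i := by
    rintro rfl
    rw [hdiag] at hpos
    exact lt_irrefl 0 hpos
  have htj : t ≠ j := by
    rintro rfl
    exact hnt ⟨ReflTransGen.refl, hroot0'⟩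
  have hntj : ¬ ReflTransGen (rel A') t j := fun h => hnt ⟨h, hroot0'⟩
  have hij : i ≠ j := by
    rintro rfl
    exact hntj (reach_of_max hF' hcard' hroot' hpos (Ne.symm htj))
  have hex : ∃ c, (i, c) ∈ A' := by
    rcases hirt.cases_head with h | ⟨c, hc, -⟩
    · exact absurd h hij
    · exact ⟨c, hc⟩
  have hmemN : (i, nxt A' i) ∈ A' := nxt_mem hex.choose_spec
  set N := nxt A' i with hN
  have hNi : i ≠ N := (hF'.1 _ hmemN).1
  have hsrt : ReflTransGen (rel A') N j := head_step hF' hirt hij hmemN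
  have h2 : (i, t) ∉ A' := by
    intro h
    have : N = t := right_unique hF' hmemN h
    exact hntj (this ▸ hsrt)
  have hnNi : ¬ ReflTransGen (rel A') N i := fun h => no_rt_back hF' hmemN h
  have hnti' : ¬ ReflTransGen (rel A') t i := fun h => hntj (h.trans hirt)
  have hBsub : A'.erase (i, N) ⊆ A' := Finset.erase_subset _ _
  have hB'F : IsInForest W (A'.erase (i, N)) := forest_subset hF' hBsub
  have hiB' : ∀ b, (i, b) ∉ A'.erase (i, N) := by
    intro b hb
    have hbN : b = N := right_unique hF' (hBsub hb) hmemN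
    subst hbN
    exact (Finset.notMem_erase _ _) hb
  have hntB' : ¬ ReflTransGen (rel (A'.erase (i, N))) t i := fun h => hnti' (rt_mono hBsub h)
  have hA''F : IsInForest W (insert (i, t) (A'.erase (i, N))) :=
    forest_insert hB'F hiB' (Ne.symm hti_ne) hpos hntB'
  have hcard'' : (insert (i, t) (A'.erase (i, N))).card = maxForestCard W := by
    rw [Finset.card_insert_of_notMem (hiB' t), Finset.card_erase_of_mem hmemN]
    have h1 : 1 ≤ A'.card := Finset.card_pos.mpr ⟨_, hmemN⟩
    omega
  have hjroot'' : ∀ b, (j, b) ∉ insert (i, t) (A'.erase (i, N)) := by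
    intro b hb
    rcases Finset.mem_insert.mp hb with h | h
    · exact hij (congrArg Prod.fst h).symm
    · exact hroot' b (hBsub h)
  have hNtree : InTreeRootedAt (insert (i, t) (A'.erase (i, N))) N j :=
    ⟨rt_mono (Finset.subset_insert _ _) (rt_erase_avoid rfl hsrt hnNi),
      root_iff.mpr hjroot''⟩
  have hnoti : ¬ InTreeRootedAt (insert (i, t) (A'.erase (i, N))) i j := by
    rintro ⟨hrt, -⟩
    have hstep : ReflTransGen (rel (insert (i, t) (A'.erase (i, N)))) t j :=
      head_step hA''F hrt hij (Finset.mem_insert_self _ _)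
    rcases rt_insert_back (A := A'.erase (i, N)) (e := (i, t)) hstep with h1 | h1
    · exact hntj (rt_mono hBsub h1)
    · exact hnti' (rt_mono hBsub h1)
  exact ⟨hmemN, h2, hA''F, hcard'', hNtree, (hF'.1 _ hmemN).2, hnoti⟩

end ForestAux

namespace ForestAux

open Relation

variable {n : ℕ} {W : Matrix (Fin n) (Fin n) ℝ}

open scoped Classical in
theorem key2_fwd (hdiag : ∀ a, W a a = 0)
    {i j t : Fin n} {A : Finset (Fin n × Fin n)}
    (hF : IsInForest W A) (hcard : A.card = maxForestCard W)
    (hij : InTreeRootedAt A i j) (hpos : 0 < W j t) :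
    (prv A t j, j) ∈ A ∧ (j, t) ∉ A ∧
    IsInForest W (insert (j, t) (A.erase (prv A t j, j))) ∧
    (insert (j, t) (A.erase (prv A t j, j))).card = maxForestCard W ∧
    InTreeRootedAt (insert (j, t) (A.erase (prv A t j, j))) i (prv A t j) ∧
    0 < W (prv A t j) j ∧
    W (prv A t j) j * forestWeight W (insert (j, t) (A.erase (prv A t j, j))) =
      W j t * forestWeight W A := by
  obtain ⟨hirt, hroot0⟩ := hij
  have hroot : ∀ b, (j, b) ∉ A := root_iff.mp hroot0
  have htj : t ≠ j := by
    rintro rfl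
    rw [hdiag] at hpos
    exact lt_irrefl 0 hpos
  have htjrt : ReflTransGen (rel A) t j := reach_of_max hF hcard hroot hpos (Ne.symm htj)
  have hex : ∃ u, ReflTransGen (rel A) t u ∧ (u, j) ∈ A := by
    rcases htjrt.cases_tail with h | ⟨c, hc1, hc2⟩
    · exact absurd h.symm htj
    · exact ⟨c, hc1, hc2⟩
  obtain ⟨hu1, hu2⟩ := prv_spec hex
  set u := prv A t j with hu
  have huj : u ≠ j := (hF.1 _ hu2).1
  have hjtA : (j, t) ∉ A := hroot t
  have hBsub : A.erase (u, j) ⊆ A := Finset.erase_subset _ _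
  have hBF : IsInForest W (A.erase (u, j)) := forest_subset hF hBsub
  have hjB : ∀ b, (j, b) ∉ A.erase (u, j) := fun b hb => hroot b (hBsub hb)
  have hntB : ¬ ReflTransGen (rel (A.erase (u, j))) t j := by
    intro h
    rcases h.cases_tail with h' | ⟨c, hc1, hc2⟩
    · exact htj h'.symm
    · have : c = u := prev_unique hF hroot (rt_mono hBsub hc1) (hBsub hc2) hu1 hu2
      subst this
      exact (Finset.notMem_erase _ _) hc2
  have hA'F : IsInForest W (insert (j, t) (A.erase (u, j))) :=
    forest_insert hBF hjB (Ne.symm htj) hpos hntB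
  have hcard' : (insert (j, t) (A.erase (u, j))).card = maxForestCard W := by
    rw [Finset.card_insert_of_notMem (hjB t), Finset.card_erase_of_mem hu2]
    have h1 : 1 ≤ A.card := Finset.card_pos.mpr ⟨_, hu2⟩
    omega
  have huroot' : ∀ b, (u, b) ∉ insert (j, t) (A.erase (u, j)) := by
    intro b hb
    rcases Finset.mem_insert.mp hb with h | h
    · exact huj (congrArg Prod.fst h)
    · have hbj : b = j := right_unique hF (hBsub h) hu2
      subst hbj
      exact (Finset.notMem_erase _ _) h
  have hiu : ReflTransGen (rel (insert (j, t) (A.erase (u, j)))) i u := by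
    by_cases hiu' : ReflTransGen (rel A) i u
    · exact rt_mono (Finset.subset_insert _ _) (rt_erase_target rfl hiu')
    · have hij' : ReflTransGen (rel (insert (j, t) (A.erase (u, j)))) i j :=
        rt_mono (Finset.subset_insert _ _) (rt_erase_avoid rfl hirt hiu')
      have htu : ReflTransGen (rel (insert (j, t) (A.erase (u, j)))) t u :=
        rt_mono (Finset.subset_insert _ _) (rt_erase_target rfl hu1)
      exact hij'.trans (ReflTransGen.head (Finset.mem_insert_self _ _) htu)
  exact ⟨hu2, hjtA, hA'F, hcard', ⟨hiu, root_iff.mpr huroot'⟩, (hF.1 _ hu2).2,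
    weight_swap hu2 (fun h => hjtA (hBsub h))⟩

open scoped Classical in
theorem key2_bwd (hdiag : ∀ a, W a a = 0)
    {i j k : Fin n} {A' : Finset (Fin n × Fin n)}
    (hF' : IsInForest W A') (hcard' : A'.card = maxForestCard W)
    (hik : InTreeRootedAt A' i k) (hpos : 0 < W k j) :
    (j, nxt A' j) ∈ A' ∧ (k, j) ∉ A' ∧
    IsInForest W (insert (k, j) (A'.erase (j, nxt A' j))) ∧
    (insert (k, j) (A'.erase (j, nxt A' j))).card = maxForestCard W ∧
    InTreeRootedAt (insert (k, j) (A'.erase (j, nxt A' j))) i j ∧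
    0 < W j (nxt A' j) ∧
    prv (insert (k, j) (A'.erase (j, nxt A' j))) (nxt A' j) j = k := by
  obtain ⟨hik', hkroot0⟩ := hik
  have hkroot : ∀ b, (k, b) ∉ A' := root_iff.mp hkroot0
  have hkj : k ≠ j := by
    rintro rfl
    rw [hdiag] at hpos
    exact lt_irrefl 0 hpos
  have hjk : ReflTransGen (rel A') j k := reach_of_max hF' hcard' hkroot hpos hkj
  have hjne : j ≠ k := fun h => hkj h.symm
  have hex : ∃ c, (j, c) ∈ A' := by
    rcases hjk.cases_head with h | ⟨c, hc, -⟩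
    · exact absurd h hjne
    · exact ⟨c, hc⟩
  have hmemt : (j, nxt A' j) ∈ A' := nxt_mem hex.choose_spec
  set t' := nxt A' j with ht'
  have hjt' : j ≠ t' := (hF'.1 _ hmemt).1
  have ht'k : ReflTransGen (rel A') t' k := head_step hF' hjk hjne hmemt
  have hkjA : (k, j) ∉ A' := hkroot j
  have hnt'j : ¬ ReflTransGen (rel A') t' j := fun h => no_rt_back hF' hmemt h
  have hBsub : A'.erase (j, t') ⊆ A' := Finset.erase_subset _ _
  have hB'F : IsInForest W (A'.erase (j, t')) := forest_subset hF' hBsub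
  have hjB' : ∀ b, (j, b) ∉ A'.erase (j, t') := by
    intro b hb
    have hbt : b = t' := right_unique hF' (hBsub hb) hmemt
    subst hbt
    exact (Finset.notMem_erase _ _) hb
  have hkB' : ∀ b, (k, b) ∉ A'.erase (j, t') := fun b hb => hkroot b (hBsub hb)
  have hnjB'k : ¬ ReflTransGen (rel (A'.erase (j, t'))) j k := fun h =>
    hjne (root_absorb hjB' h)
  have hA''F : IsInForest W (insert (k, j) (A'.erase (j, t'))) :=
    forest_insert hB'F hkB' hkj hpos hnjB'k
  have hcard'' : (insert (k, j) (A'.erase (j, t'))).card = maxForestCard W := by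
    rw [Finset.card_insert_of_notMem (hkB' j), Finset.card_erase_of_mem hmemt]
    have h1 : 1 ≤ A'.card := Finset.card_pos.mpr ⟨_, hmemt⟩
    omega
  have hjroot'' : ∀ b, (j, b) ∉ insert (k, j) (A'.erase (j, t')) := by
    intro b hb
    rcases Finset.mem_insert.mp hb with h | h
    · exact hjne (congrArg Prod.fst h)
    · exact hjB' b h
  have hij'' : ReflTransGen (rel (insert (k, j) (A'.erase (j, t')))) i j := by
    by_cases hij' : ReflTransGen (rel A') i j
    · exact rt_mono (Finset.subset_insert _ _) (rt_erase_target rfl hij')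
    · have h1 : ReflTransGen (rel (insert (k, j) (A'.erase (j, t')))) i k :=
        rt_mono (Finset.subset_insert _ _) (rt_erase_avoid rfl hik' hij')
      exact h1.tail (Finset.mem_insert_self _ _)
  have ht'k'' : ReflTransGen (rel (insert (k, j) (A'.erase (j, t')))) t' k :=
    rt_mono (Finset.subset_insert _ _) (rt_erase_avoid rfl ht'k hnt'j)
  have hprv : prv (insert (k, j) (A'.erase (j, t'))) t' j = k :=
    prv_eq hA''F hjroot'' ht'k'' (Finset.mem_insert_self _ _)
  exact ⟨hmemt, hkjA, hA''F, hcard'', ⟨hij'', root_iff.mpr hjroot''⟩, (hF'.1 _ hmemt).2, hprv⟩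

end ForestAux

namespace ForestAux

open Relation

variable {n : ℕ} {W : Matrix (Fin n) (Fin n) ℝ}

open scoped Classical in
theorem key1 (hdiag : ∀ a, W a a = 0) (i j : Fin n) :
    ∑ p ∈ (Finset.univ : Finset (Fin n × Finset (Fin n × Fin n))).filter
        (fun p => ((IsInForest W p.2 ∧ p.2.card = maxForestCard W ∧ InTreeRootedAt p.2 p.1 j)
          ∧ 0 < W i p.1) ∧ ¬ InTreeRootedAt p.2 i j),
      W i p.1 * forestWeight W p.2
    = ∑ p ∈ (Finset.univ : Finset (Fin n × Finset (Fin n × Fin n))).filter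
        (fun p => ((IsInForest W p.2 ∧ p.2.card = maxForestCard W ∧ InTreeRootedAt p.2 i j)
          ∧ 0 < W i p.1) ∧ ¬ InTreeRootedAt p.2 p.1 j),
      W i p.1 * forestWeight W p.2 := by
  refine Finset.sum_nbij'
    (fun p => (nxt p.2 i, insert (i, p.1) (p.2.erase (i, nxt p.2 i))))
    (fun p => (nxt p.2 i, insert (i, p.1) (p.2.erase (i, nxt p.2 i)))) ?_ ?_ ?_ ?_ ?_
  · rintro ⟨s, A⟩ hp
    simp only [Finset.mem_filter, Finset.mem_univ, true_and] at hp ⊢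
    obtain ⟨⟨⟨hF, hcard, hsj⟩, hpos⟩, hni⟩ := hp
    obtain ⟨_, hA'F, hcardB, hitree, hposN, hnt, -⟩ := key1_fwd hdiag hF hcard hsj hpos hni
    exact ⟨⟨⟨hA'F, hcardB, hitree⟩, hposN⟩, hnt⟩
  · rintro ⟨t, A'⟩ hp
    simp only [Finset.mem_filter, Finset.mem_univ, true_and] at hp ⊢
    obtain ⟨⟨⟨hF', hcard', hit⟩, hpos⟩, hnt⟩ := hp
    obtain ⟨_, _, hA''F, hcard'', hNtree, hposN, hnoti⟩ :=
      key1_bwd hdiag hF' hcard' hit hpos hnt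
    exact ⟨⟨⟨hA''F, hcard'', hNtree⟩, hposN⟩, hnoti⟩
  · rintro ⟨s, A⟩ hp
    simp only [Finset.mem_filter, Finset.mem_univ, true_and] at hp
    obtain ⟨⟨⟨hF, hcard, hsj⟩, hpos⟩, hni⟩ := hp
    obtain ⟨hmem, hA'F, -, -, -, -, -⟩ := key1_fwd hdiag hF hcard hsj hpos hni
    have h1 : nxt (insert (i, s) (A.erase (i, nxt A i))) i = s :=
      nxt_eq hA'F (Finset.mem_insert_self _ _)
    simp only [h1]
    have h2 : (i, s) ∉ A.erase (i, nxt A i) := by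
      intro h
      have heq := right_unique hF (Finset.erase_subset _ _ h) hmem
      rw [heq] at h
      exact (Finset.notMem_erase _ _) h
    rw [Finset.erase_insert h2, Finset.insert_erase hmem]
  · rintro ⟨t, A'⟩ hp
    simp only [Finset.mem_filter, Finset.mem_univ, true_and] at hp
    obtain ⟨⟨⟨hF', hcard', hit⟩, hpos⟩, hnt⟩ := hp
    obtain ⟨hmemN, h2, hA''F, -, -, -, -⟩ := key1_bwd hdiag hF' hcard' hit hpos hnt
    have h1 : nxt (insert (i, t) (A'.erase (i, nxt A' i))) i = t :=
      nxt_eq hA''F (Finset.mem_insert_self _ _)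
    simp only [h1]
    have h3 : (i, t) ∉ A'.erase (i, nxt A' i) := fun h => h2 (Finset.erase_subset _ _ h)
    rw [Finset.erase_insert h3, Finset.insert_erase hmemN]
  · rintro ⟨s, A⟩ hp
    simp only [Finset.mem_filter, Finset.mem_univ, true_and] at hp
    obtain ⟨⟨⟨hF, hcard, hsj⟩, hpos⟩, hni⟩ := hp
    obtain ⟨-, -, -, -, -, -, hw⟩ := key1_fwd hdiag hF hcard hsj hpos hni
    exact hw.symm

open scoped Classical in
theorem key2 (hdiag : ∀ a, W a a = 0) (i j : Fin n) :
    ∑ p ∈ (Finset.univ : Finset (Fin n × Finset (Fin n × Fin n))).filter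
        (fun p => (IsInForest W p.2 ∧ p.2.card = maxForestCard W ∧ InTreeRootedAt p.2 i j)
          ∧ 0 < W j p.1),
      forestWeight W p.2 * W j p.1
    = ∑ p ∈ (Finset.univ : Finset (Fin n × Finset (Fin n × Fin n))).filter
        (fun p => (IsInForest W p.2 ∧ p.2.card = maxForestCard W ∧ InTreeRootedAt p.2 i p.1)
          ∧ 0 < W p.1 j),
      forestWeight W p.2 * W p.1 j := by
  refine Finset.sum_nbij'
    (fun q => (prv q.2 q.1 j, insert (j, q.1) (q.2.erase (prv q.2 q.1 j, j))))
    (fun p => (nxt p.2 j, insert (p.1, j) (p.2.erase (j, nxt p.2 j)))) ?_ ?_ ?_ ?_ ?_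
  · rintro ⟨t, A⟩ hp
    simp only [Finset.mem_filter, Finset.mem_univ, true_and] at hp ⊢
    obtain ⟨⟨hF, hcard, hij⟩, hpos⟩ := hp
    obtain ⟨_, _, hA'F, hcard', htree, hposu, -⟩ := key2_fwd hdiag hF hcard hij hpos
    exact ⟨⟨hA'F, hcard', htree⟩, hposu⟩
  · rintro ⟨k, A'⟩ hp
    simp only [Finset.mem_filter, Finset.mem_univ, true_and] at hp ⊢
    obtain ⟨⟨hF', hcard', hik⟩, hpos⟩ := hp
    obtain ⟨_, _, hA''F, hcard'', htree, hpost, -⟩ := key2_bwd hdiag hF' hcard' hik hpos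
    exact ⟨⟨hA''F, hcard'', htree⟩, hpost⟩
  · rintro ⟨t, A⟩ hp
    simp only [Finset.mem_filter, Finset.mem_univ, true_and] at hp
    obtain ⟨⟨hF, hcard, hij⟩, hpos⟩ := hp
    obtain ⟨hu2, hjtA, hA'F, -, -, -, -⟩ := key2_fwd hdiag hF hcard hij hpos
    have h1 : nxt (insert (j, t) (A.erase (prv A t j, j))) j = t :=
      nxt_eq hA'F (Finset.mem_insert_self _ _)
    simp only [h1]
    have h2 : (j, t) ∉ A.erase (prv A t j, j) := fun h => hjtA (Finset.erase_subset _ _ h)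
    rw [Finset.erase_insert h2, Finset.insert_erase hu2]
  · rintro ⟨k, A'⟩ hp
    simp only [Finset.mem_filter, Finset.mem_univ, true_and] at hp
    obtain ⟨⟨hF', hcard', hik⟩, hpos⟩ := hp
    obtain ⟨hmemt, hkjA, hA''F, -, -, -, hprv⟩ := key2_bwd hdiag hF' hcard' hik hpos
    simp only [hprv]
    have h2 : (k, j) ∉ A'.erase (j, nxt A' j) := fun h => hkjA (Finset.erase_subset _ _ h)
    rw [Finset.erase_insert h2, Finset.insert_erase hmemt]
  · rintro ⟨t, A⟩ hp
    simp only [Finset.mem_filter, Finset.mem_univ, true_and] at hp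
    obtain ⟨⟨hF, hcard, hij⟩, hpos⟩ := hp
    obtain ⟨-, -, -, -, -, -, hw⟩ := key2_fwd hdiag hF hcard hij hpos
    calc forestWeight W A * W j t = W j t * forestWeight W A := mul_comm _ _
    _ = W (prv A t j) j * forestWeight W (insert (j, t) (A.erase (prv A t j, j))) := hw.symm
    _ = forestWeight W (insert (j, t) (A.erase (prv A t j, j))) * W (prv A t j) j := mul_comm _ _

end ForestAux

namespace ForestAux

variable {n : ℕ} {W : Matrix (Fin n) (Fin n) ℝ}

theorem prod_sum_eq (g : Fin n × Finset (Fin n × Fin n) → ℝ)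
    (c : Fin n → Finset (Fin n × Fin n) → Prop)
    [∀ k, DecidablePred (fun A => c k A)]
    [DecidablePred (fun p : Fin n × Finset (Fin n × Fin n) => c p.1 p.2)] :
    ∑ k : Fin n, ∑ A ∈ Finset.univ.powerset.filter (fun A => c k A), g (k, A) =
    ∑ p ∈ Finset.univ.filter (fun p : Fin n × Finset (Fin n × Fin n) => c p.1 p.2), g p := by
  have h : ∀ k : Fin n, ∑ A ∈ Finset.univ.powerset.filter (fun A => c k A), g (k, A)
      = ∑ A : Finset (Fin n × Fin n), if c k A then g (k, A) else 0 := by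
    intro k
    rw [Finset.powerset_univ, Finset.sum_filter]
  simp only [h]
  rw [Finset.sum_filter, Fintype.sum_prod_type]
  refine Finset.sum_congr rfl fun k _ => Finset.sum_congr rfl fun A _ => ?_
  by_cases hc : c k A
  · exact (if_pos hc).trans (if_pos hc).symm
  · exact (if_neg hc).trans (if_neg hc).symm

theorem sum_filter_pos {γ : Type*} [Fintype γ] (c pos : γ → Prop)
    [DecidablePred c] [DecidablePred (fun p => c p ∧ pos p)]
    (g : γ → ℝ) (hz : ∀ p, c p → ¬ pos p → g p = 0) :
    ∑ p ∈ Finset.univ.filter c, g p =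
      ∑ p ∈ Finset.univ.filter (fun p => c p ∧ pos p), g p := by
  refine (Finset.sum_subset (Finset.monotone_filter_right _ (fun x _ h => h.1)) ?_).symm
  intro x hx hnx
  have hcx : c x := (Finset.mem_filter.mp hx).2
  have hpx : ¬ pos x := fun hp => hnx (Finset.mem_filter.mpr ⟨Finset.mem_univ _, hcx, hp⟩)
  exact hz x hcx hpx

theorem sum_filter_split {γ : Type*} [Fintype γ] (c d pos : γ → Prop)
    [DecidablePred c] [DecidablePred d] [DecidablePred (fun p => c p ∧ pos p)]
    [DecidablePred (fun p => (c p ∧ pos p) ∧ ¬ d p)]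
    [DecidablePred (fun p => (c p ∧ pos p) ∧ d p)]
    (g : γ → ℝ) (hz : ∀ p, c p → ¬ pos p → g p = 0) :
    ∑ p ∈ Finset.univ.filter c, g p =
      ∑ p ∈ Finset.univ.filter (fun p => (c p ∧ pos p) ∧ ¬ d p), g p +
      ∑ p ∈ Finset.univ.filter (fun p => (c p ∧ pos p) ∧ d p), g p := by
  rw [sum_filter_pos c pos g hz]
  have h1 : Finset.univ.filter (fun p => (c p ∧ pos p) ∧ ¬ d p)
      = (Finset.univ.filter (fun p => c p ∧ pos p)).filter (fun p => ¬ d p) := by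
    ext x
    simp only [Finset.mem_filter, Finset.mem_univ, true_and]
  have h2 : Finset.univ.filter (fun p => (c p ∧ pos p) ∧ d p)
      = (Finset.univ.filter (fun p => c p ∧ pos p)).filter d := by
    ext x
    simp only [Finset.mem_filter, Finset.mem_univ, true_and]
  rw [h1, h2]
  exact ((add_comm _ _).trans (Finset.sum_filter_add_sum_filter_not _ _ _)).symm

open scoped Classical in
theorem main1 (hW : ∀ a b, 0 ≤ W a b) (hdiag : ∀ a, W a a = 0) (i j : Fin n) :
    ∑ k, W i k * forestMatrix W (maxForestCard W) k j
      = (∑ k, W i k) * forestMatrix W (maxForestCard W) i j := by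
  simp only [forestMatrix, Matrix.of_apply]
  rw [Finset.sum_mul]
  have hz : ∀ p : Fin n × Finset (Fin n × Fin n), ¬ 0 < W i p.1 →
      W i p.1 * forestWeight W p.2 = 0 := by
    intro p hp
    rw [le_antisymm (not_lt.mp hp) (hW i p.1), zero_mul]
  have e1 : ∑ k, W i k * ∑ A ∈ Finset.univ.powerset.filter
        (fun A => IsInForest W A ∧ A.card = maxForestCard W ∧ InTreeRootedAt A k j),
        forestWeight W A
      = ∑ p ∈ Finset.univ.filter (fun p : Fin n × Finset (Fin n × Fin n) =>
          IsInForest W p.2 ∧ p.2.card = maxForestCard W ∧ InTreeRootedAt p.2 p.1 j),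
        W i p.1 * forestWeight W p.2 :=
    Eq.trans (Finset.sum_congr rfl fun k _ => Finset.mul_sum _ _ _)
      (prod_sum_eq (fun p => W i p.1 * forestWeight W p.2)
        (fun k A => IsInForest W A ∧ A.card = maxForestCard W ∧ InTreeRootedAt A k j))
  have e2 : ∑ k, W i k * ∑ A ∈ Finset.univ.powerset.filter
        (fun A => IsInForest W A ∧ A.card = maxForestCard W ∧ InTreeRootedAt A i j),
        forestWeight W A
      = ∑ p ∈ Finset.univ.filter (fun p : Fin n × Finset (Fin n × Fin n) =>
          IsInForest W p.2 ∧ p.2.card = maxForestCard W ∧ InTreeRootedAt p.2 i j),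
        W i p.1 * forestWeight W p.2 :=
    Eq.trans (Finset.sum_congr rfl fun k _ => Finset.mul_sum _ _ _)
      (prod_sum_eq (fun p => W i p.1 * forestWeight W p.2)
        (fun k A => IsInForest W A ∧ A.card = maxForestCard W ∧ InTreeRootedAt A i j))
  rw [e1, e2]
  rw [sum_filter_split
      (fun p : Fin n × Finset (Fin n × Fin n) =>
        IsInForest W p.2 ∧ p.2.card = maxForestCard W ∧ InTreeRootedAt p.2 p.1 j)
      (fun p => InTreeRootedAt p.2 i j)
      (fun p => 0 < W i p.1) (fun p => W i p.1 * forestWeight W p.2) (fun p _ hp => hz p hp),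
    sum_filter_split
      (fun p : Fin n × Finset (Fin n × Fin n) =>
        IsInForest W p.2 ∧ p.2.card = maxForestCard W ∧ InTreeRootedAt p.2 i j)
      (fun p => InTreeRootedAt p.2 p.1 j)
      (fun p => 0 < W i p.1) (fun p => W i p.1 * forestWeight W p.2) (fun p _ hp => hz p hp)]
  congr 1
  · exact key1 hdiag i j
  · refine Finset.sum_congr (Finset.filter_congr fun p _ => ?_) fun _ _ => rfl
    tauto

open scoped Classical in
theorem main2 (hW : ∀ a b, 0 ≤ W a b) (hdiag : ∀ a, W a a = 0) (i j : Fin n) :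
    ∑ k, forestMatrix W (maxForestCard W) i k * W k j
      = forestMatrix W (maxForestCard W) i j * (∑ t, W j t) := by
  simp only [forestMatrix, Matrix.of_apply]
  rw [Finset.mul_sum]
  have e1 : ∑ k, (∑ A ∈ Finset.univ.powerset.filter
        (fun A => IsInForest W A ∧ A.card = maxForestCard W ∧ InTreeRootedAt A i k),
        forestWeight W A) * W k j
      = ∑ p ∈ Finset.univ.filter (fun p : Fin n × Finset (Fin n × Fin n) =>
          IsInForest W p.2 ∧ p.2.card = maxForestCard W ∧ InTreeRootedAt p.2 i p.1),
        forestWeight W p.2 * W p.1 j :=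
    Eq.trans (Finset.sum_congr rfl fun k _ => Finset.sum_mul _ _ _)
      (prod_sum_eq (fun p => forestWeight W p.2 * W p.1 j)
        (fun k A => IsInForest W A ∧ A.card = maxForestCard W ∧ InTreeRootedAt A i k))
  have e2 : ∑ t, (∑ A ∈ Finset.univ.powerset.filter
        (fun A => IsInForest W A ∧ A.card = maxForestCard W ∧ InTreeRootedAt A i j),
        forestWeight W A) * W j t
      = ∑ p ∈ Finset.univ.filter (fun p : Fin n × Finset (Fin n × Fin n) =>
          IsInForest W p.2 ∧ p.2.card = maxForestCard W ∧ InTreeRootedAt p.2 i j),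
        forestWeight W p.2 * W j p.1 :=
    Eq.trans (Finset.sum_congr rfl fun k _ => Finset.sum_mul _ _ _)
      (prod_sum_eq (fun p => forestWeight W p.2 * W j p.1)
        (fun k A => IsInForest W A ∧ A.card = maxForestCard W ∧ InTreeRootedAt A i j))
  rw [e1, e2]
  rw [sum_filter_pos
      (fun p : Fin n × Finset (Fin n × Fin n) =>
        IsInForest W p.2 ∧ p.2.card = maxForestCard W ∧ InTreeRootedAt p.2 i p.1)
      (fun p => 0 < W p.1 j) (fun p => forestWeight W p.2 * W p.1 j)
      (fun p _ hp => by
        show forestWeight W p.2 * W p.1 j = 0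
        rw [le_antisymm (not_lt.mp hp) (hW p.1 j), mul_zero]),
    sum_filter_pos
      (fun p : Fin n × Finset (Fin n × Fin n) =>
        IsInForest W p.2 ∧ p.2.card = maxForestCard W ∧ InTreeRootedAt p.2 i j)
      (fun p => 0 < W j p.1) (fun p => forestWeight W p.2 * W j p.1)
      (fun p _ hp => by
        show forestWeight W p.2 * W j p.1 = 0
        rw [le_antisymm (not_lt.mp hp) (hW j p.1), mul_zero])]
  exact (key2 hdiag i j).symm

end ForestAux

namespace ForestAux

variable {n : ℕ} {W : Matrix (Fin n) (Fin n) ℝ}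

theorem LQ_zero (hW : ∀ a b, 0 ≤ W a b) (hdiag : ∀ a, W a a = 0) :
    lap W * forestMatrix W (maxForestCard W) = 0 := by
  ext i j
  rw [lap, Matrix.sub_mul, Matrix.sub_apply, Matrix.zero_apply, sub_eq_zero,
    Matrix.diagonal_mul, Matrix.mul_apply]
  exact (main1 hW hdiag i j).symm

theorem QL_zero (hW : ∀ a b, 0 ≤ W a b) (hdiag : ∀ a, W a a = 0) :
    forestMatrix W (maxForestCard W) * lap W = 0 := by
  ext i j
  rw [lap, Matrix.mul_sub, Matrix.sub_apply, Matrix.zero_apply, sub_eq_zero,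
    Matrix.mul_diagonal, Matrix.mul_apply]
  exact (main2 hW hdiag i j).symm

end ForestAux


/-- The normalized matrix of maximum in-forests annihilates the Laplacian on
both sides: `L J̃ = J̃ L = 0`. -/
theorem lap_mul_Jtilde {n : ℕ} (W : Matrix (Fin n) (Fin n) ℝ)
    (hn : 1 < n) (hW : ∀ i j, 0 ≤ W i j) (hdiag : ∀ i, W i i = 0) :
    lap W * Jtilde W = 0 ∧ Jtilde W * lap W = 0 := by
  constructor
  · rw [Jtilde, Matrix.mul_smul, ForestAux.LQ_zero hW hdiag, smul_zero]
  · rw [Jtilde, Matrix.smul_mul, ForestAux.QL_zero hW hdiag, smul_zero]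
end

section
/- The normalized matrix of maximum in-forests is idempotent: J̃² = J̃, and moreover J̃ J_k = J_k J̃ = J̃ for every k = 0, …, n−d. -/
open Matrix Finset Polynomial

namespace ForestAux


variable {n : ℕ}

/-- reachability along arcs of `A` -/
def reach (A : Finset (Fin n × Fin n)) : Fin n → Fin n → Prop :=
  Relation.ReflTransGen (fun a b => (a, b) ∈ A)

lemma reach_refl (A : Finset (Fin n × Fin n)) (a : Fin n) : reach A a a :=
  Relation.ReflTransGen.refl

lemma reach_mono {A B : Finset (Fin n × Fin n)} (h : A ⊆ B) {x y : Fin n}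
    (hr : reach A x y) : reach B x y :=
  Relation.ReflTransGen.mono (fun a b hab => h hab) _ _ hr

lemma reach_trans {A : Finset (Fin n × Fin n)} {x y z : Fin n}
    (h1 : reach A x y) (h2 : reach A y z) : reach A x z := h1.trans h2

lemma reach_single {A : Finset (Fin n × Fin n)} {x y : Fin n} (h : (x,y) ∈ A) :
    reach A x y := Relation.ReflTransGen.single h

variable {W : Matrix (Fin n) (Fin n) ℝ} {F : Finset (Fin n × Fin n)}

lemma forest_func (hF : IsInForest W F) {a b c : Fin n}
    (h1 : (a, b) ∈ F) (h2 : (a, c) ∈ F) : b = c := by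
  classical
  have hcard := hF.2.1 a
  have hb : (a,b) ∈ F.filter (fun e => e.1 = a) := by simp [h1]
  have hc : (a,c) ∈ F.filter (fun e => e.1 = a) := by simp [h2]
  have := Finset.card_le_one.mp hcard _ hb _ hc
  exact congrArg Prod.snd this

lemma subforest (hF : IsInForest W F) {E : Finset (Fin n × Fin n)} (h : E ⊆ F) :
    IsInForest W E := by
  refine ⟨fun e he => hF.1 e (h he), fun i => le_trans (Finset.card_le_card ?_) (hF.2.1 i),
    fun i hi => hF.2.2 i (Relation.TransGen.mono (fun a b hab => h hab) _ _ hi)⟩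
  exact Finset.filter_subset_filter _ h

lemma no_cycle (hF : IsInForest W F) {a b : Fin n} (hab : (a,b) ∈ F)
    (h : reach F b a) : False :=
  hF.2.2 a (Relation.TransGen.head' hab h)

lemma step_reach (hF : IsInForest W F) {a b c : Fin n} (hab : (a,b) ∈ F)
    (h : reach F a c) (hne : a ≠ c) : reach F b c := by
  cases h.cases_head with
  | inl h => exact absurd h hne
  | inr h =>
    obtain ⟨b', hb', hr⟩ := h
    rwa [forest_func hF hab hb']

lemma reach_total (hF : IsInForest W F) {s i j : Fin n}
    (hi : reach F s i) (hj : reach F s j) : reach F i j ∨ reach F j i := by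
  induction hi with
  | refl => exact Or.inl hj
  | tail h e ih =>
    rename_i b c
    cases ih with
    | inl hbj =>
      by_cases hbc : b = j
      · subst hbc; exact Or.inr (reach_single e)
      · exact Or.inl (step_reach hF e hbj hbc)
    | inr hjb => exact Or.inr (hjb.tail e)

lemma root_reach {j x : Fin n} (hroot : ∀ e ∈ F, e.1 ≠ j) (h : reach F j x) :
    j = x := by
  cases h.cases_head with
  | inl h => exact h
  | inr h => obtain ⟨c, hc, _⟩ := h; exact absurd rfl (hroot _ hc)

lemma roots_eq (hF : IsInForest W F) {s i j : Fin n} (hi : reach F s i)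
    (hj : reach F s j) (hri : ∀ e ∈ F, e.1 ≠ i) (hrj : ∀ e ∈ F, e.1 ≠ j) :
    i = j := by
  cases reach_total hF hi hj with
  | inl h => exact root_reach hri h
  | inr h => exact (root_reach hrj h).symm

lemma reach_erase_of_not_reach {s j i : Fin n} {u : Fin n}
    (h : reach F s j) (hi : ¬ reach F s i) : reach (F.erase (i,u)) s j := by
  induction h using Relation.ReflTransGen.head_induction_on with
  | refl => exact reach_refl _ _
  | head hac hr ih =>
    rename_i a c
    have hai : a ≠ i := fun h => hi (h ▸ reach_refl _ _)
    have hci : ¬ reach F c i := fun h => hi (Relation.ReflTransGen.head hac h)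
    exact Relation.ReflTransGen.head
      (Finset.mem_erase.mpr ⟨by simp [Prod.ext_iff, hai], hac⟩) (ih hci)

lemma insert_reach_cases {i s a b : Fin n} (hroot : ∀ e ∈ F, e.1 ≠ i)
    (hsi : ¬ reach F s i) (h : reach (insert (i,s) F) a b) :
    reach F a b ∨ (reach F a i ∧ reach F s b) := by
  induction h using Relation.ReflTransGen.head_induction_on with
  | refl => exact Or.inl (reach_refl _ _)
  | head hac hr ih =>
    rename_i a c
    rcases Finset.mem_insert.mp hac with heq | hmem
    · obtain ⟨h1, h2⟩ := Prod.ext_iff.mp heq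
      subst h1; subst h2
      cases ih with
      | inl h => exact Or.inr ⟨reach_refl _ _, h⟩
      | inr h => exact absurd h.1 hsi
    · cases ih with
      | inl h => exact Or.inl (Relation.ReflTransGen.head hmem h)
      | inr h => exact Or.inr ⟨Relation.ReflTransGen.head hmem h.1, h.2⟩

lemma insert_forest (hF : IsInForest W F) {i s : Fin n}
    (hroot : ∀ e ∈ F, e.1 ≠ i) (hne : i ≠ s) (hpos : 0 < W i s)
    (hsi : ¬ reach F s i) : IsInForest W (insert (i,s) F) := by
  classical
  refine ⟨?_, ?_, ?_⟩
  · intro e he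
    rcases Finset.mem_insert.mp he with heq | hmem
    · subst heq; exact ⟨hne, hpos⟩
    · exact hF.1 e hmem
  · intro v
    apply Finset.card_le_one.mpr
    intro a ha b hb
    simp only [Finset.mem_filter, Finset.mem_insert] at ha hb
    obtain ⟨ha1, ha2⟩ := ha
    obtain ⟨hb1, hb2⟩ := hb
    rcases ha1 with ha1 | ha1 <;> rcases hb1 with hb1 | hb1
    · rw [ha1, hb1]
    · exact absurd (hb2.trans (ha2.symm.trans (congrArg Prod.fst ha1)))
        (hroot b hb1)
    · exact absurd (ha2.trans (hb2.symm.trans (congrArg Prod.fst hb1)))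
        (hroot a ha1)
    · have hfst : a.1 = b.1 := ha2.trans hb2.symm
      have := forest_func hF (a := a.1) (b := a.2) (c := b.2)
        (by simpa using ha1) (by rw [hfst]; simpa using hb1)
      exact Prod.ext hfst this
  · intro x hx
    obtain ⟨c, hxc, hcx⟩ : ∃ c, (x,c) ∈ insert (i,s) F ∧ reach (insert (i,s) F) c x := by
      obtain ⟨c, hc, hr⟩ := Relation.TransGen.head'_iff.mp hx
      exact ⟨c, hc, hr⟩
    rcases Finset.mem_insert.mp hxc with heq | hmem
    · obtain ⟨h1, h2⟩ := Prod.ext_iff.mp heq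
      subst h1; subst h2
      cases insert_reach_cases hroot hsi hcx with
      | inl h => exact hsi h
      | inr h => exact hsi h.1
    · have hxi : x ≠ i := hroot _ hmem
      cases insert_reach_cases hroot hsi hcx with
      | inl h => exact no_cycle hF hmem h
      | inr h =>
        obtain ⟨hci, hsx⟩ := h
        exact hsi (hsx.trans (Relation.ReflTransGen.head hmem hci))

/-- the out-neighbour of `i` in `A` (junk value `i` if none) -/
noncomputable def outN (A : Finset (Fin n × Fin n)) (i : Fin n) : Fin n :=
  if h : ∃ s, (i, s) ∈ A then h.choose else i

lemma outN_mem {A : Finset (Fin n × Fin n)} {i : Fin n} (h : ∃ s, (i, s) ∈ A) :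
    (i, outN A i) ∈ A := by
  rw [outN, dif_pos h]; exact h.choose_spec

lemma outN_eq (hF : IsInForest W F) {i s : Fin n} (h : (i, s) ∈ F) :
    outN F i = s :=
  forest_func hF (outN_mem ⟨s, h⟩) h

lemma forestWeight_nonneg (hW : ∀ i j, 0 ≤ W i j) (A : Finset (Fin n × Fin n)) :
    0 ≤ forestWeight W A :=
  Finset.prod_nonneg (fun e _ => hW e.1 e.2)

lemma forestWeight_pos (hF : IsInForest W F) : 0 < forestWeight W F :=
  Finset.prod_pos (fun e he => (hF.1 e he).2)

lemma empty_forest : IsInForest W (∅ : Finset (Fin n × Fin n)) := by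
  refine ⟨by simp, by simp, fun i hi => ?_⟩
  obtain ⟨c, hc, _⟩ := Relation.TransGen.head'_iff.mp hi
  simp at hc

open scoped Classical

lemma exists_arc_of_reach_ne {F : Finset (Fin n × Fin n)} {i j : Fin n}
    (h : Relation.ReflTransGen (fun a b => (a, b) ∈ F) i j) (hij : i ≠ j) :
    ∃ s, (i, s) ∈ F := by
  cases h.cases_head with
  | inl h => exact absurd h hij
  | inr h => obtain ⟨c, hc, _⟩ := h; exact ⟨c, hc⟩

lemma not_reach_self_ne {F : Finset (Fin n × Fin n)} {s i : Fin n}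
    (h : ¬ reach F s i) : i ≠ s :=
  fun he => h (he ▸ reach_refl F s)

/-- Bijection (a): pairs `(s,F)` with `F` a `k`-forest, `s ∈ T_j(F)`, `i` a root,
`¬ s ⇝ i`, `0 < W i s`  ↔  `(k+1)`-forests `G` with `i ∈ T_j(G)`. -/
lemma bijA (hij : i ≠ j) (k : ℕ) :
    ∑ p ∈ (Finset.univ ×ˢ Finset.univ.powerset).filter
        (fun p : Fin n × Finset (Fin n × Fin n) =>
          (IsInForest W p.2 ∧ p.2.card = k ∧ InTreeRootedAt p.2 p.1 j)
          ∧ ¬ reach p.2 p.1 i ∧ (∀ e ∈ p.2, e.1 ≠ i) ∧ 0 < W i p.1),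
      W i p.1 * forestWeight W p.2
    = ∑ A ∈ Finset.univ.powerset.filter
        (fun A => IsInForest W A ∧ A.card = k + 1 ∧ InTreeRootedAt A i j),
      forestWeight W A := by
  refine Finset.sum_bij' (fun p _ => insert (i, p.1) p.2)
    (fun A _ => (outN A i, A.erase (i, outN A i))) ?_ ?_ ?_ ?_ ?_
  · rintro ⟨s, F⟩ hp
    simp only [Finset.mem_filter] at hp
    obtain ⟨-, ⟨hF, hcard, hsj, hrootj⟩, hnr, hrooti, hpos⟩ := hp
    have hmem : (i, s) ∉ F := fun h => hrooti _ h rfl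
    have hG : IsInForest W (insert (i, s) F) :=
      insert_forest hF hrooti (not_reach_self_ne hnr) hpos hnr
    refine Finset.mem_filter.mpr ⟨Finset.mem_powerset.mpr (Finset.subset_univ _), hG, ?_, ?_, ?_⟩
    · rw [Finset.card_insert_of_notMem hmem, hcard]
    · exact Relation.ReflTransGen.head (Finset.mem_insert_self _ _)
        (reach_mono (Finset.subset_insert _ _) hsj)
    · intro e he
      rcases Finset.mem_insert.mp he with rfl | he
      · exact hij
      · exact hrootj e he
  · rintro A hA
    simp only [Finset.mem_filter] at hA
    obtain ⟨-, hF, hcard, hij', hrootj⟩ := hA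
    have hex : ∃ t, (i, t) ∈ A := exists_arc_of_reach_ne hij' hij
    have hmem : (i, outN A i) ∈ A := outN_mem hex
    have hnr : ¬ reach A (outN A i) i := fun h => no_cycle hF hmem h
    have hsj : reach A (outN A i) j := step_reach hF hmem hij' hij
    refine Finset.mem_filter.mpr ⟨by
      simp only [Finset.mem_product]
      exact ⟨Finset.mem_univ _, Finset.mem_powerset.mpr (Finset.subset_univ _)⟩,
      ⟨subforest hF (Finset.erase_subset _ _), ?_, ?_, ?_⟩, ?_, ?_, ?_⟩
    · rw [Finset.card_erase_of_mem hmem, hcard]; omega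
    · exact reach_erase_of_not_reach hsj hnr
    · exact fun e he => hrootj e (Finset.mem_of_mem_erase he)
    · exact fun h => hnr (reach_mono (Finset.erase_subset _ _) h)
    · intro e he hei
      have he' := Finset.mem_of_mem_erase he
      have : e.2 = outN A i := forest_func hF (by rw [← hei]; exact he') hmem
      exact (Finset.notMem_erase _ _) (by
        have : e = (i, outN A i) := Prod.ext hei this
        rwa [this] at he)
    · exact (hF.1 _ hmem).2
  · rintro ⟨s, F⟩ hp
    simp only [Finset.mem_filter] at hp
    obtain ⟨-, ⟨hF, hcard, hsj, hrootj⟩, hnr, hrooti, hpos⟩ := hp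
    have hG : IsInForest W (insert (i, s) F) :=
      insert_forest hF hrooti (not_reach_self_ne hnr) hpos hnr
    have h1 : outN (insert (i, s) F) i = s := outN_eq hG (Finset.mem_insert_self _ _)
    have hmem : (i, s) ∉ F := fun h => hrooti _ h rfl
    simp only [h1, Finset.erase_insert hmem]
  · rintro A hA
    simp only [Finset.mem_filter] at hA
    obtain ⟨-, hF, hcard, hij', hrootj⟩ := hA
    have hex : ∃ t, (i, t) ∈ A := exists_arc_of_reach_ne hij' hij
    exact Finset.insert_erase (outN_mem hex)
  · rintro ⟨s, F⟩ hp
    simp only [Finset.mem_filter] at hp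
    obtain ⟨-, ⟨hF, hcard, hsj, hrootj⟩, hnr, hrooti, hpos⟩ := hp
    have hmem : (i, s) ∉ F := fun h => hrooti _ h rfl
    simp [forestWeight, Finset.prod_insert hmem]

/-- Bijection (b) (diagonal case): pairs `(t,F)` with `F` a `k`-forest with root `i`,
`¬ t ⇝ i`, `0 < W i t`  ↔  `(k+1)`-forests in which `i` is not a root. -/
lemma bijB (i : Fin n) (k : ℕ) :
    ∑ p ∈ (Finset.univ ×ˢ Finset.univ.powerset).filter
        (fun p : Fin n × Finset (Fin n × Fin n) =>
          (IsInForest W p.2 ∧ p.2.card = k ∧ (∀ e ∈ p.2, e.1 ≠ i))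
          ∧ ¬ reach p.2 p.1 i ∧ 0 < W i p.1),
      W i p.1 * forestWeight W p.2
    = ∑ A ∈ Finset.univ.powerset.filter
        (fun A => (IsInForest W A ∧ A.card = k + 1) ∧ ¬ (∀ e ∈ A, e.1 ≠ i)),
      forestWeight W A := by
  refine Finset.sum_bij' (fun p _ => insert (i, p.1) p.2)
    (fun A _ => (outN A i, A.erase (i, outN A i))) ?_ ?_ ?_ ?_ ?_
  · rintro ⟨s, F⟩ hp
    simp only [Finset.mem_filter] at hp
    obtain ⟨-, ⟨hF, hcard, hrooti⟩, hnr, hpos⟩ := hp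
    have hmem : (i, s) ∉ F := fun h => hrooti _ h rfl
    have hG : IsInForest W (insert (i, s) F) :=
      insert_forest hF hrooti (not_reach_self_ne hnr) hpos hnr
    refine Finset.mem_filter.mpr ⟨Finset.mem_powerset.mpr (Finset.subset_univ _),
      ⟨hG, by rw [Finset.card_insert_of_notMem hmem, hcard]⟩, ?_⟩
    exact fun h => h (i, s) (Finset.mem_insert_self _ _) rfl
  · rintro A hA
    simp only [Finset.mem_filter] at hA
    obtain ⟨-, ⟨hF, hcard⟩, hnroot⟩ := hA
    push_neg at hnroot
    obtain ⟨e, he, hei⟩ := hnroot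
    have hex : ∃ t, (i, t) ∈ A := ⟨e.2, by rwa [← hei, Prod.mk.eta]⟩
    have hmem : (i, outN A i) ∈ A := outN_mem hex
    have hnr : ¬ reach A (outN A i) i := fun h => no_cycle hF hmem h
    refine Finset.mem_filter.mpr ⟨by
      simp only [Finset.mem_product]
      exact ⟨Finset.mem_univ _, Finset.mem_powerset.mpr (Finset.subset_univ _)⟩,
      ⟨subforest hF (Finset.erase_subset _ _),
        by rw [Finset.card_erase_of_mem hmem, hcard]; omega, ?_⟩, ?_, ?_⟩
    · intro e' he' hei'
      have he'' := Finset.mem_of_mem_erase he'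
      have : e'.2 = outN A i := forest_func hF (by rw [← hei']; exact he'') hmem
      exact (Finset.notMem_erase _ _) (by
        have : e' = (i, outN A i) := Prod.ext hei' this
        rwa [this] at he')
    · exact fun h => hnr (reach_mono (Finset.erase_subset _ _) h)
    · exact (hF.1 _ hmem).2
  · rintro ⟨s, F⟩ hp
    simp only [Finset.mem_filter] at hp
    obtain ⟨-, ⟨hF, hcard, hrooti⟩, hnr, hpos⟩ := hp
    have hmem : (i, s) ∉ F := fun h => hrooti _ h rfl
    have hG : IsInForest W (insert (i, s) F) :=
      insert_forest hF hrooti (not_reach_self_ne hnr) hpos hnr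
    have h1 : outN (insert (i, s) F) i = s := outN_eq hG (Finset.mem_insert_self _ _)
    simp only [h1, Finset.erase_insert hmem]
  · rintro A hA
    simp only [Finset.mem_filter] at hA
    obtain ⟨-, ⟨hF, hcard⟩, hnroot⟩ := hA
    push_neg at hnroot
    obtain ⟨e, he, hei⟩ := hnroot
    have hex : ∃ t, (i, t) ∈ A := ⟨e.2, by rwa [← hei, Prod.mk.eta]⟩
    exact Finset.insert_erase (outN_mem hex)
  · rintro ⟨s, F⟩ hp
    simp only [Finset.mem_filter] at hp
    obtain ⟨-, ⟨hF, hcard, hrooti⟩, hnr, hpos⟩ := hp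
    have hmem : (i, s) ∉ F := fun h => hrooti _ h rfl
    simp [forestWeight, Finset.prod_insert hmem]

/-- Bijection (c1): arc-swap at `i`. -/
lemma bijC {i j : Fin n} (hij : i ≠ j) (k : ℕ) :
    ∑ p ∈ (Finset.univ ×ˢ Finset.univ.powerset).filter
        (fun p : Fin n × Finset (Fin n × Fin n) =>
          (IsInForest W p.2 ∧ p.2.card = k ∧ InTreeRootedAt p.2 p.1 j)
          ∧ ¬ reach p.2 p.1 i ∧ ¬ (∀ e ∈ p.2, e.1 ≠ i) ∧ 0 < W i p.1),
      W i p.1 * forestWeight W p.2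
    = ∑ p ∈ (Finset.univ ×ˢ Finset.univ.powerset).filter
        (fun p : Fin n × Finset (Fin n × Fin n) =>
          (IsInForest W p.2 ∧ p.2.card = k ∧ InTreeRootedAt p.2 i j)
          ∧ ¬ reach p.2 p.1 i ∧ 0 < W i p.1),
      W i p.1 * forestWeight W p.2 := by
  have hΩ : ∀ (p : Fin n × Finset (Fin n × Fin n)),
      p ∈ (Finset.univ ×ˢ Finset.univ.powerset) := by
    intro p
    simp only [Finset.mem_product]
    exact ⟨Finset.mem_univ _, Finset.mem_powerset.mpr (Finset.subset_univ _)⟩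
  refine Finset.sum_bij'
    (fun p _ => (outN p.2 i, insert (i, p.1) (p.2.erase (i, outN p.2 i))))
    (fun q _ => (outN q.2 i, insert (i, q.1) (q.2.erase (i, outN q.2 i)))) ?_ ?_ ?_ ?_ ?_
  · rintro ⟨s, F⟩ hp
    simp only [Finset.mem_filter] at hp
    obtain ⟨-, ⟨hF, hcard, hsj, hrootj⟩, hnr, hnroot, hpos⟩ := hp
    push_neg at hnroot
    obtain ⟨e, he, hei⟩ := hnroot
    have hex : ∃ t, (i, t) ∈ F := ⟨e.2, by rwa [← hei, Prod.mk.eta]⟩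
    set u := outN F i with hu
    have hmem : (i, u) ∈ F := outN_mem hex
    have hroot0 : ∀ e' ∈ F.erase (i, u), e'.1 ≠ i := by
      intro e' he' hei'
      have he'' := Finset.mem_of_mem_erase he'
      have h2 : e'.2 = u := forest_func hF (by rw [← hei']; exact he'') hmem
      have he3 : e' = (i, _) := Prod.ext hei' h2
      exact (Finset.notMem_erase _ _) (he3 ▸ he')
    have hF0 : IsInForest W (F.erase (i, u)) := subforest hF (Finset.erase_subset _ _)
    have hnr0 : ¬ reach (F.erase (i, u)) s i :=
      fun h => hnr (reach_mono (Finset.erase_subset _ _) h)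
    have hG : IsInForest W (insert (i, s) (F.erase (i, u))) :=
      insert_forest hF0 hroot0 (not_reach_self_ne hnr) hpos hnr0
    have hins : (i, s) ∉ F.erase (i, u) := by
      intro h
      have h2 : u = s := hu.trans (outN_eq hF (Finset.mem_of_mem_erase h))
      rw [h2] at h
      exact Finset.notMem_erase _ _ h
    refine Finset.mem_filter.mpr ⟨hΩ _, ⟨hG, ?_, ?_, ?_⟩, ?_, ?_⟩
    · rw [Finset.card_insert_of_notMem hins, Finset.card_erase_of_mem hmem, hcard]
      have : 0 < F.card := Finset.card_pos.mpr ⟨_, hmem⟩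
      omega
    · exact Relation.ReflTransGen.head (Finset.mem_insert_self _ _)
        (reach_mono (Finset.subset_insert _ _) (reach_erase_of_not_reach hsj hnr))
    · intro e' he'
      rcases Finset.mem_insert.mp he' with rfl | he'
      · exact hij
      · exact hrootj _ (Finset.mem_of_mem_erase he')
    · intro h
      rcases insert_reach_cases hroot0 hnr0 h with h' | h'
      · exact no_cycle hF hmem (reach_mono (Finset.erase_subset _ _) h')
      · exact hnr0 h'.2
    · exact (hF.1 _ hmem).2
  · rintro ⟨t, F'⟩ hq
    simp only [Finset.mem_filter] at hq
    obtain ⟨-, ⟨hF', hcard, hij', hrootj⟩, hnt, hpos⟩ := hq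
    have hex : ∃ s, (i, s) ∈ F' := exists_arc_of_reach_ne hij' hij
    set s := outN F' i with hs
    have hmem : (i, s) ∈ F' := outN_mem hex
    have hroot0 : ∀ e' ∈ F'.erase (i, s), e'.1 ≠ i := by
      intro e' he' hei'
      have he'' := Finset.mem_of_mem_erase he'
      have h2 : e'.2 = s := forest_func hF' (by rw [← hei']; exact he'') hmem
      have he3 : e' = (i, _) := Prod.ext hei' h2
      exact (Finset.notMem_erase _ _) (he3 ▸ he')
    have hF0 : IsInForest W (F'.erase (i, s)) := subforest hF' (Finset.erase_subset _ _)
    have hnt0 : ¬ reach (F'.erase (i, s)) t i :=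
      fun h => hnt (reach_mono (Finset.erase_subset _ _) h)
    have hG : IsInForest W (insert (i, t) (F'.erase (i, s))) :=
      insert_forest hF0 hroot0 (not_reach_self_ne hnt) hpos hnt0
    have hins : (i, t) ∉ F'.erase (i, s) := by
      intro h
      have h2 : s = t := hs.trans (outN_eq hF' (Finset.mem_of_mem_erase h))
      rw [h2] at h
      exact Finset.notMem_erase _ _ h
    have hnsr : ¬ reach F' s i := fun h => no_cycle hF' hmem h
    have hsj' : reach F' s j := step_reach hF' hmem hij' hij
    refine Finset.mem_filter.mpr ⟨hΩ _, ⟨hG, ?_, ?_, ?_⟩, ?_, ?_, ?_⟩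
    · rw [Finset.card_insert_of_notMem hins, Finset.card_erase_of_mem hmem, hcard]
      have : 0 < F'.card := Finset.card_pos.mpr ⟨_, hmem⟩
      omega
    · exact reach_mono (Finset.subset_insert _ _)
        (reach_erase_of_not_reach hsj' hnsr)
    · intro e' he'
      rcases Finset.mem_insert.mp he' with rfl | he'
      · exact hij
      · exact hrootj _ (Finset.mem_of_mem_erase he')
    · intro h
      rcases insert_reach_cases hroot0 hnt0 h with h' | h'
      · exact hnsr (reach_mono (Finset.erase_subset _ _) h')
      · exact hnsr (reach_mono (Finset.erase_subset _ _) h'.1)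
    · intro h
      exact h (i, t) (Finset.mem_insert_self _ _) rfl
    · exact (hF'.1 _ hmem).2
  · rintro ⟨s, F⟩ hp
    simp only [Finset.mem_filter] at hp
    obtain ⟨-, ⟨hF, hcard, hsj, hrootj⟩, hnr, hnroot, hpos⟩ := hp
    push_neg at hnroot
    obtain ⟨e, he, hei⟩ := hnroot
    have hex : ∃ t, (i, t) ∈ F := ⟨e.2, by rwa [← hei, Prod.mk.eta]⟩
    set u := outN F i with hu
    have hmem : (i, u) ∈ F := outN_mem hex
    have hroot0 : ∀ e' ∈ F.erase (i, u), e'.1 ≠ i := by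
      intro e' he' hei'
      have he'' := Finset.mem_of_mem_erase he'
      have h2 : e'.2 = u := forest_func hF (by rw [← hei']; exact he'') hmem
      have he3 : e' = (i, _) := Prod.ext hei' h2
      exact (Finset.notMem_erase _ _) (he3 ▸ he')
    have hF0 : IsInForest W (F.erase (i, u)) := subforest hF (Finset.erase_subset _ _)
    have hnr0 : ¬ reach (F.erase (i, u)) s i :=
      fun h => hnr (reach_mono (Finset.erase_subset _ _) h)
    have hG : IsInForest W (insert (i, s) (F.erase (i, u))) :=
      insert_forest hF0 hroot0 (not_reach_self_ne hnr) hpos hnr0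
    have hins : (i, s) ∉ F.erase (i, u) := by
      intro h
      have h2 : u = s := hu.trans (outN_eq hF (Finset.mem_of_mem_erase h))
      rw [h2] at h
      exact Finset.notMem_erase _ _ h
    have h1 : outN (insert (i, s) (F.erase (i, u))) i = s :=
      outN_eq hG (Finset.mem_insert_self _ _)
    simp only [h1, Finset.erase_insert hins, Finset.insert_erase hmem]
  · rintro ⟨t, F'⟩ hq
    simp only [Finset.mem_filter] at hq
    obtain ⟨-, ⟨hF', hcard, hij', hrootj⟩, hnt, hpos⟩ := hq
    have hex : ∃ s, (i, s) ∈ F' := exists_arc_of_reach_ne hij' hij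
    set s := outN F' i with hs
    have hmem : (i, s) ∈ F' := outN_mem hex
    have hroot0 : ∀ e' ∈ F'.erase (i, s), e'.1 ≠ i := by
      intro e' he' hei'
      have he'' := Finset.mem_of_mem_erase he'
      have h2 : e'.2 = s := forest_func hF' (by rw [← hei']; exact he'') hmem
      have he3 : e' = (i, _) := Prod.ext hei' h2
      exact (Finset.notMem_erase _ _) (he3 ▸ he')
    have hF0 : IsInForest W (F'.erase (i, s)) := subforest hF' (Finset.erase_subset _ _)
    have hnt0 : ¬ reach (F'.erase (i, s)) t i :=
      fun h => hnt (reach_mono (Finset.erase_subset _ _) h)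
    have hG : IsInForest W (insert (i, t) (F'.erase (i, s))) :=
      insert_forest hF0 hroot0 (not_reach_self_ne hnt) hpos hnt0
    have hins : (i, t) ∉ F'.erase (i, s) := by
      intro h
      have h2 : s = t := hs.trans (outN_eq hF' (Finset.mem_of_mem_erase h))
      rw [h2] at h
      exact Finset.notMem_erase _ _ h
    have h1 : outN (insert (i, t) (F'.erase (i, s))) i = t :=
      outN_eq hG (Finset.mem_insert_self _ _)
    simp only [h1, Finset.erase_insert hins, Finset.insert_erase hmem]
  · rintro ⟨s, F⟩ hp
    simp only [Finset.mem_filter] at hp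
    obtain ⟨-, ⟨hF, hcard, hsj, hrootj⟩, hnr, hnroot, hpos⟩ := hp
    push_neg at hnroot
    obtain ⟨e, he, hei⟩ := hnroot
    have hex : ∃ t, (i, t) ∈ F := ⟨e.2, by rwa [← hei, Prod.mk.eta]⟩
    set u := outN F i with hu
    have hmem : (i, u) ∈ F := outN_mem hex
    have hins : (i, s) ∉ F.erase (i, u) := by
      intro h
      have h2 : u = s := hu.trans (outN_eq hF (Finset.mem_of_mem_erase h))
      rw [h2] at h
      exact Finset.notMem_erase _ _ h
    have hw : forestWeight W F = W i u * forestWeight W (F.erase (i, u)) :=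
      (Finset.mul_prod_erase F _ hmem).symm
    have hw' : forestWeight W (insert (i, s) (F.erase (i, u)))
        = W i s * forestWeight W (F.erase (i, u)) := by
      simp [forestWeight, Finset.prod_insert hins]
    simp only [hw, hw']
    ring

lemma pair_sum (g : Fin n → ℝ) (c : Fin n → Finset (Fin n × Fin n) → Prop) :
    ∑ s : Fin n, g s * ∑ A ∈ Finset.univ.powerset.filter (fun A => c s A), forestWeight W A
    = ∑ p ∈ (Finset.univ ×ˢ Finset.univ.powerset).filter
        (fun p : Fin n × Finset (Fin n × Fin n) => c p.1 p.2),
        g p.1 * forestWeight W p.2 := by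
  simp only [Finset.mul_sum, Finset.sum_filter, Finset.sum_product, mul_ite, mul_zero]

lemma zero_piece (hW : ∀ a b, 0 ≤ W a b) (c : Fin n × Finset (Fin n × Fin n) → Prop)
    (i : Fin n) (hc : ∀ p, c p → ¬ 0 < W i p.1) :
    ∑ p ∈ (Finset.univ ×ˢ Finset.univ.powerset).filter c,
      W i p.1 * forestWeight W p.2 = 0 := by
  refine Finset.sum_eq_zero fun p hp => ?_
  have := (Finset.mem_filter.mp hp).2
  have h0 : W i p.1 = 0 := le_antisymm (not_lt.mp (hc p this)) (hW i p.1)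
  rw [h0, zero_mul]

lemma key (hW : ∀ a b, 0 ≤ W a b) (k : ℕ) (i j : Fin n) :
    forestMatrix W (k+1) i j + ∑ s : Fin n, lap W i s * forestMatrix W k s j
      = if i = j then sigmaW W (k+1) else 0 := by
  classical
  have hQdef : ∀ (m : ℕ) (a b : Fin n), forestMatrix W m a b
      = ∑ A ∈ Finset.univ.powerset.filter
          (fun A => IsInForest W A ∧ A.card = m ∧ InTreeRootedAt A a b),
        forestWeight W A := fun m a b => rfl
  have hlap : ∑ s : Fin n, lap W i s * forestMatrix W k s j
      = (∑ t : Fin n, W i t) * forestMatrix W k i j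
        - ∑ s : Fin n, W i s * forestMatrix W k s j := by
    calc ∑ s : Fin n, lap W i s * forestMatrix W k s j
        = ∑ s : Fin n, ((if i = s then ∑ t : Fin n, W i t else 0) * forestMatrix W k s j
            - W i s * forestMatrix W k s j) := by
          refine Finset.sum_congr rfl fun s _ => ?_
          rw [lap, Matrix.sub_apply, Matrix.diagonal_apply, sub_mul]
      _ = (∑ s : Fin n, (if i = s then ∑ t : Fin n, W i t else 0) * forestMatrix W k s j)
            - ∑ s : Fin n, W i s * forestMatrix W k s j := Finset.sum_sub_distrib _ _
      _ = (∑ t : Fin n, W i t) * forestMatrix W k i j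
            - ∑ s : Fin n, W i s * forestMatrix W k s j := by
          simp [ite_mul, Finset.sum_ite_eq]
  rw [hlap]
  have h3 : ∑ s : Fin n, W i s * forestMatrix W k s j
      = ∑ p ∈ (Finset.univ ×ˢ Finset.univ.powerset).filter
        (fun p : Fin n × Finset (Fin n × Fin n) =>
          IsInForest W p.2 ∧ p.2.card = k ∧ InTreeRootedAt p.2 p.1 j),
        W i p.1 * forestWeight W p.2 := by
    simp only [hQdef]
    simp only [Finset.mul_sum, Finset.sum_filter, Finset.sum_product, mul_ite, mul_zero]
  have h2 : (∑ t : Fin n, W i t) * forestMatrix W k i j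
      = ∑ p ∈ (Finset.univ ×ˢ Finset.univ.powerset).filter
        (fun p : Fin n × Finset (Fin n × Fin n) =>
          IsInForest W p.2 ∧ p.2.card = k ∧ InTreeRootedAt p.2 i j),
        W i p.1 * forestWeight W p.2 := by
    rw [Finset.sum_mul]
    simp only [hQdef]
    simp only [Finset.mul_sum, Finset.sum_filter, Finset.sum_product, mul_ite, mul_zero]
  by_cases hij : i = j
  · -- diagonal case
    subst hij
    rw [if_pos rfl, h2, h3]
    -- S3 set equals (root ∧ reach) set
    have g1 : (Finset.univ ×ˢ Finset.univ.powerset).filter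
        (fun p : Fin n × Finset (Fin n × Fin n) =>
          IsInForest W p.2 ∧ p.2.card = k ∧ InTreeRootedAt p.2 p.1 i) = (Finset.univ ×ˢ Finset.univ.powerset).filter
        (fun p : Fin n × Finset (Fin n × Fin n) =>
          (IsInForest W p.2 ∧ p.2.card = k ∧ (∀ e ∈ p.2, e.1 ≠ i)) ∧ reach p.2 p.1 i) := by
      refine Finset.filter_congr fun p _ => ?_
      constructor
      · rintro ⟨hF, hc, hre, hr⟩; exact ⟨⟨hF, hc, hr⟩, hre⟩
      · rintro ⟨⟨hF, hc, hr⟩, hre⟩; exact ⟨hF, hc, hre, hr⟩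
    -- S2 set splits
    have g2 : (Finset.univ ×ˢ Finset.univ.powerset).filter
        (fun p : Fin n × Finset (Fin n × Fin n) =>
          IsInForest W p.2 ∧ p.2.card = k ∧ InTreeRootedAt p.2 i i) = ((Finset.univ ×ˢ Finset.univ.powerset).filter
        (fun p : Fin n × Finset (Fin n × Fin n) =>
          (IsInForest W p.2 ∧ p.2.card = k ∧ (∀ e ∈ p.2, e.1 ≠ i)) ∧ reach p.2 p.1 i)) ∪ (((Finset.univ ×ˢ Finset.univ.powerset).filter
        (fun p : Fin n × Finset (Fin n × Fin n) =>
          (IsInForest W p.2 ∧ p.2.card = k ∧ (∀ e ∈ p.2, e.1 ≠ i))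
          ∧ ¬ reach p.2 p.1 i ∧ 0 < W i p.1)) ∪ ((Finset.univ ×ˢ Finset.univ.powerset).filter
        (fun p : Fin n × Finset (Fin n × Fin n) =>
          (IsInForest W p.2 ∧ p.2.card = k ∧ (∀ e ∈ p.2, e.1 ≠ i)) ∧ ¬ reach p.2 p.1 i ∧ ¬ (0 < W i p.1)))) := by
      ext p
      simp only [Finset.mem_filter, Finset.mem_union, Finset.mem_product, Finset.mem_univ, Finset.mem_powerset, Finset.subset_univ, true_and, and_true]
      constructor
      · rintro ⟨hF, hc, _, hr⟩
        by_cases hq : reach p.2 p.1 i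
        · exact Or.inl ⟨⟨hF, hc, hr⟩, hq⟩
        · by_cases hpos : 0 < W i p.1
          · exact Or.inr (Or.inl ⟨⟨hF, hc, hr⟩, hq, hpos⟩)
          · exact Or.inr (Or.inr ⟨⟨hF, hc, hr⟩, hq, hpos⟩)
      · rintro (⟨⟨hF, hc, hr⟩, -⟩ | ⟨⟨hF, hc, hr⟩, -⟩ | ⟨⟨hF, hc, hr⟩, -⟩) <;>
          exact ⟨hF, hc, Relation.ReflTransGen.refl, hr⟩
    have d1 : Disjoint ((Finset.univ ×ˢ Finset.univ.powerset).filter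
        (fun p : Fin n × Finset (Fin n × Fin n) =>
          (IsInForest W p.2 ∧ p.2.card = k ∧ (∀ e ∈ p.2, e.1 ≠ i)) ∧ reach p.2 p.1 i)) (((Finset.univ ×ˢ Finset.univ.powerset).filter
        (fun p : Fin n × Finset (Fin n × Fin n) =>
          (IsInForest W p.2 ∧ p.2.card = k ∧ (∀ e ∈ p.2, e.1 ≠ i))
          ∧ ¬ reach p.2 p.1 i ∧ 0 < W i p.1)) ∪ ((Finset.univ ×ˢ Finset.univ.powerset).filter
        (fun p : Fin n × Finset (Fin n × Fin n) =>
          (IsInForest W p.2 ∧ p.2.card = k ∧ (∀ e ∈ p.2, e.1 ≠ i)) ∧ ¬ reach p.2 p.1 i ∧ ¬ (0 < W i p.1)))) := by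
      rw [Finset.disjoint_union_right]
      constructor <;> (rw [Finset.disjoint_left]; intro p hp hp'; simp only [Finset.mem_filter, Finset.mem_union, Finset.mem_product, Finset.mem_univ, Finset.mem_powerset, Finset.subset_univ, true_and, and_true] at hp hp'; tauto)
    have d2 : Disjoint ((Finset.univ ×ˢ Finset.univ.powerset).filter
        (fun p : Fin n × Finset (Fin n × Fin n) =>
          (IsInForest W p.2 ∧ p.2.card = k ∧ (∀ e ∈ p.2, e.1 ≠ i))
          ∧ ¬ reach p.2 p.1 i ∧ 0 < W i p.1)) ((Finset.univ ×ˢ Finset.univ.powerset).filter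
        (fun p : Fin n × Finset (Fin n × Fin n) =>
          (IsInForest W p.2 ∧ p.2.card = k ∧ (∀ e ∈ p.2, e.1 ≠ i)) ∧ ¬ reach p.2 p.1 i ∧ ¬ (0 < W i p.1))) := by
      rw [Finset.disjoint_left]; intro p hp hp'; simp only [Finset.mem_filter, Finset.mem_union, Finset.mem_product, Finset.mem_univ, Finset.mem_powerset, Finset.subset_univ, true_and, and_true] at hp hp'; tauto
    have z1 : ∑ p ∈ (Finset.univ ×ˢ Finset.univ.powerset).filter
        (fun p : Fin n × Finset (Fin n × Fin n) =>
          (IsInForest W p.2 ∧ p.2.card = k ∧ (∀ e ∈ p.2, e.1 ≠ i)) ∧ ¬ reach p.2 p.1 i ∧ ¬ (0 < W i p.1)), W i p.1 * forestWeight W p.2 = 0 := by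
      refine Finset.sum_eq_zero fun p hp => ?_
      have h0 : W i p.1 = 0 :=
        le_antisymm (not_lt.mp (Finset.mem_filter.mp hp).2.2.2) (hW i p.1)
      rw [h0, zero_mul]
    -- sigma split
    have g3 : Finset.univ.powerset.filter (fun A => IsInForest W A ∧ A.card = k + 1)
        = (Finset.univ.powerset.filter
        (fun A => (IsInForest W A ∧ A.card = k + 1) ∧ (∀ e ∈ A, e.1 ≠ i))) ∪ (Finset.univ.powerset.filter
        (fun A => (IsInForest W A ∧ A.card = k + 1) ∧ ¬ (∀ e ∈ A, e.1 ≠ i))) := by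
      ext A
      simp only [Finset.mem_filter, Finset.mem_union, Finset.mem_product, Finset.mem_univ, Finset.mem_powerset, Finset.subset_univ, true_and, and_true]
      tauto
    have d3 : Disjoint (Finset.univ.powerset.filter
        (fun A => (IsInForest W A ∧ A.card = k + 1) ∧ (∀ e ∈ A, e.1 ≠ i))) (Finset.univ.powerset.filter
        (fun A => (IsInForest W A ∧ A.card = k + 1) ∧ ¬ (∀ e ∈ A, e.1 ≠ i))) := by
      rw [Finset.disjoint_left]; intro A hA hA'; simp only [Finset.mem_filter, Finset.mem_union, Finset.mem_product, Finset.mem_univ, Finset.mem_powerset, Finset.subset_univ, true_and, and_true] at hA hA'; tauto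
    have g4 : forestMatrix W (k+1) i i = ∑ A ∈ Finset.univ.powerset.filter
        (fun A => (IsInForest W A ∧ A.card = k + 1) ∧ (∀ e ∈ A, e.1 ≠ i)), forestWeight W A := by
      rw [hQdef]
      refine Finset.sum_congr (Finset.filter_congr fun A _ => ?_) fun _ _ => rfl
      constructor
      · rintro ⟨hF, hc, _, hr⟩; exact ⟨⟨hF, hc⟩, hr⟩
      · rintro ⟨⟨hF, hc⟩, hr⟩; exact ⟨hF, hc, Relation.ReflTransGen.refl, hr⟩
    have hsig : sigmaW W (k+1) = (∑ A ∈ Finset.univ.powerset.filter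
        (fun A => (IsInForest W A ∧ A.card = k + 1) ∧ (∀ e ∈ A, e.1 ≠ i)), forestWeight W A) + ∑ A ∈ Finset.univ.powerset.filter
        (fun A => (IsInForest W A ∧ A.card = k + 1) ∧ ¬ (∀ e ∈ A, e.1 ≠ i)), forestWeight W A := by
      rw [sigmaW, g3, Finset.sum_union d3]
    rw [g1, g2, Finset.sum_union d1, Finset.sum_union d2, z1, g4, hsig, bijB i k]
    ring
  · -- off-diagonal case
    rw [if_neg hij, h2, h3]
    have g1 : (Finset.univ ×ˢ Finset.univ.powerset).filter
        (fun p : Fin n × Finset (Fin n × Fin n) =>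
          IsInForest W p.2 ∧ p.2.card = k ∧ InTreeRootedAt p.2 p.1 j) = ((Finset.univ ×ˢ Finset.univ.powerset).filter
        (fun p : Fin n × Finset (Fin n × Fin n) =>
          (IsInForest W p.2 ∧ p.2.card = k ∧ InTreeRootedAt p.2 p.1 j) ∧ reach p.2 p.1 i)) ∪ (((Finset.univ ×ˢ Finset.univ.powerset).filter
        (fun p : Fin n × Finset (Fin n × Fin n) =>
          (IsInForest W p.2 ∧ p.2.card = k ∧ InTreeRootedAt p.2 p.1 j)
          ∧ ¬ reach p.2 p.1 i ∧ (∀ e ∈ p.2, e.1 ≠ i) ∧ 0 < W i p.1)) ∪ (((Finset.univ ×ˢ Finset.univ.powerset).filter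
        (fun p : Fin n × Finset (Fin n × Fin n) =>
          (IsInForest W p.2 ∧ p.2.card = k ∧ InTreeRootedAt p.2 p.1 j)
          ∧ ¬ reach p.2 p.1 i ∧ ¬ (∀ e ∈ p.2, e.1 ≠ i) ∧ 0 < W i p.1)) ∪ ((Finset.univ ×ˢ Finset.univ.powerset).filter
        (fun p : Fin n × Finset (Fin n × Fin n) =>
          (IsInForest W p.2 ∧ p.2.card = k ∧ InTreeRootedAt p.2 p.1 j) ∧ ¬ reach p.2 p.1 i ∧ ¬ (0 < W i p.1))))) := by
      ext p
      simp only [Finset.mem_filter, Finset.mem_union, Finset.mem_product, Finset.mem_univ, Finset.mem_powerset, Finset.subset_univ, true_and, and_true]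
      constructor
      · rintro ⟨hF, hc, htree⟩
        by_cases hq : reach p.2 p.1 i
        · exact Or.inl ⟨⟨hF, hc, htree⟩, hq⟩
        · by_cases hpos : 0 < W i p.1
          · by_cases hr : ∀ e ∈ p.2, e.1 ≠ i
            · exact Or.inr (Or.inl ⟨⟨hF, hc, htree⟩, hq, hr, hpos⟩)
            · exact Or.inr (Or.inr (Or.inl ⟨⟨hF, hc, htree⟩, hq, hr, hpos⟩))
          · exact Or.inr (Or.inr (Or.inr ⟨⟨hF, hc, htree⟩, hq, hpos⟩))
      · rintro (⟨h, -⟩ | ⟨h, -⟩ | ⟨h, -⟩ | ⟨h, -⟩) <;> exact h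
    have g2 : (Finset.univ ×ˢ Finset.univ.powerset).filter
        (fun p : Fin n × Finset (Fin n × Fin n) =>
          IsInForest W p.2 ∧ p.2.card = k ∧ InTreeRootedAt p.2 i j) = ((Finset.univ ×ˢ Finset.univ.powerset).filter
        (fun p : Fin n × Finset (Fin n × Fin n) =>
          (IsInForest W p.2 ∧ p.2.card = k ∧ InTreeRootedAt p.2 i j) ∧ reach p.2 p.1 i)) ∪ (((Finset.univ ×ˢ Finset.univ.powerset).filter
        (fun p : Fin n × Finset (Fin n × Fin n) =>
          (IsInForest W p.2 ∧ p.2.card = k ∧ InTreeRootedAt p.2 i j)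
          ∧ ¬ reach p.2 p.1 i ∧ 0 < W i p.1)) ∪ ((Finset.univ ×ˢ Finset.univ.powerset).filter
        (fun p : Fin n × Finset (Fin n × Fin n) =>
          (IsInForest W p.2 ∧ p.2.card = k ∧ InTreeRootedAt p.2 i j) ∧ ¬ reach p.2 p.1 i ∧ ¬ (0 < W i p.1)))) := by
      ext p
      simp only [Finset.mem_filter, Finset.mem_union, Finset.mem_product, Finset.mem_univ, Finset.mem_powerset, Finset.subset_univ, true_and, and_true]
      constructor
      · rintro ⟨hF, hc, htree⟩
        by_cases hq : reach p.2 p.1 i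
        · exact Or.inl ⟨⟨hF, hc, htree⟩, hq⟩
        · by_cases hpos : 0 < W i p.1
          · exact Or.inr (Or.inl ⟨⟨hF, hc, htree⟩, hq, hpos⟩)
          · exact Or.inr (Or.inr ⟨⟨hF, hc, htree⟩, hq, hpos⟩)
      · rintro (⟨h, -⟩ | ⟨h, -⟩ | ⟨h, -⟩) <;> exact h
    have d1 : Disjoint ((Finset.univ ×ˢ Finset.univ.powerset).filter
        (fun p : Fin n × Finset (Fin n × Fin n) =>
          (IsInForest W p.2 ∧ p.2.card = k ∧ InTreeRootedAt p.2 p.1 j) ∧ reach p.2 p.1 i)) (((Finset.univ ×ˢ Finset.univ.powerset).filter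
        (fun p : Fin n × Finset (Fin n × Fin n) =>
          (IsInForest W p.2 ∧ p.2.card = k ∧ InTreeRootedAt p.2 p.1 j)
          ∧ ¬ reach p.2 p.1 i ∧ (∀ e ∈ p.2, e.1 ≠ i) ∧ 0 < W i p.1)) ∪ (((Finset.univ ×ˢ Finset.univ.powerset).filter
        (fun p : Fin n × Finset (Fin n × Fin n) =>
          (IsInForest W p.2 ∧ p.2.card = k ∧ InTreeRootedAt p.2 p.1 j)
          ∧ ¬ reach p.2 p.1 i ∧ ¬ (∀ e ∈ p.2, e.1 ≠ i) ∧ 0 < W i p.1)) ∪ ((Finset.univ ×ˢ Finset.univ.powerset).filter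
        (fun p : Fin n × Finset (Fin n × Fin n) =>
          (IsInForest W p.2 ∧ p.2.card = k ∧ InTreeRootedAt p.2 p.1 j) ∧ ¬ reach p.2 p.1 i ∧ ¬ (0 < W i p.1))))) := by
      rw [Finset.disjoint_union_right, Finset.disjoint_union_right]
      refine ⟨?_, ?_, ?_⟩ <;> (rw [Finset.disjoint_left]; intro p hp hp'; simp only [Finset.mem_filter, Finset.mem_union, Finset.mem_product, Finset.mem_univ, Finset.mem_powerset, Finset.subset_univ, true_and, and_true] at hp hp'; tauto)
    have d2 : Disjoint ((Finset.univ ×ˢ Finset.univ.powerset).filter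
        (fun p : Fin n × Finset (Fin n × Fin n) =>
          (IsInForest W p.2 ∧ p.2.card = k ∧ InTreeRootedAt p.2 p.1 j)
          ∧ ¬ reach p.2 p.1 i ∧ (∀ e ∈ p.2, e.1 ≠ i) ∧ 0 < W i p.1)) (((Finset.univ ×ˢ Finset.univ.powerset).filter
        (fun p : Fin n × Finset (Fin n × Fin n) =>
          (IsInForest W p.2 ∧ p.2.card = k ∧ InTreeRootedAt p.2 p.1 j)
          ∧ ¬ reach p.2 p.1 i ∧ ¬ (∀ e ∈ p.2, e.1 ≠ i) ∧ 0 < W i p.1)) ∪ ((Finset.univ ×ˢ Finset.univ.powerset).filter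
        (fun p : Fin n × Finset (Fin n × Fin n) =>
          (IsInForest W p.2 ∧ p.2.card = k ∧ InTreeRootedAt p.2 p.1 j) ∧ ¬ reach p.2 p.1 i ∧ ¬ (0 < W i p.1)))) := by
      rw [Finset.disjoint_union_right]
      constructor <;> (rw [Finset.disjoint_left]; intro p hp hp'; simp only [Finset.mem_filter, Finset.mem_union, Finset.mem_product, Finset.mem_univ, Finset.mem_powerset, Finset.subset_univ, true_and, and_true] at hp hp'; tauto)
    have d3 : Disjoint ((Finset.univ ×ˢ Finset.univ.powerset).filter
        (fun p : Fin n × Finset (Fin n × Fin n) =>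
          (IsInForest W p.2 ∧ p.2.card = k ∧ InTreeRootedAt p.2 p.1 j)
          ∧ ¬ reach p.2 p.1 i ∧ ¬ (∀ e ∈ p.2, e.1 ≠ i) ∧ 0 < W i p.1)) ((Finset.univ ×ˢ Finset.univ.powerset).filter
        (fun p : Fin n × Finset (Fin n × Fin n) =>
          (IsInForest W p.2 ∧ p.2.card = k ∧ InTreeRootedAt p.2 p.1 j) ∧ ¬ reach p.2 p.1 i ∧ ¬ (0 < W i p.1))) := by
      rw [Finset.disjoint_left]; intro p hp hp'; simp only [Finset.mem_filter, Finset.mem_union, Finset.mem_product, Finset.mem_univ, Finset.mem_powerset, Finset.subset_univ, true_and, and_true] at hp hp'; tauto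
    have d1' : Disjoint ((Finset.univ ×ˢ Finset.univ.powerset).filter
        (fun p : Fin n × Finset (Fin n × Fin n) =>
          (IsInForest W p.2 ∧ p.2.card = k ∧ InTreeRootedAt p.2 i j) ∧ reach p.2 p.1 i)) (((Finset.univ ×ˢ Finset.univ.powerset).filter
        (fun p : Fin n × Finset (Fin n × Fin n) =>
          (IsInForest W p.2 ∧ p.2.card = k ∧ InTreeRootedAt p.2 i j)
          ∧ ¬ reach p.2 p.1 i ∧ 0 < W i p.1)) ∪ ((Finset.univ ×ˢ Finset.univ.powerset).filter
        (fun p : Fin n × Finset (Fin n × Fin n) =>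
          (IsInForest W p.2 ∧ p.2.card = k ∧ InTreeRootedAt p.2 i j) ∧ ¬ reach p.2 p.1 i ∧ ¬ (0 < W i p.1)))) := by
      rw [Finset.disjoint_union_right]
      constructor <;> (rw [Finset.disjoint_left]; intro p hp hp'; simp only [Finset.mem_filter, Finset.mem_union, Finset.mem_product, Finset.mem_univ, Finset.mem_powerset, Finset.subset_univ, true_and, and_true] at hp hp'; tauto)
    have d2' : Disjoint ((Finset.univ ×ˢ Finset.univ.powerset).filter
        (fun p : Fin n × Finset (Fin n × Fin n) =>
          (IsInForest W p.2 ∧ p.2.card = k ∧ InTreeRootedAt p.2 i j)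
          ∧ ¬ reach p.2 p.1 i ∧ 0 < W i p.1)) ((Finset.univ ×ˢ Finset.univ.powerset).filter
        (fun p : Fin n × Finset (Fin n × Fin n) =>
          (IsInForest W p.2 ∧ p.2.card = k ∧ InTreeRootedAt p.2 i j) ∧ ¬ reach p.2 p.1 i ∧ ¬ (0 < W i p.1))) := by
      rw [Finset.disjoint_left]; intro p hp hp'; simp only [Finset.mem_filter, Finset.mem_union, Finset.mem_product, Finset.mem_univ, Finset.mem_powerset, Finset.subset_univ, true_and, and_true] at hp hp'; tauto
    have z1 : ∑ p ∈ (Finset.univ ×ˢ Finset.univ.powerset).filter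
        (fun p : Fin n × Finset (Fin n × Fin n) =>
          (IsInForest W p.2 ∧ p.2.card = k ∧ InTreeRootedAt p.2 p.1 j) ∧ ¬ reach p.2 p.1 i ∧ ¬ (0 < W i p.1)), W i p.1 * forestWeight W p.2 = 0 := by
      refine Finset.sum_eq_zero fun p hp => ?_
      have h0 : W i p.1 = 0 :=
        le_antisymm (not_lt.mp (Finset.mem_filter.mp hp).2.2.2) (hW i p.1)
      rw [h0, zero_mul]
    have z2 : ∑ p ∈ (Finset.univ ×ˢ Finset.univ.powerset).filter
        (fun p : Fin n × Finset (Fin n × Fin n) =>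
          (IsInForest W p.2 ∧ p.2.card = k ∧ InTreeRootedAt p.2 i j) ∧ ¬ reach p.2 p.1 i ∧ ¬ (0 < W i p.1)), W i p.1 * forestWeight W p.2 = 0 := by
      refine Finset.sum_eq_zero fun p hp => ?_
      have h0 : W i p.1 = 0 :=
        le_antisymm (not_lt.mp (Finset.mem_filter.mp hp).2.2.2) (hW i p.1)
      rw [h0, zero_mul]
    have gP1 : ((Finset.univ ×ˢ Finset.univ.powerset).filter
        (fun p : Fin n × Finset (Fin n × Fin n) =>
          (IsInForest W p.2 ∧ p.2.card = k ∧ InTreeRootedAt p.2 p.1 j) ∧ reach p.2 p.1 i)) = ((Finset.univ ×ˢ Finset.univ.powerset).filter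
        (fun p : Fin n × Finset (Fin n × Fin n) =>
          (IsInForest W p.2 ∧ p.2.card = k ∧ InTreeRootedAt p.2 i j) ∧ reach p.2 p.1 i)) := by
      refine Finset.filter_congr fun p _ => ?_
      constructor
      · rintro ⟨⟨hF, hc, hre, hr⟩, hq⟩
        refine ⟨⟨hF, hc, ?_, hr⟩, hq⟩
        rcases reach_total hF hq hre with h | h
        · exact h
        · exact absurd (root_reach hr h).symm hij
      · rintro ⟨⟨hF, hc, hre, hr⟩, hq⟩
        exact ⟨⟨hF, hc, hq.trans hre, hr⟩, hq⟩
    have hbijA : ∑ p ∈ (Finset.univ ×ˢ Finset.univ.powerset).filter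
        (fun p : Fin n × Finset (Fin n × Fin n) =>
          (IsInForest W p.2 ∧ p.2.card = k ∧ InTreeRootedAt p.2 p.1 j)
          ∧ ¬ reach p.2 p.1 i ∧ (∀ e ∈ p.2, e.1 ≠ i) ∧ 0 < W i p.1), W i p.1 * forestWeight W p.2 = forestMatrix W (k+1) i j := by
      rw [hQdef]
      exact bijA hij k
    have hbijC : ∑ p ∈ (Finset.univ ×ˢ Finset.univ.powerset).filter
        (fun p : Fin n × Finset (Fin n × Fin n) =>
          (IsInForest W p.2 ∧ p.2.card = k ∧ InTreeRootedAt p.2 p.1 j)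
          ∧ ¬ reach p.2 p.1 i ∧ ¬ (∀ e ∈ p.2, e.1 ≠ i) ∧ 0 < W i p.1), W i p.1 * forestWeight W p.2 = ∑ p ∈ (Finset.univ ×ˢ Finset.univ.powerset).filter
        (fun p : Fin n × Finset (Fin n × Fin n) =>
          (IsInForest W p.2 ∧ p.2.card = k ∧ InTreeRootedAt p.2 i j)
          ∧ ¬ reach p.2 p.1 i ∧ 0 < W i p.1), W i p.1 * forestWeight W p.2 := bijC hij k
    rw [g1, g2, Finset.sum_union d1, Finset.sum_union d2, Finset.sum_union d3,
      Finset.sum_union d1', Finset.sum_union d2', z1, z2, gP1, hbijA, hbijC]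
    ring

lemma rec_matrix (hW : ∀ a b, 0 ≤ W a b) (k : ℕ) :
    forestMatrix W (k+1) + lap W * forestMatrix W k
      = sigmaW W (k+1) • (1 : Matrix (Fin n) (Fin n) ℝ) := by
  ext i j
  have := key hW k i j
  simp only [Matrix.add_apply, Matrix.mul_apply, Matrix.smul_apply, Matrix.one_apply,
    smul_eq_mul]
  rw [this]
  by_cases h : i = j <;> simp [h]

lemma rec_matrix' (hW : ∀ a b, 0 ≤ W a b) (k : ℕ) :
    forestMatrix W (k+1)
      = sigmaW W (k+1) • (1 : Matrix (Fin n) (Fin n) ℝ) - lap W * forestMatrix W k :=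
  eq_sub_of_add_eq (rec_matrix hW k)

lemma Q_zero : forestMatrix W 0 = (1 : Matrix (Fin n) (Fin n) ℝ) := by
  classical
  ext i j
  rw [show forestMatrix W 0 i j = ∑ A ∈ Finset.univ.powerset.filter
      (fun A => IsInForest W A ∧ A.card = 0 ∧ InTreeRootedAt A i j),
      forestWeight W A from rfl]
  by_cases h : i = j
  · subst h
    have hs : Finset.univ.powerset.filter
        (fun A => IsInForest W A ∧ A.card = 0 ∧ InTreeRootedAt A i i)
        = {(∅ : Finset (Fin n × Fin n))} := by
      ext A
      simp only [Finset.mem_filter, Finset.mem_powerset, Finset.subset_univ, true_and,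
        Finset.mem_singleton]
      constructor
      · rintro ⟨-, hc, -⟩; exact Finset.card_eq_zero.mp hc
      · rintro rfl
        exact ⟨empty_forest, rfl, Relation.ReflTransGen.refl, by simp⟩
    rw [hs, Finset.sum_singleton, Matrix.one_apply_eq]
    simp [forestWeight]
  · have hs : Finset.univ.powerset.filter
        (fun A => IsInForest W A ∧ A.card = 0 ∧ InTreeRootedAt A i j)
        = (∅ : Finset (Finset (Fin n × Fin n))) := by
      ext A
      simp only [Finset.mem_filter, Finset.notMem_empty, iff_false, not_and]
      rintro - - hc ⟨hre, -⟩
      rw [Finset.card_eq_zero.mp hc] at hre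
      cases hre.cases_head with
      | inl h' => exact absurd h' h
      | inr h' => obtain ⟨c, hc', -⟩ := h'; simp at hc'
    rw [hs, Finset.sum_empty, Matrix.one_apply_ne h]

lemma sigma_zero : sigmaW W 0 = 1 := by
  classical
  rw [sigmaW]
  have hs : Finset.univ.powerset.filter (fun A => IsInForest W A ∧ A.card = 0)
      = {(∅ : Finset (Fin n × Fin n))} := by
    ext A
    simp only [Finset.mem_filter, Finset.mem_powerset, Finset.subset_univ, true_and,
      Finset.mem_singleton]
    constructor
    · rintro ⟨-, hc⟩; exact Finset.card_eq_zero.mp hc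
    · rintro rfl; exact ⟨empty_forest, rfl⟩
  rw [hs, Finset.sum_singleton]
  simp [forestWeight]

lemma card_le_max_s14 (hF : IsInForest W F) : F.card ≤ maxForestCard W := by
  classical
  exact Finset.le_sup (Finset.mem_filter.mpr
    ⟨Finset.mem_powerset.mpr (Finset.subset_univ _), hF⟩)

lemma sigma_top : sigmaW W (maxForestCard W + 1) = 0 := by
  classical
  rw [sigmaW]
  refine Finset.sum_eq_zero fun A hA => ?_
  obtain ⟨-, hF, hc⟩ := Finset.mem_filter.mp hA
  exact absurd (card_le_max_s14 hF) (by omega)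

lemma Q_top : forestMatrix W (maxForestCard W + 1) = 0 := by
  classical
  ext i j
  rw [show forestMatrix W (maxForestCard W + 1) i j = ∑ A ∈ Finset.univ.powerset.filter
      (fun A => IsInForest W A ∧ A.card = maxForestCard W + 1 ∧ InTreeRootedAt A i j),
      forestWeight W A from rfl, Matrix.zero_apply]
  refine Finset.sum_eq_zero fun A hA => ?_
  obtain ⟨-, hF, hc, -⟩ := Finset.mem_filter.mp hA
  exact absurd (card_le_max_s14 hF) (by omega)

lemma lap_comm (hW : ∀ a b, 0 ≤ W a b) (k : ℕ) :
    lap W * forestMatrix W k = forestMatrix W k * lap W := by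
  induction k with
  | zero => rw [Q_zero, Matrix.mul_one, Matrix.one_mul]
  | succ k ih =>
    rw [rec_matrix' hW k, Matrix.mul_sub, Matrix.sub_mul, Matrix.mul_smul,
      Matrix.smul_mul, Matrix.mul_one, Matrix.one_mul, Matrix.mul_assoc, ih]

lemma lap_Q_top (hW : ∀ a b, 0 ≤ W a b) :
    lap W * forestMatrix W (maxForestCard W) = 0 := by
  have := rec_matrix hW (maxForestCard W)
  rw [Q_top, sigma_top, zero_add, zero_smul] at this
  exact this

lemma Q_top_lap (hW : ∀ a b, 0 ≤ W a b) :
    forestMatrix W (maxForestCard W) * lap W = 0 := by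
  rw [← lap_comm hW]
  exact lap_Q_top hW

lemma Q_mul (hW : ∀ a b, 0 ≤ W a b) (k : ℕ) :
    forestMatrix W (maxForestCard W) * forestMatrix W k
        = sigmaW W k • forestMatrix W (maxForestCard W)
      ∧ forestMatrix W k * forestMatrix W (maxForestCard W)
        = sigmaW W k • forestMatrix W (maxForestCard W) := by
  induction k with
  | zero => rw [Q_zero, Matrix.mul_one, Matrix.one_mul, sigma_zero, one_smul]
            exact ⟨rfl, rfl⟩
  | succ k ih =>
    constructor
    · rw [rec_matrix' hW k, Matrix.mul_sub, Matrix.mul_smul, Matrix.mul_one,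
        ← Matrix.mul_assoc, Q_top_lap hW, Matrix.zero_mul, sub_zero]
    · rw [rec_matrix' hW k, Matrix.sub_mul, Matrix.smul_mul, Matrix.one_mul,
        Matrix.mul_assoc, ih.2, Matrix.mul_smul, lap_Q_top hW, smul_zero, sub_zero]

lemma sigma_pos (hW : ∀ a b, 0 ≤ W a b) {k : ℕ} (hk : k ≤ maxForestCard W) :
    0 < sigmaW W k := by
  classical
  have hne : (Finset.univ.powerset.filter
      (fun A : Finset (Fin n × Fin n) => IsInForest W A)).Nonempty :=
    ⟨∅, Finset.mem_filter.mpr ⟨Finset.mem_powerset.mpr (Finset.subset_univ _), empty_forest⟩⟩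
  obtain ⟨M, hM, hMc⟩ := Finset.exists_mem_eq_sup _ hne Finset.card
  obtain ⟨-, hMF⟩ := Finset.mem_filter.mp hM
  obtain ⟨B, hBM, hBc⟩ := Finset.exists_subset_card_eq (s := M) (n := k) (by
    unfold maxForestCard at hk; rw [hMc] at hk; exact hk)
  have hBF : IsInForest W B := subforest hMF hBM
  rw [sigmaW]
  refine Finset.sum_pos' (fun A hA => ?_) ⟨B, Finset.mem_filter.mpr
    ⟨Finset.mem_powerset.mpr (Finset.subset_univ _), hBF, hBc⟩, forestWeight_pos hBF⟩
  obtain ⟨-, hAF, -⟩ := Finset.mem_filter.mp hA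
  exact le_of_lt (forestWeight_pos hAF)

theorem main (W : Matrix (Fin n) (Fin n) ℝ)
    (hW : ∀ i j, 0 ≤ W i j) :
    Jtilde W * Jtilde W = Jtilde W ∧
    ∀ k : ℕ, k ≤ maxForestCard W →
      Jtilde W * ((sigmaW W k)⁻¹ • forestMatrix W k) = Jtilde W ∧
      ((sigmaW W k)⁻¹ • forestMatrix W k) * Jtilde W = Jtilde W := by
  have hmain : ∀ k : ℕ, k ≤ maxForestCard W →
      Jtilde W * ((sigmaW W k)⁻¹ • forestMatrix W k) = Jtilde W ∧
      ((sigmaW W k)⁻¹ • forestMatrix W k) * Jtilde W = Jtilde W := by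
    intro k hk
    have hsk : sigmaW W k ≠ 0 := ne_of_gt (sigma_pos hW hk)
    obtain ⟨hQ1, hQ2⟩ := Q_mul hW (W := W) k
    constructor
    · rw [Jtilde, Matrix.smul_mul, Matrix.mul_smul, hQ1, smul_smul, smul_smul]
      congr 1
      field_simp
    · rw [Jtilde, Matrix.mul_smul, Matrix.smul_mul, hQ2, smul_smul, smul_smul]
      congr 1
      field_simp
  refine ⟨?_, hmain⟩
  have := (hmain (maxForestCard W) le_rfl).1
  rwa [show ((sigmaW W (maxForestCard W))⁻¹ • forestMatrix W (maxForestCard W))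
    = Jtilde W from rfl] at this

end ForestAux

/-- `J̃` is idempotent and `J̃ J_k = J_k J̃ = J̃` for every `k = 0, …, n − d`. -/
theorem Jtilde_idempotent {n : ℕ} (W : Matrix (Fin n) (Fin n) ℝ)
    (hn : 1 < n) (hW : ∀ i j, 0 ≤ W i j) (hdiag : ∀ i, W i i = 0) :
    Jtilde W * Jtilde W = Jtilde W ∧
    ∀ k : ℕ, k ≤ maxForestCard W →
      Jtilde W * ((sigmaW W k)⁻¹ • forestMatrix W k) = Jtilde W ∧
      ((sigmaW W k)⁻¹ • forestMatrix W k) * Jtilde W = Jtilde W := by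
  obtain ⟨h1, h2⟩ := ForestAux.main W hW
  exact ⟨h1, h2⟩
end
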